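/- arXiv:0712.1078 — 8 statements merged into one kernel-verified Lean document; each statement's English description precedes it below -/
import Mathlib

section
/- Let A be a k-algebra with elements E, F, K satisfying EF − FE = η(K^{−m} − K^m), KE = θEK, KF = θ^{−1}FK with K invertible and q = θ^m. Then for every s ≥ 1: F E^s − E^s F = η (s)_q E^{s−1}(K^m − q^{−(s−1)} K^{−m}). -/
lemma aux_pow_left {k : Type*} [Field k] {A : Type*} [Ring A] [Algebra k A]
    (c : k) (w E : A) (h : w * E = c • (E * w)) :
    ∀ j : ℕ, w ^ j * E = c ^ j • (E * w ^ j) := by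
  intro j
  induction j with
  | zero => simp
  | succ j ih =>
    rw [pow_succ, pow_succ, mul_assoc]
    calc w ^ j * (w * E) = w ^ j * (c • (E * w)) := by rw [h]
      _ = c • (w ^ j * E * w) := by rw [mul_smul_comm, mul_assoc]
      _ = c • ((c ^ j • (E * w ^ j)) * w) := by rw [ih]
      _ = (c ^ j * c) • (E * (w ^ j * w)) := by
            rw [smul_mul_assoc, smul_smul, mul_comm c, mul_assoc]

lemma aux_pow_right {k : Type*} [Field k] {A : Type*} [Ring A] [Algebra k A]
    (c : k) (w E : A) (h : w * E = c • (E * w)) :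
    ∀ s : ℕ, w * E ^ s = c ^ s • (E ^ s * w) := by
  intro s
  induction s with
  | zero => simp
  | succ s ih =>
    calc w * E ^ (s+1) = (w * E ^ s) * E := by rw [pow_succ, mul_assoc]
      _ = (c ^ s • (E ^ s * w)) * E := by rw [ih]
      _ = c ^ s • (E ^ s * (w * E)) := by rw [smul_mul_assoc, mul_assoc]
      _ = c ^ s • (E ^ s * (c • (E * w))) := by rw [h]
      _ = c ^ (s+1) • (E ^ (s+1) * w) := by
            rw [mul_smul_comm, smul_smul, pow_succ, pow_succ, mul_assoc,
              ← mul_assoc (E ^ s)]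

/-- Quantum `sl₂`-type commutation: if `EF − FE = η(K^{−m} − K^m)`, `KE = θEK`,
`KF = θ⁻¹FK` with `K` invertible and `q = θ^m`, then for all `s ≥ 1`:
`F E^s − E^s F = η (s)_q E^{s−1}(K^m − q^{−(s−1)} K^{−m})`. -/
theorem FE_power_commutator (k : Type*) [Field k] (A : Type*) [Ring A] [Algebra k A]
    (n m : ℕ) (hn : 0 < n) (hm : 0 < m)
    (θ : kˣ) (hθ : orderOf θ = n * m) (η : k) (hη : η ≠ 0)
    (E F : A) (u : Aˣ)
    (hEF : E * F - F * E = η • (((u⁻¹ ^ m : Aˣ) : A) - ((u ^ m : Aˣ) : A)))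
    (hKE : (u : A) * E = ((θ : kˣ) : k) • (E * (u : A)))
    (hKF : (u : A) * F = ((θ⁻¹ : kˣ) : k) • (F * (u : A))) :
    ∀ s : ℕ, 1 ≤ s →
      F * E ^ s - E ^ s * F
        = (η * ∑ i ∈ Finset.range s, (((θ ^ m : kˣ) : k)) ^ i) •
            (E ^ (s - 1) *
              (((u ^ m : Aˣ) : A)
                - ((((θ ^ m)⁻¹ : kˣ) : k)) ^ (s - 1) • ((u⁻¹ ^ m : Aˣ) : A))) := by
  set Q : k := ((θ ^ m : kˣ) : k) with hQ
  set Q' : k := (((θ ^ m)⁻¹ : kˣ) : k) with hQ'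
  set W : A := ((u ^ m : Aˣ) : A) with hW
  set W' : A := ((u⁻¹ ^ m : Aˣ) : A) with hW'
  have hQQ' : Q * Q' = 1 := by
    rw [hQ, hQ', ← Units.val_mul, mul_inv_cancel]; rfl
  -- commutation of u⁻¹ with E
  have hEinv : ((u⁻¹ : Aˣ) : A) * E = ((θ⁻¹ : kˣ) : k) • (E * ((u⁻¹ : Aˣ) : A)) := by
    have h2 : E * ((u⁻¹ : Aˣ) : A) = ((θ : kˣ) : k) • (((u⁻¹ : Aˣ) : A) * E) := by
      calc E * ((u⁻¹ : Aˣ) : A)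
          = ((u⁻¹ : Aˣ) : A) * (((u : Aˣ) : A) * E) * ((u⁻¹ : Aˣ) : A) := by
            rw [← mul_assoc, Units.inv_mul, one_mul]
        _ = ((θ : kˣ) : k) • (((u⁻¹ : Aˣ) : A) * E) := by
            rw [hKE, mul_smul_comm, smul_mul_assoc, mul_assoc, mul_assoc E,
              Units.mul_inv, mul_one]
    rw [h2, smul_smul, ← Units.val_mul, inv_mul_cancel, Units.val_one, one_smul]
  have hUm : W * E = Q • (E * W) := by
    have h := aux_pow_left ((θ : kˣ) : k) ((u : Aˣ) : A) E hKE m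
    simp only [← Units.val_pow_eq_pow_val] at h
    exact h
  have hUm' : W' * E = Q' • (E * W') := by
    have h := aux_pow_left ((θ⁻¹ : kˣ) : k) ((u⁻¹ : Aˣ) : A) E hEinv m
    have hc : (((θ⁻¹ : kˣ) : k)) ^ m = Q' := by
      rw [hQ', Units.val_inv_eq_inv_val, Units.val_inv_eq_inv_val,
        Units.val_pow_eq_pow_val, inv_pow]
    simp only [← Units.val_pow_eq_pow_val] at hc h
    rw [hc] at h
    exact h
  have hUmE : ∀ s : ℕ, W * E ^ s = Q ^ s • (E ^ s * W) := aux_pow_right Q W E hUm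
  have hUm'E : ∀ s : ℕ, W' * E ^ s = Q' ^ s • (E ^ s * W') := aux_pow_right Q' W' E hUm'
  have h1 : F * E - E * F = η • (W - W') := by
    have : F * E - E * F = -(E * F - F * E) := by rw [neg_sub]
    rw [this, hEF, ← smul_neg, neg_sub]
  intro s hs
  induction s, hs using Nat.le_induction with
  | base =>
    simpa using h1
  | succ s hs ih =>
    obtain ⟨r, rfl⟩ : ∃ r, s = r + 1 := ⟨s - 1, (Nat.succ_pred_eq_of_pos hs).symm⟩
    simp only [Nat.add_sub_cancel] at ih ⊢
    have hdecomp : F * (E * E ^ (r + 1)) - (E * E ^ (r + 1)) * F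
        = (F * E - E * F) * E ^ (r + 1) + E * (F * E ^ (r + 1) - E ^ (r + 1) * F) := by
      noncomm_ring
    rw [pow_succ' E (r + 1), hdecomp, h1, ih]
    simp only [smul_mul_assoc, mul_smul_comm, sub_mul, mul_sub, hUmE, hUm'E,
      smul_sub, ← mul_assoc, ← pow_succ']
    have hS1 : (∑ i ∈ Finset.range (r + 1 + 1), Q ^ i)
        = (∑ i ∈ Finset.range (r + 1), Q ^ i) + Q ^ (r + 1) :=
      Finset.sum_range_succ _ _
    have hS2 : (∑ i ∈ Finset.range (r + 1 + 1), Q ^ i)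
        = Q * (∑ i ∈ Finset.range (r + 1), Q ^ i) + 1 := geom_sum_succ
    match_scalars
    · linear_combination (-η) * hS1
    · linear_combination (η * Q' ^ (r + 1)) * hS2
        + (η * (∑ i ∈ Finset.range (r + 1), Q ^ i) * Q' ^ r) * hQQ'
end

section
/- In a linked lifting H of a quantum plane with group-likes G, generators x, y and datum elements a, b ∈ G, q = χ₂(a), γ ∈ kˣ, the element C = a^{−1}xy − (γ/(q−1))(a^{−1} + q b) is central in H, and equals y a^{−1}x − (γ/(q−1))(b + q a^{−1}). -/
/-- In a linked lifting `H` of a quantum plane, the Casimir element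
`C = a⁻¹xy − (γ/(q−1))(a⁻¹ + qb)` is central and equals
`y a⁻¹x − (γ/(q−1))(b + q a⁻¹)`. -/
theorem linked_lifting_casimir (k : Type*) [Field k] [IsAlgClosed k] [CharZero k]
    (G : Type*) [CommGroup G] [Fintype G]
    (H : Type*) [Ring H] [Algebra k H]
    (ι : G →* Hˣ) (x y : H) (χ : G →* kˣ) (a b : G)
    (q : k) (hq : q = (((χ a)⁻¹ : kˣ) : k)) (hab : χ a = χ b)
    (n : ℕ) (hn : n = orderOf (χ a)) (hn1 : 1 < n)
    (γ ε₁ ε₂ : k) (hγ : γ ≠ 0) (hab1 : a * b ≠ 1)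
    (hε₁ : ε₁ = 0 ∨ ε₁ = 1) (hε₂ : ε₂ = 0 ∨ ε₂ = 1)
    (hgx : ∀ g : G, ((ι g : Hˣ) : H) * x = ((χ g : kˣ) : k) • (x * ((ι g : Hˣ) : H)))
    (hgy : ∀ g : G, ((ι g : Hˣ) : H) * y = (((χ g)⁻¹ : kˣ) : k) • (y * ((ι g : Hˣ) : H)))
    (hxy : x * y - q • (y * x) = γ • (((ι (a * b) : Hˣ) : H) - 1))
    (hxn : x ^ n = ε₁ • (((ι (a ^ n) : Hˣ) : H) - 1))
    (hyn : y ^ n = ε₂ • (((ι (b ^ n) : Hˣ) : H) - 1)) :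
    (∀ g : G,
        ((((ι a)⁻¹ : Hˣ) : H) * x * y
            - (γ / (q - 1)) • ((((ι a)⁻¹ : Hˣ) : H) + q • ((ι b : Hˣ) : H)))
          * ((ι g : Hˣ) : H)
        = ((ι g : Hˣ) : H) *
          ((((ι a)⁻¹ : Hˣ) : H) * x * y
            - (γ / (q - 1)) • ((((ι a)⁻¹ : Hˣ) : H) + q • ((ι b : Hˣ) : H)))) ∧
    ((((ι a)⁻¹ : Hˣ) : H) * x * y
        - (γ / (q - 1)) • ((((ι a)⁻¹ : Hˣ) : H) + q • ((ι b : Hˣ) : H))) * x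
      = x * ((((ι a)⁻¹ : Hˣ) : H) * x * y
        - (γ / (q - 1)) • ((((ι a)⁻¹ : Hˣ) : H) + q • ((ι b : Hˣ) : H))) ∧
    ((((ι a)⁻¹ : Hˣ) : H) * x * y
        - (γ / (q - 1)) • ((((ι a)⁻¹ : Hˣ) : H) + q • ((ι b : Hˣ) : H))) * y
      = y * ((((ι a)⁻¹ : Hˣ) : H) * x * y
        - (γ / (q - 1)) • ((((ι a)⁻¹ : Hˣ) : H) + q • ((ι b : Hˣ) : H))) ∧
    (((ι a)⁻¹ : Hˣ) : H) * x * y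
        - (γ / (q - 1)) • ((((ι a)⁻¹ : Hˣ) : H) + q • ((ι b : Hˣ) : H))
      = y * ((((ι a)⁻¹ : Hˣ) : H) * x)
        - (γ / (q - 1)) • (((ι b : Hˣ) : H) + q • (((ι a)⁻¹ : Hˣ) : H)) := by
  have hq0 : q ≠ 0 := by rw [hq]; exact Units.ne_zero _
  have hχa : ((χ a : kˣ) : k) = q⁻¹ := by rw [hq, Units.val_inv_eq_inv_val, inv_inv]
  have hq1 : q - 1 ≠ 0 := by
    intro h
    have hq' : q = 1 := sub_eq_zero.mp h
    have h1 : ((χ a : kˣ) : k) = 1 := by rw [hχa, hq', inv_one]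
    have h2 : χ a = 1 := Units.ext h1
    rw [hn, h2, orderOf_one] at hn1; omega
  -- abbreviations
  -- plain relations (group elements pushed to the left)
  have rxA0 : x * ((ι a : Hˣ) : H) = q • (((ι a : Hˣ) : H) * x) := by
    rw [hgx a, hχa, smul_smul, mul_inv_cancel₀ hq0, one_smul]
  have rAix0 : (((ι a)⁻¹ : Hˣ) : H) * x = q • (x * (((ι a)⁻¹ : Hˣ) : H)) := by
    have h := hgx a⁻¹
    rw [map_inv χ, map_inv ι, ← hq] at h
    exact h
  have rxAi0 : x * (((ι a)⁻¹ : Hˣ) : H) = q⁻¹ • ((((ι a)⁻¹ : Hˣ) : H) * x) := by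
    rw [rAix0, smul_smul, inv_mul_cancel₀ hq0, one_smul]
  have rxB0 : x * ((ι b : Hˣ) : H) = q • (((ι b : Hˣ) : H) * x) := by
    rw [hgx b, ← hab, hχa, smul_smul, mul_inv_cancel₀ hq0, one_smul]
  have ryA0 : y * ((ι a : Hˣ) : H) = q⁻¹ • (((ι a : Hˣ) : H) * y) := by
    rw [hgy a, ← hq, smul_smul, inv_mul_cancel₀ hq0, one_smul]
  have ryAi0 : y * (((ι a)⁻¹ : Hˣ) : H) = q • ((((ι a)⁻¹ : Hˣ) : H) * y) := by
    have h := hgy a⁻¹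
    rw [map_inv χ, inv_inv, map_inv ι, hχa] at h
    rw [h, smul_smul, mul_inv_cancel₀ hq0, one_smul]
  have ryB0 : y * ((ι b : Hˣ) : H) = q⁻¹ • (((ι b : Hˣ) : H) * y) := by
    rw [hgy b, ← hab, ← hq, smul_smul, inv_mul_cancel₀ hq0, one_smul]
  have hAiA0 : (((ι a)⁻¹ : Hˣ) : H) * ((ι a : Hˣ) : H) = 1 := (ι a).inv_mul
  have rxy0 : x * y = q • (y * x) + γ • (((ι a : Hˣ) : H) * ((ι b : Hˣ) : H)) - γ • (1 : H) := by
    have h := hxy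
    rw [sub_eq_iff_eq_add] at h
    rw [h, map_mul, Units.val_mul, smul_sub]
    abel
  -- primed versions (for right-associated words)
  have rxA : ∀ t : H, x * (((ι a : Hˣ) : H) * t) = q • (((ι a : Hˣ) : H) * (x * t)) := fun t => by
    rw [← mul_assoc, rxA0, smul_mul_assoc, mul_assoc]
  have rxAi : ∀ t : H, x * ((((ι a)⁻¹ : Hˣ) : H) * t)
      = q⁻¹ • ((((ι a)⁻¹ : Hˣ) : H) * (x * t)) := fun t => by
    rw [← mul_assoc, rxAi0, smul_mul_assoc, mul_assoc]
  have rxB : ∀ t : H, x * (((ι b : Hˣ) : H) * t) = q • (((ι b : Hˣ) : H) * (x * t)) := fun t => by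
    rw [← mul_assoc, rxB0, smul_mul_assoc, mul_assoc]
  have ryA : ∀ t : H, y * (((ι a : Hˣ) : H) * t) = q⁻¹ • (((ι a : Hˣ) : H) * (y * t)) := fun t => by
    rw [← mul_assoc, ryA0, smul_mul_assoc, mul_assoc]
  have ryAi : ∀ t : H, y * ((((ι a)⁻¹ : Hˣ) : H) * t)
      = q • ((((ι a)⁻¹ : Hˣ) : H) * (y * t)) := fun t => by
    rw [← mul_assoc, ryAi0, smul_mul_assoc, mul_assoc]
  have ryB : ∀ t : H, y * (((ι b : Hˣ) : H) * t) = q⁻¹ • (((ι b : Hˣ) : H) * (y * t)) := fun t => by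
    rw [← mul_assoc, ryB0, smul_mul_assoc, mul_assoc]
  have hAiA : ∀ t : H, (((ι a)⁻¹ : Hˣ) : H) * (((ι a : Hˣ) : H) * t) = t := fun t => by
    rw [← mul_assoc, hAiA0, one_mul]
  have rxy : ∀ t : H, x * (y * t)
      = q • (y * (x * t)) + γ • (((ι a : Hˣ) : H) * (((ι b : Hˣ) : H) * t)) - γ • t := fun t => by
    rw [← mul_assoc, rxy0, sub_mul, add_mul, smul_mul_assoc, smul_mul_assoc, smul_mul_assoc,
      mul_assoc, mul_assoc, one_mul]
  refine ⟨?_, ?_, ?_, ?_⟩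
  · -- commutes with group-likes
    intro g
    have hAig : (((ι a)⁻¹ : Hˣ) : H) * ((ι g : Hˣ) : H)
        = ((ι g : Hˣ) : H) * (((ι a)⁻¹ : Hˣ) : H) := by
      rw [← map_inv ι, ← Units.val_mul, ← Units.val_mul, ← map_mul, ← map_mul, mul_comm]
    have hBg : ((ι b : Hˣ) : H) * ((ι g : Hˣ) : H) = ((ι g : Hˣ) : H) * ((ι b : Hˣ) : H) := by
      rw [← Units.val_mul, ← Units.val_mul, ← map_mul, ← map_mul, mul_comm]
    have hAig' : ∀ t : H, (((ι a)⁻¹ : Hˣ) : H) * (((ι g : Hˣ) : H) * t)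
        = ((ι g : Hˣ) : H) * ((((ι a)⁻¹ : Hˣ) : H) * t) := fun t => by
      rw [← mul_assoc, hAig, mul_assoc]
    have hyg : y * ((ι g : Hˣ) : H) = ((χ g : kˣ) : k) • (((ι g : Hˣ) : H) * y) := by
      rw [hgy g, smul_smul, Units.mul_inv, one_smul]
    have hxg : x * ((ι g : Hˣ) : H) = (((χ g)⁻¹ : kˣ) : k) • (((ι g : Hˣ) : H) * x) := by
      rw [hgx g, smul_smul, Units.inv_mul, one_smul]
    have hxg' : ∀ t : H, x * (((ι g : Hˣ) : H) * t)
        = (((χ g)⁻¹ : kˣ) : k) • (((ι g : Hˣ) : H) * (x * t)) := fun t => by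
      rw [← mul_assoc, hxg, smul_mul_assoc, mul_assoc]
    simp only [sub_mul, mul_sub, add_mul, mul_add, smul_mul_assoc, mul_smul_comm, mul_assoc,
      hyg, hxg', hAig, hAig', hBg, smul_smul, Units.mul_inv, Units.inv_mul, one_smul]
  · -- commutes with x
    simp only [sub_mul, mul_sub, add_mul, mul_add, smul_mul_assoc, mul_smul_comm, mul_assoc,
      rxy0, rxy, rxA0, rxA, rxAi0, rxAi, rxB0, rxB, hAiA0, hAiA, smul_sub, smul_add,
      smul_smul, mul_one, one_mul, sub_mul, add_mul]
    match_scalars <;> field_simp <;> ring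
  · -- commutes with y
    simp only [sub_mul, mul_sub, add_mul, mul_add, smul_mul_assoc, mul_smul_comm, mul_assoc,
      rxy0, rxy, ryA0, ryA, ryAi0, ryAi, ryB0, ryB, hAiA0, hAiA, smul_sub, smul_add,
      smul_smul, mul_one, one_mul, sub_mul, add_mul]
    match_scalars <;> field_simp <;> ring
  · -- the alternative expression
    simp only [mul_assoc, rxy0, ryAi0, ryAi, hAiA0, hAiA, mul_add, mul_sub, mul_smul_comm,
      smul_mul_assoc, smul_sub, smul_add, smul_smul, mul_one, one_mul]
    match_scalars <;> field_simp <;> ring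
end

section
/- Every linked lifting H of a two-dimensional quantum linear space is unimodular: the element I = e x^{n−1} y^{n−1}, where e = |G|^{−1} ∑_{g∈G} g, satisfies h·I = ε(h) I = I·h for all h ∈ H, i.e. I is a two-sided integral. -/
section aux
variable {k : Type*} [Field k] {H : Type*} [Ring H] [Algebra k H]

lemma aux_pow_comm (x c : H) (r : k) (h : x * c = r • (c * x)) :
    ∀ m : ℕ, x ^ m * c = r ^ m • (c * x ^ m) := by
  intro m
  induction m with
  | zero => simp
  | succ m ih =>
    calc x ^ (m+1) * c = x ^ m * (x * c) := by rw [pow_succ, mul_assoc]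
    _ = r • (x ^ m * c * x) := by rw [h, mul_smul_comm, mul_assoc]
    _ = r • ((r ^ m • (c * x ^ m)) * x) := by rw [ih]
    _ = r ^ (m+1) • (c * x ^ (m+1)) := by
        rw [smul_mul_assoc, smul_smul, mul_assoc, ← pow_succ, ← pow_succ']

lemma aux_comm (x y c : H) (p l1 m1 : k) (L M : ℕ → k)
    (hyx : y * x = p • (x * y) + l1 • c + m1 • (1 : H))
    (hcx : c * x = (p * p) • (x * c))
    (hL1 : L 1 = l1) (hM1 : M 1 = m1)
    (hL : ∀ m : ℕ, L (m + 2) = (p * p) * L (m + 1) + p ^ (m + 1) * l1)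
    (hM : ∀ m : ℕ, M (m + 2) = M (m + 1) + p ^ (m + 1) * m1) :
    ∀ m : ℕ, y * x ^ (m + 1)
      = p ^ (m + 1) • (x ^ (m + 1) * y) + x ^ m * (L (m + 1) • c + M (m + 1) • (1 : H)) := by
  intro m
  induction m with
  | zero =>
    rw [pow_one, pow_one, pow_zero, one_mul, hL1, hM1, hyx]; module
  | succ m ih =>
    have step : y * x ^ (m + 2) = (y * x ^ (m + 1)) * x := by rw [pow_succ, ← mul_assoc]
    rw [step, ih, hL m, hM m, add_mul, smul_mul_assoc, mul_assoc (x^(m+1)) y x, hyx,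
      mul_assoc (x^m) _ x]
    simp only [add_mul, smul_mul_assoc, one_mul]
    rw [hcx]
    simp only [pow_succ, mul_add, add_mul, mul_one, one_mul, smul_mul_assoc, mul_smul_comm,
      smul_add, smul_smul, mul_assoc]
    module

variable {G : Type*} [CommGroup G] [Fintype G]

lemma aux_E_mul (u : G → H) (hmul : ∀ g₁ g₂ : G, u (g₁ * g₂) = u g₁ * u g₂)
    (w : G → k) (s : G) :
    (∑ g : G, w g • u g) * u s = ∑ g : G, w (g * s⁻¹) • u g := by
  rw [Finset.sum_mul]
  simp only [smul_mul_assoc, ← hmul]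
  exact Fintype.sum_equiv (Equiv.mulRight s) _ _ (fun g => by simp)

lemma aux_mul_E (u : G → H) (hmul : ∀ g₁ g₂ : G, u (g₁ * g₂) = u g₁ * u g₂)
    (w : G → k) (s : G) :
    u s * (∑ g : G, w g • u g) = ∑ g : G, w (s⁻¹ * g) • u g := by
  rw [Finset.mul_sum]
  simp only [mul_smul_comm, ← hmul]
  exact Fintype.sum_equiv (Equiv.mulLeft s) _ _ (fun g => by simp)

omit [CommGroup G] in
lemma aux_skew (u : G → H) (x : H) (v : G → k)
    (hx : ∀ g : G, x * u g = v g • (u g * x)) (w : G → k) :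
    x * (∑ g : G, w g • u g) = (∑ g : G, (w g * v g) • u g) * x := by
  rw [Finset.mul_sum, Finset.sum_mul]
  refine Finset.sum_congr rfl fun g _ => ?_
  rw [mul_smul_comm, hx, smul_smul, smul_mul_assoc]

end aux

section scal
variable {k : Type*} [Field k] (q γ : k)

/-- coefficient sequences for the commutation formulas -/
noncomputable def auxL (m : ℕ) : k := -(γ * (q⁻¹)^(2*m) * ∑ i ∈ Finset.range m, q^(i+1))
noncomputable def auxM (m : ℕ) : k := γ * ∑ i ∈ Finset.range m, (q⁻¹)^(i+1)
noncomputable def auxA (m : ℕ) : k := γ * q^(2*m) * ∑ i ∈ Finset.range m, (q⁻¹)^(i+2)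
noncomputable def auxB (m : ℕ) : k := -(γ * ∑ i ∈ Finset.range m, q^i)

variable (hq0 : q ≠ 0)
include hq0

lemma auxL_one : auxL q γ 1 = -(q⁻¹*γ) := by
  simp only [auxL, Finset.sum_range_one, pow_one, mul_one]
  field_simp
  ring

lemma auxM_one : auxM q γ 1 = q⁻¹*γ := by
  simp only [auxM, Finset.sum_range_one, pow_one]; ring

lemma auxA_one : auxA q γ 1 = γ := by
  simp only [auxA, Finset.sum_range_one, mul_one]
  simp only [inv_pow]; field_simp

lemma auxB_one : auxB q γ 1 = -γ := by
  simp only [auxB, Finset.sum_range_one, pow_zero, mul_one]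

lemma auxL_rec (m : ℕ) :
    auxL q γ (m+2) = (q⁻¹*q⁻¹) * auxL q γ (m+1) + (q⁻¹)^(m+1) * (-(q⁻¹*γ)) := by
  simp only [auxL, Finset.sum_range_succ]
  simp only [inv_pow]; field_simp
  ring

lemma auxM_rec (m : ℕ) :
    auxM q γ (m+2) = auxM q γ (m+1) + (q⁻¹)^(m+1) * (q⁻¹*γ) := by
  simp only [auxM, Finset.sum_range_succ]
  simp only [inv_pow]; field_simp
  ring

lemma auxA_rec (m : ℕ) :
    auxA q γ (m+2) = (q*q) * auxA q γ (m+1) + q^(m+1) * γ := by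
  simp only [auxA, Finset.sum_range_succ]
  simp only [inv_pow]; field_simp
  ring

lemma auxB_rec (m : ℕ) :
    auxB q γ (m+2) = auxB q γ (m+1) + q^(m+1) * (-γ) := by
  simp only [auxB, Finset.sum_range_succ]
  ring

-- (q⁻¹)^j = q^(n-j) for j ≤ n when q^n = 1
lemma aux_inv_pow {n j : ℕ} (hqn : q^n = 1) (hj : j ≤ n) : (q⁻¹)^j = q^(n-j) := by
  have h1 : q^(n-j) * q^j = 1 := by rw [← pow_add, Nat.sub_add_cancel hj, hqn]
  rw [inv_pow]
  exact (eq_inv_of_mul_eq_one_left h1).symm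

lemma auxS1 {m : ℕ} (hqn : q^(m+2) = 1) :
    auxL q γ (m+1) * (q*q)^(m+1) + auxM q γ (m+1) = 0 := by
  have key : ∑ i ∈ Finset.range (m+1), (q⁻¹)^(i+1) = ∑ i ∈ Finset.range (m+1), q^(i+1) := by
    rw [← Finset.sum_range_reflect (fun i => q^(i+1)) (m+1)]
    refine Finset.sum_congr rfl fun i hi => ?_
    rw [Finset.mem_range] at hi
    rw [aux_inv_pow q hq0 hqn (by omega)]
    congr 1
    omega
  have hpow : (q⁻¹)^(2*(m+1)) * (q*q)^(m+1) = 1 := by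
    simp only [inv_pow]; field_simp
    ring
  simp only [auxL, auxM, key]
  calc -(γ * (q⁻¹)^(2*(m+1)) * ∑ i ∈ Finset.range (m+1), q^(i+1)) * (q*q)^(m+1)
        + γ * ∑ i ∈ Finset.range (m+1), q^(i+1)
      = -(γ * ((q⁻¹)^(2*(m+1)) * (q*q)^(m+1)) * ∑ i ∈ Finset.range (m+1), q^(i+1))
        + γ * ∑ i ∈ Finset.range (m+1), q^(i+1) := by ring
    _ = 0 := by rw [hpow]; ring

lemma auxS2 {m : ℕ} (hqn : q^(m+2) = 1) :
    auxA q γ (m+1) * (q*q) + auxB q γ (m+1) = 0 := by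
  have key : ∑ i ∈ Finset.range (m+1), (q⁻¹)^(i+2) = ∑ i ∈ Finset.range (m+1), q^i := by
    rw [← Finset.sum_range_reflect (fun i => q^i) (m+1)]
    refine Finset.sum_congr rfl fun i hi => ?_
    rw [Finset.mem_range] at hi
    rw [aux_inv_pow q hq0 hqn (by omega)]
    congr 1
    omega
  have hpow : q^(2*(m+1)) * (q*q) = 1 := by
    have : q^(2*(m+1)) * (q*q) = (q^(m+2))^2 := by ring
    rw [this, hqn, one_pow]
  simp only [auxA, auxB, key]
  calc γ * q^(2*(m+1)) * (∑ i ∈ Finset.range (m+1), q^i) * (q*q)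
        + -(γ * ∑ i ∈ Finset.range (m+1), q^i)
      = γ * (q^(2*(m+1)) * (q*q)) * (∑ i ∈ Finset.range (m+1), q^i)
        + -(γ * ∑ i ∈ Finset.range (m+1), q^i) := by ring
    _ = 0 := by rw [hpow]; ring

end scal

set_option maxHeartbeats 1000000 in
/-- Every linked lifting `H` of a quantum plane is unimodular:
`I = e x^{n−1} y^{n−1}`, with `e = |G|⁻¹ ∑_{g∈G} g`, is a two-sided integral, i.e.
`h·I = ε(h)·I = I·h` for all `h ∈ H`, where `ε` is the counit. -/
theorem linked_lifting_unimodular (k : Type*) [Field k] [IsAlgClosed k] [CharZero k]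
    (G : Type*) [CommGroup G] [Fintype G]
    (H : Type*) [Ring H] [Algebra k H]
    (ι : G →* Hˣ) (x y : H) (χ : G →* kˣ) (a b : G)
    (q : k) (hq : q = (((χ a)⁻¹ : kˣ) : k)) (hab : χ a = χ b)
    (n : ℕ) (hn : n = orderOf (χ a)) (hn1 : 1 < n)
    (γ ε₁ ε₂ : k) (hγ : γ ≠ 0) (hab1 : a * b ≠ 1)
    (hε₁ : ε₁ = 0 ∨ ε₁ = 1) (hε₂ : ε₂ = 0 ∨ ε₂ = 1)
    (hχ₁ : ε₁ = 1 → χ ^ n = 1) (hχ₂ : ε₂ = 1 → χ ^ n = 1)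
    (hgx : ∀ g : G, ((ι g : Hˣ) : H) * x = ((χ g : kˣ) : k) • (x * ((ι g : Hˣ) : H)))
    (hgy : ∀ g : G, ((ι g : Hˣ) : H) * y = (((χ g)⁻¹ : kˣ) : k) • (y * ((ι g : Hˣ) : H)))
    (hxy : x * y - q • (y * x) = γ • (((ι (a * b) : Hˣ) : H) - 1))
    (hxn : x ^ n = ε₁ • (((ι (a ^ n) : Hˣ) : H) - 1))
    (hyn : y ^ n = ε₂ • (((ι (b ^ n) : Hˣ) : H) - 1))
    (hgen : Algebra.adjoin k
      ({x, y} ∪ Set.range fun g : G => ((ι g : Hˣ) : H)) = ⊤)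
    (εH : H →ₐ[k] k) (hεx : εH x = 0) (hεy : εH y = 0)
    (hεg : ∀ g : G, εH ((ι g : Hˣ) : H) = 1) :
    ∀ h : H,
      h * (((Fintype.card G : k)⁻¹ • ∑ g : G, ((ι g : Hˣ) : H)) * x ^ (n - 1) * y ^ (n - 1))
        = εH h •
          (((Fintype.card G : k)⁻¹ • ∑ g : G, ((ι g : Hˣ) : H)) * x ^ (n - 1) * y ^ (n - 1)) ∧
      (((Fintype.card G : k)⁻¹ • ∑ g : G, ((ι g : Hˣ) : H)) * x ^ (n - 1) * y ^ (n - 1)) * h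
        = εH h •
          (((Fintype.card G : k)⁻¹ • ∑ g : G, ((ι g : Hˣ) : H)) * x ^ (n - 1) * y ^ (n - 1)) := by
  -- basic scalar facts
  have hq0 : q ≠ 0 := by rw [hq]; exact Units.ne_zero _
  have hχn : (χ a) ^ n = 1 := by rw [hn]; exact pow_orderOf_eq_one _
  have hqn : q ^ n = 1 := by
    rw [hq, ← Units.val_pow_eq_pow_val, inv_pow, hχn, inv_one, Units.val_one]
  -- replace n by m + 2
  obtain ⟨m, rfl⟩ : ∃ m, n = m + 2 := ⟨n - 2, by omega⟩
  -- abbreviations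
  set u : G → H := fun g => ((ι g : Hˣ) : H) with hudef
  have hu' : ∀ g : G, ((ι g : Hˣ) : H) = u g := fun _ => rfl
  set W : G → k := fun g => ((χ g : kˣ) : k) with hWdef
  have hW' : ∀ g : G, ((χ g : kˣ) : k) = W g := fun _ => rfl
  simp only [hu', hW'] at hxy hxn hyn hgx hgy hεg
  -- facts about W
  have hW0 : ∀ g : G, W g ≠ 0 := fun g => Units.ne_zero _
  have hWmul : ∀ g₁ g₂ : G, W (g₁ * g₂) = W g₁ * W g₂ := fun g₁ g₂ => by
    simp only [← hW']; simp [map_mul]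
  have hWinv : ∀ g : G, W g⁻¹ = (W g)⁻¹ := fun g => by
    simp only [← hW']; simp [map_inv, Units.val_inv_eq_inv_val]
  have hWa : W a = q⁻¹ := by
    simp only [← hW']; rw [hq, Units.val_inv_eq_inv_val, inv_inv]
  have hWb : W b = q⁻¹ := by
    simp only [← hW']; rw [← hab, hq, Units.val_inv_eq_inv_val, inv_inv]
  have hWcancel : ∀ g : G, W g⁻¹ * W g = 1 := fun g => by
    rw [hWinv, inv_mul_cancel₀ (hW0 g)]
  have hWcancel' : ∀ g : G, W g * W g⁻¹ = 1 := fun g => by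
    rw [hWinv, mul_inv_cancel₀ (hW0 g)]
  have hWab : W (a*b) = q⁻¹ * q⁻¹ := by rw [hWmul, hWa, hWb]
  have hWabi : W ((a*b)⁻¹) = q * q := by
    rw [hWinv, hWab, mul_inv, inv_inv]
  have hWan : W (a^(m+2)) = 1 := by
    simp only [← hW']; rw [map_pow, Units.val_pow_eq_pow_val]
    simp only [hW']; rw [hWa, inv_pow, hqn, inv_one]
  have hWbn : W (b^(m+2)) = 1 := by
    simp only [← hW']; rw [map_pow, Units.val_pow_eq_pow_val]
    simp only [hW']; rw [hWb, inv_pow, hqn, inv_one]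
  have hWbni : W ((b^(m+2))⁻¹) = 1 := by rw [hWinv, hWbn, inv_one]
  -- facts about u
  have humul : ∀ g₁ g₂ : G, u (g₁ * g₂) = u g₁ * u g₂ := fun g₁ g₂ => by
    simp only [← hu']; simp [map_mul]
  have hxu : ∀ g : G, x * u g = W g⁻¹ • (u g * x) := fun g => by
    rw [hgx g, smul_smul, hWcancel, one_smul]
  have hgy' : ∀ g : G, u g * y = (W g)⁻¹ • (y * u g) := fun g => by
    rw [hgy g, Units.val_inv_eq_inv_val, hW']
  have hyu : ∀ g : G, y * u g = W g • (u g * y) := fun g => by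
    rw [hgy' g, smul_smul, mul_inv_cancel₀ (hW0 g), one_smul]
  -- commutation with the grouplike c = u (a*b)
  have hcx : u (a*b) * x = (q⁻¹*q⁻¹) • (x * u (a*b)) := by rw [hgx, hWab]
  have hxc : x * u (a*b) = (q*q) • (u (a*b) * x) := by rw [hxu, hWabi]
  have hcy : u (a*b) * y = (q*q) • (y * u (a*b)) := by
    rw [hgy', hWab, mul_inv, inv_inv]
  have hyc : y * u (a*b) = (q⁻¹*q⁻¹) • (u (a*b) * y) := by rw [hyu, hWab]
  -- power commutation
  have hxmc : ∀ j : ℕ, x^j * u (a*b) = (q*q)^j • (u (a*b) * x^j) :=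
    aux_pow_comm x (u (a*b)) (q*q) hxc
  have hymc : ∀ j : ℕ, y^j * u (a*b) = (q⁻¹*q⁻¹)^j • (u (a*b) * y^j) :=
    aux_pow_comm y (u (a*b)) (q⁻¹*q⁻¹) hyc
  have hxg : ∀ (g : G) (j : ℕ), x^j * u g = (W g⁻¹)^j • (u g * x^j) :=
    fun g => aux_pow_comm x (u g) (W g⁻¹) (hxu g)
  have hyg : ∀ (g : G) (j : ℕ), y^j * u g = (W g)^j • (u g * y^j) :=
    fun g => aux_pow_comm y (u g) (W g) (hyu g)
  have hxbn : x^(m+1) * u (b^(m+2)) = u (b^(m+2)) * x^(m+1) := by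
    rw [hxg (b^(m+2)) (m+1), hWbni, one_pow, one_smul]
  -- the basic commutation relations in solved form
  have h1 : q • (y * x) = x * y - γ • (u (a*b) - 1) := by
    rw [← hxy]; module
  have hyx' : y * x = q⁻¹ • (x * y) + (-(q⁻¹*γ)) • u (a*b) + (q⁻¹*γ) • (1:H) := by
    have h2 : y * x = q⁻¹ • (q • (y * x)) := by
      rw [smul_smul, inv_mul_cancel₀ hq0, one_smul]
    rw [h2, h1]; module
  have hxy' : x * y = q • (y * x) + γ • u (a*b) + (-γ) • (1:H) := by
    rw [h1]; module
  -- main commutation formulas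
  have hYX := aux_comm x y (u (a*b)) q⁻¹ (-(q⁻¹*γ)) (q⁻¹*γ) (auxL q γ) (auxM q γ)
    hyx' hcx (auxL_one q γ hq0) (auxM_one q γ hq0)
    (fun j => auxL_rec q γ hq0 j) (fun j => auxM_rec q γ hq0 j)
  have hXY := aux_comm y x (u (a*b)) q γ (-γ) (auxA q γ) (auxB q γ)
    hxy' hcy (auxA_one q γ hq0) (auxB_one q γ hq0)
    (fun j => auxA_rec q γ hq0 j) (fun j => auxB_rec q γ hq0 j)
  -- the averaging elements
  set e1 : H := ∑ g : G, (Fintype.card G : k)⁻¹ • u g with he1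
  set A1 : H := ∑ g : G, ((Fintype.card G : k)⁻¹ * W g⁻¹) • u g with hA1
  set A2 : H := ∑ g : G, ((Fintype.card G : k)⁻¹ * W g) • u g with hA2
  -- structural facts about the averaging elements
  have F1 : ∀ s : G, u s * e1 = e1 := fun s => by
    rw [he1]
    simpa using aux_mul_E u humul (fun _ => (Fintype.card G : k)⁻¹) s
  have F2 : ∀ s : G, e1 * u s = e1 := fun s => by
    rw [he1]
    simpa using aux_E_mul u humul (fun _ => (Fintype.card G : k)⁻¹) s
  have F3 : x * e1 = A1 * x := by
    rw [he1, hA1]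
    simpa using aux_skew u x (fun g => W g⁻¹) hxu (fun _ => (Fintype.card G : k)⁻¹)
  have F4 : y * e1 = A2 * y := by
    rw [he1, hA2]
    simpa using aux_skew u y (fun g => W g) hyu (fun _ => (Fintype.card G : k)⁻¹)
  have F5 : A1 * u (a^(m+2)) = A1 := by
    rw [hA1]
    have h3 := aux_E_mul u humul (fun g => (Fintype.card G : k)⁻¹ * W g⁻¹) (a^(m+2))
    rw [h3]
    refine Finset.sum_congr rfl fun g _ => ?_
    congr 1
    rw [show (g * (a^(m+2))⁻¹)⁻¹ = a^(m+2) * g⁻¹ by rw [mul_inv, inv_inv, mul_comm],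
      hWmul, hWan, one_mul]
  have F6 : A2 * u (b^(m+2)) = A2 := by
    rw [hA2]
    have h3 := aux_E_mul u humul (fun g => (Fintype.card G : k)⁻¹ * W g) (b^(m+2))
    rw [h3]
    refine Finset.sum_congr rfl fun g _ => ?_
    congr 1
    rw [hWmul, hWinv (b^(m+2)), hWbn, inv_one, mul_one]
  have F10 : A2 * u (a*b) = (q*q) • A2 := by
    rw [hA2]
    have h3 := aux_E_mul u humul (fun g => (Fintype.card G : k)⁻¹ * W g) (a*b)
    rw [h3, Finset.smul_sum]
    refine Finset.sum_congr rfl fun g _ => ?_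
    rw [hWmul, hWabi, smul_smul]
    congr 1
    ring
  -- kill lemmas
  have K1 : ∀ s : G, e1 * (u s - 1) = 0 := fun s => by
    rw [mul_sub, mul_one, F2 s, sub_self]
  have K5 : A1 * (u (a^(m+2)) - 1) = 0 := by rw [mul_sub, mul_one, F5, sub_self]
  have K6 : A2 * (u (b^(m+2)) - 1) = 0 := by rw [mul_sub, mul_one, F6, sub_self]
  -- scalar cancellations
  have hqn' : q^(m+2) = 1 := hqn
  have hsc1 : auxL q γ (m+1) * (q*q)^m * (q*q) + auxM q γ (m+1) = 0 := by
    have h4 := auxS1 q γ hq0 hqn'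
    calc auxL q γ (m+1) * (q*q)^m * (q*q) + auxM q γ (m+1)
        = auxL q γ (m+1) * (q*q)^(m+1) + auxM q γ (m+1) := by ring
      _ = 0 := h4
  have hsc2 : auxA q γ (m+1) * (q⁻¹*q⁻¹)^m * (q*q)^(m+1) + auxB q γ (m+1) = 0 := by
    have hpow : (q⁻¹*q⁻¹)^m * (q*q)^(m+1) = q*q := by
      simp only [← mul_inv, inv_pow]; field_simp
      ring
    calc auxA q γ (m+1) * (q⁻¹*q⁻¹)^m * (q*q)^(m+1) + auxB q γ (m+1)
        = auxA q γ (m+1) * ((q⁻¹*q⁻¹)^m * (q*q)^(m+1)) + auxB q γ (m+1) := by ring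
      _ = auxA q γ (m+1) * (q*q) + auxB q γ (m+1) := by rw [hpow]
      _ = 0 := auxS2 q γ hq0 hqn'
  -- the four vanishing products
  have TermE : e1 * x^(m+2) * y^(m+1) = 0 := by
    rw [hxn, mul_smul_comm, K1 (a^(m+2)), smul_zero, zero_mul]
  have TermEy : e1 * x^(m+1) * y^(m+2) = 0 := by
    calc e1 * x^(m+1) * y^(m+2)
        = e1 * x^(m+1) * (ε₂ • (u (b^(m+2)) - 1)) := by rw [hyn]
      _ = ε₂ • (e1 * (x^(m+1) * (u (b^(m+2)) - 1))) := by
          rw [mul_smul_comm, mul_assoc]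
      _ = ε₂ • (e1 * ((u (b^(m+2)) - 1) * x^(m+1))) := by
          rw [mul_sub, sub_mul, hxbn, one_mul, mul_one]
      _ = ε₂ • ((e1 * (u (b^(m+2)) - 1)) * x^(m+1)) := by rw [mul_assoc]
      _ = 0 := by rw [K1 (b^(m+2)), zero_mul, smul_zero]
  have TermA : A2 * x^(m+1) * y^(m+2) = 0 := by
    calc A2 * x^(m+1) * y^(m+2)
        = A2 * x^(m+1) * (ε₂ • (u (b^(m+2)) - 1)) := by rw [hyn]
      _ = ε₂ • (A2 * (x^(m+1) * (u (b^(m+2)) - 1))) := by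
          rw [mul_smul_comm, mul_assoc]
      _ = ε₂ • (A2 * ((u (b^(m+2)) - 1) * x^(m+1))) := by
          rw [mul_sub, sub_mul, hxbn, one_mul, mul_one]
      _ = ε₂ • ((A2 * (u (b^(m+2)) - 1)) * x^(m+1)) := by rw [mul_assoc]
      _ = 0 := by rw [K6, zero_mul, smul_zero]
  have TermB : A2 * (x^m * (auxL q γ (m+1) • u (a*b) + auxM q γ (m+1) • (1:H))) = 0 := by
    calc A2 * (x^m * (auxL q γ (m+1) • u (a*b) + auxM q γ (m+1) • (1:H)))
        = A2 * (auxL q γ (m+1) • (x^m * u (a*b)) + auxM q γ (m+1) • x^m) := by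
          simp only [mul_add, mul_smul_comm, mul_one]
      _ = A2 * (auxL q γ (m+1) • ((q*q)^m • (u (a*b) * x^m)) + auxM q γ (m+1) • x^m) := by
          rw [hxmc m]
      _ = (auxL q γ (m+1) * (q*q)^m) • (A2 * u (a*b) * x^m)
            + auxM q γ (m+1) • (A2 * x^m) := by
          simp only [mul_add, mul_smul_comm, smul_smul, mul_assoc]
      _ = (auxL q γ (m+1) * (q*q)^m) • ((q*q) • (A2 * x^m))
            + auxM q γ (m+1) • (A2 * x^m) := by
          rw [F10, smul_mul_assoc]
      _ = (auxL q γ (m+1) * (q*q)^m * (q*q) + auxM q γ (m+1)) • (A2 * x^m) := by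
          rw [smul_smul, ← add_smul, mul_assoc]
      _ = 0 := by rw [hsc1, zero_smul]
  have TermB' : e1 * x^(m+1) * (y^m * (auxA q γ (m+1) • u (a*b) + auxB q γ (m+1) • (1:H))) = 0 := by
    have hmid : e1 * x^(m+1) * (u (a*b) * y^m) = (q*q)^(m+1) • (e1 * x^(m+1) * y^m) := by
      calc e1 * x^(m+1) * (u (a*b) * y^m)
          = (e1 * (x^(m+1) * u (a*b))) * y^m := by simp only [mul_assoc]
        _ = (q*q)^(m+1) • ((e1 * u (a*b)) * x^(m+1) * y^m) := by
            rw [hxmc (m+1)]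
            simp only [mul_smul_comm, smul_mul_assoc, mul_assoc]
        _ = (q*q)^(m+1) • (e1 * x^(m+1) * y^m) := by rw [F2 (a*b)]
    calc e1 * x^(m+1) * (y^m * (auxA q γ (m+1) • u (a*b) + auxB q γ (m+1) • (1:H)))
        = e1 * x^(m+1) * (auxA q γ (m+1) • (y^m * u (a*b)) + auxB q γ (m+1) • y^m) := by
          simp only [mul_add, mul_smul_comm, mul_one]
      _ = e1 * x^(m+1) * (auxA q γ (m+1) • ((q⁻¹*q⁻¹)^m • (u (a*b) * y^m))
            + auxB q γ (m+1) • y^m) := by rw [hymc m]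
      _ = (auxA q γ (m+1) * (q⁻¹*q⁻¹)^m) • (e1 * x^(m+1) * (u (a*b) * y^m))
            + auxB q γ (m+1) • (e1 * x^(m+1) * y^m) := by
          simp only [mul_add, mul_smul_comm, smul_smul, mul_assoc]
      _ = (auxA q γ (m+1) * (q⁻¹*q⁻¹)^m) • ((q*q)^(m+1) • (e1 * x^(m+1) * y^m))
            + auxB q γ (m+1) • (e1 * x^(m+1) * y^m) := by rw [hmid]
      _ = (auxA q γ (m+1) * (q⁻¹*q⁻¹)^m * (q*q)^(m+1) + auxB q γ (m+1))
            • (e1 * x^(m+1) * y^m) := by rw [smul_smul, ← add_smul, mul_assoc]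
      _ = 0 := by rw [hsc2, zero_smul]
  -- the four main computations
  have hXleft : x * (e1 * x^(m+1) * y^(m+1)) = 0 := by
    calc x * (e1 * x^(m+1) * y^(m+1))
        = (x * e1) * x^(m+1) * y^(m+1) := by simp only [mul_assoc]
      _ = (A1 * x) * x^(m+1) * y^(m+1) := by rw [F3]
      _ = A1 * x^(m+2) * y^(m+1) := by rw [mul_assoc A1 x, ← pow_succ']
      _ = ε₁ • ((A1 * (u (a^(m+2)) - 1)) * y^(m+1)) := by
          rw [hxn, mul_smul_comm, smul_mul_assoc]
      _ = 0 := by rw [K5, zero_mul, smul_zero]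
  have hYleft : y * (e1 * x^(m+1) * y^(m+1)) = 0 := by
    calc y * (e1 * x^(m+1) * y^(m+1))
        = (y * e1) * (x^(m+1) * y^(m+1)) := by simp only [mul_assoc]
      _ = (A2 * y) * (x^(m+1) * y^(m+1)) := by rw [F4]
      _ = A2 * (y * x^(m+1)) * y^(m+1) := by simp only [mul_assoc]
      _ = A2 * ((q⁻¹)^(m+1) • (x^(m+1) * y)
            + x^m * (auxL q γ (m+1) • u (a*b) + auxM q γ (m+1) • (1:H))) * y^(m+1) := by
          rw [hYX m]
      _ = (q⁻¹)^(m+1) • (A2 * x^(m+1) * y^(m+2))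
            + (A2 * (x^m * (auxL q γ (m+1) • u (a*b) + auxM q γ (m+1) • (1:H)))) * y^(m+1) := by
          rw [pow_succ' y (m+1)]
          simp only [mul_add, add_mul, mul_smul_comm, smul_mul_assoc, mul_assoc]
      _ = 0 := by rw [TermA, TermB, smul_zero, zero_mul, add_zero]
  have hXright : (e1 * x^(m+1) * y^(m+1)) * x = 0 := by
    have hy1x : y^(m+1) * x = (q⁻¹)^(m+1) • (x * y^(m+1))
        - (q⁻¹)^(m+1) • (y^m * (auxA q γ (m+1) • u (a*b) + auxB q γ (m+1) • (1:H))) := by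
      have h5 := hXY m
      have h6 : q^(m+1) • (y^(m+1) * x) = x * y^(m+1)
          - y^m * (auxA q γ (m+1) • u (a*b) + auxB q γ (m+1) • (1:H)) := by
        rw [h5]; abel
      have h7 : y^(m+1) * x = (q⁻¹)^(m+1) • (q^(m+1) • (y^(m+1) * x)) := by
        rw [smul_smul, ← mul_pow, inv_mul_cancel₀ hq0, one_pow, one_smul]
      rw [h7, h6, smul_sub]
    have hassoc : e1 * x^(m+1) * (x * y^(m+1)) = e1 * x^(m+2) * y^(m+1) := by
      rw [show x^(m+2) = x^(m+1) * x from pow_succ x (m+1)]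
      simp only [mul_assoc]
    calc (e1 * x^(m+1) * y^(m+1)) * x
        = e1 * x^(m+1) * (y^(m+1) * x) := by rw [mul_assoc]
      _ = (q⁻¹)^(m+1) • (e1 * x^(m+1) * (x * y^(m+1)))
          - (q⁻¹)^(m+1) • (e1 * x^(m+1)
              * (y^m * (auxA q γ (m+1) • u (a*b) + auxB q γ (m+1) • (1:H)))) := by
          rw [hy1x, mul_sub, mul_smul_comm, mul_smul_comm]
      _ = 0 := by rw [hassoc, TermE, TermB']; simp
  have hYright : (e1 * x^(m+1) * y^(m+1)) * y = 0 := by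
    calc (e1 * x^(m+1) * y^(m+1)) * y
        = e1 * x^(m+1) * y^(m+2) := by rw [mul_assoc, ← pow_succ]
      _ = 0 := TermEy
  have hGleft : ∀ s : G, u s * (e1 * x^(m+1) * y^(m+1)) = e1 * x^(m+1) * y^(m+1) := by
    intro s
    calc u s * (e1 * x^(m+1) * y^(m+1))
        = (u s * e1) * x^(m+1) * y^(m+1) := by simp only [mul_assoc]
      _ = e1 * x^(m+1) * y^(m+1) := by rw [F1]
  have hGright : ∀ s : G, (e1 * x^(m+1) * y^(m+1)) * u s = e1 * x^(m+1) * y^(m+1) := by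
    intro s
    calc (e1 * x^(m+1) * y^(m+1)) * u s
        = e1 * x^(m+1) * (y^(m+1) * u s) := by rw [mul_assoc]
      _ = (W s)^(m+1) • (e1 * (x^(m+1) * u s) * y^(m+1)) := by
          rw [hyg s (m+1)]
          simp only [mul_smul_comm, mul_assoc]
      _ = (W s)^(m+1) • ((W s⁻¹)^(m+1) • ((e1 * u s) * x^(m+1) * y^(m+1))) := by
          rw [hxg s (m+1)]
          simp only [mul_smul_comm, smul_mul_assoc, mul_assoc]
      _ = ((W s * W s⁻¹)^(m+1)) • (e1 * x^(m+1) * y^(m+1)) := by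
          rw [F2 s, smul_smul, ← mul_pow]
      _ = e1 * x^(m+1) * y^(m+1) := by
          rw [hWcancel' s, one_pow, one_smul]
  -- the subalgebra of elements acting correctly on the integral
  set I : H := e1 * x^(m+1) * y^(m+1) with hI
  have hSmem : ∀ z : H, z * I = εH z • I ∧ I * z = εH z • I := by
    set S : Subalgebra k H :=
      { carrier := {z : H | z * I = εH z • I ∧ I * z = εH z • I}
        mul_mem' := by
          rintro z1 z2 ⟨h1l, h1r⟩ ⟨h2l, h2r⟩
          constructor
          · rw [map_mul, mul_assoc, h2l, mul_smul_comm, h1l, smul_smul,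
              mul_comm (εH z2) (εH z1)]
          · rw [map_mul, ← mul_assoc, h1r, smul_mul_assoc, h2r, smul_smul]
        one_mem' := by
          constructor <;> simp
        add_mem' := by
          rintro z1 z2 ⟨h1l, h1r⟩ ⟨h2l, h2r⟩
          constructor
          · rw [add_mul, h1l, h2l, map_add, add_smul]
          · rw [mul_add, h1r, h2r, map_add, add_smul]
        zero_mem' := by
          constructor <;> simp
        algebraMap_mem' := by
          intro r
          have hε : εH (algebraMap k H r) = r := by simp
          constructor
          · rw [hε]; exact (Algebra.smul_def r I).symm
          · rw [hε, Algebra.smul_def]; exact (Algebra.commutes r I).symm }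
    intro z
    have hle : (⊤ : Subalgebra k H) ≤ S := by
      rw [← hgen]
      apply Algebra.adjoin_le
      rintro w hw
      simp only [Set.mem_union, Set.mem_insert_iff, Set.mem_singleton_iff,
        Set.mem_range] at hw
      rcases hw with (rfl | rfl) | ⟨g₀, rfl⟩
      · exact ⟨by rw [hεx, zero_smul, hXleft], by rw [hεx, zero_smul, hXright]⟩
      · exact ⟨by rw [hεy, zero_smul, hYleft], by rw [hεy, zero_smul, hYright]⟩
      · exact ⟨by rw [hεg g₀, one_smul]; exact hGleft g₀,
          by rw [hεg g₀, one_smul]; exact hGright g₀⟩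
    exact hle (by trivial : z ∈ (⊤ : Subalgebra k H))
  -- conclude
  intro h
  have hfin := hSmem h
  have hIeq : ((Fintype.card G : k)⁻¹ • ∑ g : G, ((ι g : Hˣ) : H)) * x^(m+2-1) * y^(m+2-1)
      = I := by
    rw [hI, he1, Finset.smul_sum]
    rfl
  rw [hIeq]
  exact hfin
end

section
/- In a linked lifting H of a quantum plane, the square of the antipode is inner: S²(h) = a^{−1} h a for all h ∈ H, where a ∈ G is the group-like in the lifting datum. (Combined with unimodularity, H is a symmetric algebra.) -/
/-- In a linked lifting `H` of a quantum plane, the square of the antipode is inner: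
`S²(h) = a⁻¹ h a` for all `h ∈ H`. -/
theorem antipode_squared_inner (k : Type*) [Field k] [IsAlgClosed k] [CharZero k]
    (G : Type*) [CommGroup G] [Fintype G]
    (H : Type*) [Ring H] [Algebra k H]
    (ι : G →* Hˣ) (x y : H) (χ : G →* kˣ) (a b : G)
    (q : k) (hq : q = (((χ a)⁻¹ : kˣ) : k)) (hab : χ a = χ b)
    (γ : k) (hγ : γ ≠ 0)
    (hgx : ∀ g : G, ((ι g : Hˣ) : H) * x = ((χ g : kˣ) : k) • (x * ((ι g : Hˣ) : H)))
    (hgy : ∀ g : G, ((ι g : Hˣ) : H) * y = (((χ g)⁻¹ : kˣ) : k) • (y * ((ι g : Hˣ) : H)))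
    (hxy : x * y - q • (y * x) = γ • (((ι (a * b) : Hˣ) : H) - 1))
    (hgen : Algebra.adjoin k
      ({x, y} ∪ Set.range fun g : G => ((ι g : Hˣ) : H)) = ⊤)
    (S : H → H)
    (hSadd : ∀ h h' : H, S (h + h') = S h + S h')
    (hSsmul : ∀ (c : k) (h : H), S (c • h) = c • S h)
    (hSmul : ∀ h h' : H, S (h * h') = S h' * S h)
    (hSx : S x = -((((ι a)⁻¹ : Hˣ) : H) * x))
    (hSy : S y = -((((ι b)⁻¹ : Hˣ) : H) * y))
    (hSg : ∀ g : G, S ((ι g : Hˣ) : H) = ((ι g⁻¹ : Hˣ) : H)) :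
    ∀ h : H, S (S h) = (((ι a)⁻¹ : Hˣ) : H) * h * ((ι a : Hˣ) : H) := by
  intro h
  have hι : ∀ g : G, ((ι g⁻¹ : Hˣ) : H) = (((ι g)⁻¹ : Hˣ) : H) := by
    intro g; rw [map_inv]
  have hS1 : S 1 = 1 := by
    have := hSg 1
    simpa using this
  have hS0 : S 0 = 0 := by
    have h0 := hSadd 0 0
    rw [add_zero] at h0
    exact (left_eq_add.mp h0)
  have hSneg : ∀ z : H, S (-z) = -S z := by
    intro z
    have h1 := hSadd z (-z)
    rw [add_neg_cancel, hS0] at h1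
    exact (neg_eq_of_add_eq_zero_right h1.symm).symm
  -- conjugation of y by any group element
  have hconj : ∀ g : G, (((ι g)⁻¹ : Hˣ) : H) * y * ((ι g : Hˣ) : H)
      = ((χ g : kˣ) : k) • y := by
    intro g
    have h1 : y * ((ι g : Hˣ) : H) = ((χ g : kˣ) : k) • (((ι g : Hˣ) : H) * y) := by
      rw [hgy g, smul_smul]
      simp
    calc (((ι g)⁻¹ : Hˣ) : H) * y * ((ι g : Hˣ) : H)
        = (((ι g)⁻¹ : Hˣ) : H) * (y * ((ι g : Hˣ) : H)) := by rw [mul_assoc]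
      _ = ((χ g : kˣ) : k) • ((((ι g)⁻¹ : Hˣ) : H) * (((ι g : Hˣ) : H) * y)) := by
          rw [h1, mul_smul_comm]
      _ = ((χ g : kˣ) : k) • y := by
          rw [← mul_assoc, Units.inv_mul, one_mul]
  have hmem : h ∈ Algebra.adjoin k
      (({x, y} ∪ Set.range fun g : G => ((ι g : Hˣ) : H)) : Set H) := by
    rw [hgen]; exact Algebra.mem_top
  induction hmem using Algebra.adjoin_induction with
  | mem z hz =>
    rcases hz with (rfl | rfl) | ⟨g, rfl⟩
    · -- z = x
      rw [hSx, hSneg, hSmul, hSx, ← hι a, hSg, inv_inv, neg_mul, neg_neg]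
    · -- z = y
      rw [hSy, hSneg, hSmul, hSy, ← hι b, hSg, inv_inv, hι, neg_mul, neg_neg,
        hconj, hconj, hab]
    · -- z = ι g
      rw [hSg, hSg, inv_inv]
      have hc : ((ι a : Hˣ) : H) * ((ι g : Hˣ) : H) = ((ι g : Hˣ) : H) * ((ι a : Hˣ) : H) := by
        norm_cast
        rw [← map_mul, ← map_mul, mul_comm a g]
      rw [mul_assoc, ← hc, ← mul_assoc, Units.inv_mul, one_mul]
  | algebraMap r =>
    have h1 : (algebraMap k H) r = r • (1 : H) := by
      rw [Algebra.smul_def, mul_one]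
    rw [h1, hSsmul, hS1, hSsmul, hS1]
    rw [Algebra.mul_smul_comm, Algebra.smul_mul_assoc, mul_one, Units.inv_mul]
  | add z w hz hw ihz ihw =>
    rw [hSadd, hSadd, ihz, ihw, mul_add, add_mul]
  | mul z w hz hw ihz ihw =>
    rw [hSmul, hSmul, ihz, ihw]
    have h1 : ((ι a : Hˣ) : H) * (((ι a)⁻¹ : Hˣ) : H) = 1 := Units.mul_inv _
    calc (((ι a)⁻¹ : Hˣ) : H) * z * ((ι a : Hˣ) : H) *
          ((((ι a)⁻¹ : Hˣ) : H) * w * ((ι a : Hˣ) : H))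
        = (((ι a)⁻¹ : Hˣ) : H) * z * (((ι a : Hˣ) : H) * (((ι a)⁻¹ : Hˣ) : H))
            * w * ((ι a : Hˣ) : H) := by noncomm_ring
      _ = (((ι a)⁻¹ : Hˣ) : H) * (z * w) * ((ι a : Hˣ) : H) := by
          rw [h1, mul_one, mul_assoc _ z w]
end

section
/- Let θ be a primitive N-th root of unity, N = nm, q = θ^m of order n, κ ∈ kˣ, and R_{κ,N} = {ρ : ρ^N = κ}. Call ρ exceptional if ρ^{2m} = q^{n−1}, and for nonexceptional ρ with ρ^{2m} = q^{e(ρ)} (0 ≤ e(ρ) ≤ n−2) define σ(ρ) = θ^{−(e(ρ)+1)}ρ; set σ(ρ) = ρ for exceptional ρ. Then σ is a permutation of the set of ρ ∈ R_{κ,N} with ρ^{2m} ∈ ⟨q⟩, σ has order 2m on nonexceptional orbits, σ²(ρ) = θ^{−n}ρ, and σ^{−1}(ρ) = θ^{n−e(ρ)−1}ρ; every orbit has size 2m or 1. -/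
/-- The exponent `e(ρ)`, the least `e` with `ρ^{2m} = q^e` (or `0` if none exists). -/
noncomputable def eexp (k : Type*) [Field k] (q : kˣ) (m : ℕ) (ρ : kˣ) : ℕ := by
  classical exact if h : ∃ e : ℕ, ρ ^ (2 * m) = q ^ e then Nat.find h else 0

/-- The 'Weyl group' permutation `σ`: `σ(ρ) = θ^{−(e(ρ)+1)}ρ` for nonexceptional `ρ`
(`e(ρ) ≠ n−1`) and `σ(ρ) = ρ` for exceptional `ρ`. -/
noncomputable def sigmaMap (k : Type*) [Field k] (θ q : kˣ) (n m : ℕ) (ρ : kˣ) : kˣ :=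
  if eexp k q m ρ = n - 1 then ρ else θ⁻¹ ^ (eexp k q m ρ + 1) * ρ

/-- If `ρ^{2m} = q^e` with `e < orderOf q`, then `e` is the least such exponent. -/
lemma eexp_eq_of_lt {k : Type*} [Field k] {q : kˣ} {n : ℕ} (hqn : orderOf q = n)
    {m : ℕ} {ρ : kˣ} {e : ℕ} (h : ρ ^ (2 * m) = q ^ e) (he : e < n) :
    eexp k q m ρ = e := by
  classical
  have hex : ∃ e : ℕ, ρ ^ (2 * m) = q ^ e := ⟨e, h⟩
  rw [eexp, dif_pos hex]
  have hle : Nat.find hex ≤ e := Nat.find_le h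
  have hmod : Nat.find hex ≡ e [MOD n] := by
    rw [← hqn, ← pow_eq_pow_iff_modEq, ← Nat.find_spec hex, h]
  rw [Nat.ModEq, Nat.mod_eq_of_lt (lt_of_le_of_lt hle he), Nat.mod_eq_of_lt he] at hmod
  exact hmod

/-- The defining property of `eexp`, together with the bound `eexp < n`. -/
lemma eexp_spec {k : Type*} [Field k] {q : kˣ} {n : ℕ} (hqn : orderOf q = n)
    (hn : 0 < n) {m : ℕ} {ρ : kˣ} {e : ℕ} (h : ρ ^ (2 * m) = q ^ e) :
    ρ ^ (2 * m) = q ^ (eexp k q m ρ) ∧ eexp k q m ρ < n := by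
  have h1 : ρ ^ (2 * m) = q ^ (e % n) := by
    rw [h, pow_eq_pow_iff_modEq, hqn]
    exact (Nat.mod_modEq e n).symm
  have h2 := eexp_eq_of_lt hqn h1 (Nat.mod_lt e hn)
  exact ⟨h2 ▸ h1, h2 ▸ Nat.mod_lt e hn⟩

/-- Lemma 4.15: `σ` is a permutation of `{ρ ∈ R_{κ,N} : ρ^{2m} ∈ ⟨q⟩}`;
on nonexceptional roots, `σ² = θ^{−n}·id`, `σ` has order `2m`, and
`σ⁻¹(ρ) = θ^{n−e(ρ)−1}ρ`; the orbits have size `2m` or `1`. -/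
theorem weyl_group_action (k : Type*) [Field k] [IsAlgClosed k] [CharZero k]
    (n m : ℕ) (hn : 2 ≤ n) (hm : 0 < m)
    (θ q κ : kˣ) (hθ : orderOf θ = n * m) (hq : q = θ ^ m) :
    Set.BijOn (sigmaMap k θ q n m)
      {ρ : kˣ | ρ ^ (n * m) = κ ∧ ∃ e : ℕ, ρ ^ (2 * m) = q ^ e}
      {ρ : kˣ | ρ ^ (n * m) = κ ∧ ∃ e : ℕ, ρ ^ (2 * m) = q ^ e} ∧
    (∀ ρ : kˣ, ρ ^ (n * m) = κ → (∃ e : ℕ, ρ ^ (2 * m) = q ^ e) →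
      eexp k q m ρ ≠ n - 1 →
        ((sigmaMap k θ q n m)^[2] ρ = θ⁻¹ ^ n * ρ ∧
         (sigmaMap k θ q n m)^[2 * m] ρ = ρ ∧
         (∀ j : ℕ, 0 < j → j < 2 * m → (sigmaMap k θ q n m)^[j] ρ ≠ ρ) ∧
         sigmaMap k θ q n m (θ ^ (n - eexp k q m ρ - 1) * ρ) = ρ)) ∧
    (∀ ρ : kˣ, ρ ^ (n * m) = κ → eexp k q m ρ = n - 1 → sigmaMap k θ q n m ρ = ρ) := by
  have hn0 : 0 < n := by omega
  have xpow_eq : ∀ (x : kˣ) (a b : ℕ), a = b → x ^ a = x ^ b := fun x a b h => by rw [h]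
  have hθN : θ ^ (n * m) = 1 := hθ ▸ pow_orderOf_eq_one θ
  have hθiN : θ⁻¹ ^ (n * m) = 1 := by rw [inv_pow, hθN, inv_one]
  have hqn : orderOf q = n := by
    rw [hq, orderOf_pow' θ hm.ne', hθ, Nat.gcd_eq_right ⟨n, mul_comm n m⟩,
      Nat.mul_div_cancel n hm]
  have hq1 : q ^ n = 1 := hqn ▸ pow_orderOf_eq_one q
  -- powers of θ⁻¹ raised to 2m give powers of q⁻¹
  have Hinv : ∀ (a : ℕ) (ρ : kˣ), (θ⁻¹ ^ a * ρ) ^ (2 * m) = q⁻¹ ^ (2 * a) * ρ ^ (2 * m) := by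
    intro a ρ
    rw [mul_pow, hq]
    congr 1
    simp only [inv_pow, ← pow_mul]
    exact congrArg Inv.inv (xpow_eq θ _ _ (by ring))
  have Hpos : ∀ (a : ℕ) (ρ : kˣ), (θ ^ a * ρ) ^ (2 * m) = q ^ (2 * a) * ρ ^ (2 * m) := by
    intro a ρ
    rw [mul_pow, hq]
    congr 1
    rw [← pow_mul, ← pow_mul]
    exact xpow_eq θ _ _ (by ring)
  have HNinv : ∀ (a : ℕ) (ρ : kˣ), (θ⁻¹ ^ a * ρ) ^ (n * m) = ρ ^ (n * m) := by
    intro a ρ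
    rw [mul_pow, ← pow_mul, mul_comm a (n*m), pow_mul, hθiN, one_pow, one_mul]
  have HNpos : ∀ (a : ℕ) (ρ : kˣ), (θ ^ a * ρ) ^ (n * m) = ρ ^ (n * m) := by
    intro a ρ
    rw [mul_pow, ← pow_mul, mul_comm a (n*m), pow_mul, hθN, one_pow, one_mul]
  -- powers of q⁻¹ of the form 2*(n*j) are trivial
  have Hqtriv : ∀ j : ℕ, q⁻¹ ^ (2 * (n * j)) = 1 := by
    intro j
    rw [inv_pow]
    have h1 : q ^ (2 * (n * j)) = (q ^ n) ^ (2 * j) := by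
      rw [← pow_mul]; exact xpow_eq q _ _ (by ring)
    rw [h1, hq1, one_pow, inv_one]
  -- key exponent computation
  have Hq3 : ∀ e : ℕ, e + 2 ≤ n → q⁻¹ ^ (2 * (e + 1)) * q ^ e = q ^ (n - e - 2) := by
    intro e he
    have h1 : q ^ (n - e - 2) * q ^ (2 * (e + 1)) = q ^ e := by
      rw [← pow_add]
      have h2 : n - e - 2 + 2 * (e + 1) = n + e := by omega
      rw [h2, pow_add, hq1, one_mul]
    calc q⁻¹ ^ (2 * (e + 1)) * q ^ e
        = q⁻¹ ^ (2 * (e + 1)) * (q ^ (n - e - 2) * q ^ (2 * (e + 1))) := by rw [h1]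
      _ = q ^ (n - e - 2) := by
          rw [mul_comm (q ^ (n - e - 2)), ← mul_assoc, inv_pow, inv_mul_cancel, one_mul]
  have Hq4 : ∀ e : ℕ, e + 2 ≤ n → q ^ (2 * (n - e - 1)) * q ^ e = q ^ (n - e - 2) := by
    intro e he
    rw [← pow_add]
    have h2 : 2 * (n - e - 1) + e = n + (n - e - 2) := by omega
    rw [h2, pow_add, hq1, one_mul]
  -- the main step lemma
  have step : ∀ ρ : kˣ, (∃ e : ℕ, ρ ^ (2 * m) = q ^ e) →
      eexp k q m ρ ≠ n - 1 →
      sigmaMap k θ q n m ρ = θ⁻¹ ^ (eexp k q m ρ + 1) * ρ ∧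
      (sigmaMap k θ q n m ρ) ^ (2 * m) = q ^ (n - eexp k q m ρ - 2) ∧
      eexp k q m (sigmaMap k θ q n m ρ) = n - eexp k q m ρ - 2 := by
    intro ρ hex hne
    obtain ⟨e0, he0⟩ := hex
    obtain ⟨hpe, helt⟩ := eexp_spec (n := n) hqn hn0 he0
    set e := eexp k q m ρ with hedef
    have he2 : e + 2 ≤ n := by omega
    have hσ : sigmaMap k θ q n m ρ = θ⁻¹ ^ (e + 1) * ρ := by
      rw [sigmaMap, if_neg hne]
    have hσpow : (sigmaMap k θ q n m ρ) ^ (2 * m) = q ^ (n - e - 2) := by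
      rw [hσ, Hinv, hpe, Hq3 e he2]
    exact ⟨hσ, hσpow, eexp_eq_of_lt hqn hσpow (by omega)⟩
  -- the inverse computation
  have invstep : ∀ ρ : kˣ, (∃ e : ℕ, ρ ^ (2 * m) = q ^ e) →
      eexp k q m ρ ≠ n - 1 →
      sigmaMap k θ q n m (θ ^ (n - eexp k q m ρ - 1) * ρ) = ρ := by
    intro ρ hex hne
    obtain ⟨e0, he0⟩ := hex
    obtain ⟨hpe, helt⟩ := eexp_spec (n := n) hqn hn0 he0
    set e := eexp k q m ρ with hedef
    have he2 : e + 2 ≤ n := by omega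
    have hτpow : (θ ^ (n - e - 1) * ρ) ^ (2 * m) = q ^ (n - e - 2) := by
      rw [Hpos, hpe]
      exact Hq4 e he2
    have hτe : eexp k q m (θ ^ (n - e - 1) * ρ) = n - e - 2 :=
      eexp_eq_of_lt hqn hτpow (by omega)
    rw [sigmaMap, if_neg (by omega : ¬ (eexp k q m (θ ^ (n - e - 1) * ρ) = n - 1)), hτe,
      xpow_eq θ⁻¹ _ _ (show n - e - 2 + 1 = n - e - 1 by omega),
      ← mul_assoc, inv_pow, inv_mul_cancel, one_mul]
  -- exceptional fixed points
  have fixstep : ∀ ρ : kˣ, eexp k q m ρ = n - 1 → sigmaMap k θ q n m ρ = ρ := by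
    intro ρ h
    rw [sigmaMap, if_pos h]
  refine ⟨?_, ?_, fun ρ _ h => fixstep ρ h⟩
  · refine ⟨?_, ?_, ?_⟩
    · -- MapsTo
      rintro ρ ⟨hκ, hex⟩
      by_cases hne : eexp k q m ρ = n - 1
      · rw [fixstep ρ hne]; exact ⟨hκ, hex⟩
      · obtain ⟨hσ, hσpow, hσe⟩ := step ρ hex hne
        refine ⟨?_, ⟨n - eexp k q m ρ - 2, hσpow⟩⟩
        rw [hσ, HNinv, hκ]
    · -- InjOn
      rintro ρ₁ ⟨hκ₁, hex₁⟩ ρ₂ ⟨hκ₂, hex₂⟩ heq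
      by_cases h1 : eexp k q m ρ₁ = n - 1 <;> by_cases h2 : eexp k q m ρ₂ = n - 1
      · rwa [fixstep ρ₁ h1, fixstep ρ₂ h2] at heq
      · exfalso
        obtain ⟨hσ, hσpow, hσe⟩ := step ρ₂ hex₂ h2
        rw [fixstep ρ₁ h1] at heq
        obtain ⟨e0, he0⟩ := hex₂
        obtain ⟨hpe, helt⟩ := eexp_spec (n := n) hqn hn0 he0
        rw [← heq] at hσe
        omega
      · exfalso
        obtain ⟨hσ, hσpow, hσe⟩ := step ρ₁ hex₁ h1
        rw [fixstep ρ₂ h2] at heq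
        obtain ⟨e0, he0⟩ := hex₁
        obtain ⟨hpe, helt⟩ := eexp_spec (n := n) hqn hn0 he0
        rw [heq] at hσe
        omega
      · obtain ⟨hσ1, hσpow1, hσe1⟩ := step ρ₁ hex₁ h1
        obtain ⟨hσ2, hσpow2, hσe2⟩ := step ρ₂ hex₂ h2
        obtain ⟨e0, he0⟩ := hex₁
        obtain ⟨hpe1, helt1⟩ := eexp_spec (n := n) hqn hn0 he0
        obtain ⟨e0', he0'⟩ := hex₂
        obtain ⟨hpe2, helt2⟩ := eexp_spec (n := n) hqn hn0 he0'
        rw [heq, hσe2] at hσe1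
        have hee : eexp k q m ρ₁ = eexp k q m ρ₂ := by omega
        rw [hσ1, hσ2, hee] at heq
        exact mul_left_cancel heq
    · -- SurjOn
      rintro ρ ⟨hκ, hex⟩
      by_cases hne : eexp k q m ρ = n - 1
      · exact ⟨ρ, ⟨hκ, hex⟩, fixstep ρ hne⟩
      · refine ⟨θ ^ (n - eexp k q m ρ - 1) * ρ, ⟨?_, ?_⟩, invstep ρ hex hne⟩
        · rw [HNpos, hκ]
        · obtain ⟨e0, he0⟩ := hex
          obtain ⟨hpe, helt⟩ := eexp_spec (n := n) hqn hn0 he0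
          exact ⟨2 * (n - eexp k q m ρ - 1) + eexp k q m ρ, by
            rw [Hpos, hpe, ← pow_add]⟩
  · -- nonexceptional orbit structure
    intro ρ hκ hex hne
    obtain ⟨e0, he0⟩ := hex
    obtain ⟨hpe, helt⟩ := eexp_spec (n := n) hqn hn0 he0
    set e := eexp k q m ρ with hedef
    have he2 : e + 2 ≤ n := by omega
    -- eexp of θ⁻¹ ^ (n * j) * ρ is e
    have hshiftpow : ∀ j : ℕ, (θ⁻¹ ^ (n * j) * ρ) ^ (2 * m) = q ^ e := by
      intro j
      rw [Hinv, ← hpe, Hqtriv j, one_mul]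
    have hshift : ∀ j : ℕ, eexp k q m (θ⁻¹ ^ (n * j) * ρ) = e := fun j =>
      eexp_eq_of_lt hqn (hshiftpow j) helt
    -- the even iterates
    have hiter : ∀ j : ℕ, (sigmaMap k θ q n m)^[2 * j] ρ = θ⁻¹ ^ (n * j) * ρ := by
      intro j
      induction j with
      | zero => simp
      | succ j ih =>
        have h2j : 2 * (j + 1) = 2 * j + 1 + 1 := by omega
        rw [h2j, Function.iterate_succ_apply', Function.iterate_succ_apply', ih]
        set τ := θ⁻¹ ^ (n * j) * ρ with hτ
        have hτe : eexp k q m τ = e := hshift j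
        have hτex : ∃ e' : ℕ, τ ^ (2 * m) = q ^ e' := ⟨e, hshiftpow j⟩
        obtain ⟨hσ1, hσpow1, hσe1⟩ := step τ hτex (by omega)
        have hτ'ex : ∃ e' : ℕ, (sigmaMap k θ q n m τ) ^ (2 * m) = q ^ e' :=
          ⟨n - eexp k q m τ - 2, hσpow1⟩
        obtain ⟨hσ2, hσpow2, hσe2⟩ := step (sigmaMap k θ q n m τ) hτ'ex (by
          rw [hσe1, hτe]; omega)
        rw [hσ2, hσe1, hτe, hσ1, hτe, hτ,
          ← mul_assoc, ← pow_add, xpow_eq θ⁻¹ _ _ (show n - e - 2 + 1 + (e + 1) = n by omega),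
          ← mul_assoc, ← pow_add, xpow_eq θ⁻¹ _ _ (show n + n * j = n * (j + 1) by ring)]
    -- the odd iterates
    have hiterodd : ∀ j : ℕ, (sigmaMap k θ q n m)^[2 * j + 1] ρ =
        θ⁻¹ ^ (n * j + e + 1) * ρ := by
      intro j
      rw [Function.iterate_succ_apply', hiter j]
      set τ := θ⁻¹ ^ (n * j) * ρ with hτ
      have hτe : eexp k q m τ = e := hshift j
      have hτex : ∃ e' : ℕ, τ ^ (2 * m) = q ^ e' := ⟨e, hshiftpow j⟩
      obtain ⟨hσ1, _, _⟩ := step τ hτex (by omega)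
      rw [hσ1, hτe, hτ, ← mul_assoc, ← pow_add,
        xpow_eq θ⁻¹ _ _ (show e + 1 + n * j = n * j + e + 1 by ring)]
    -- θ⁻¹ ^ a * ρ ≠ ρ for 0 < a < n * m
    have hθne : ∀ a : ℕ, 0 < a → a < n * m → θ⁻¹ ^ a * ρ ≠ ρ := by
      intro a ha han h
      have h1 : θ⁻¹ ^ a = 1 := by
        have h0 : θ⁻¹ ^ a * ρ = 1 * ρ := by rw [h, one_mul]
        exact mul_right_cancel h0
      have h2 : θ ^ a = 1 := by
        rw [inv_pow] at h1
        rw [← inv_inv (θ ^ a), h1, inv_one]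
      have h3 : n * m ∣ a := hθ ▸ orderOf_dvd_of_pow_eq_one h2
      have := Nat.le_of_dvd ha h3
      omega
    refine ⟨by simpa using hiter 1, by rw [hiter m, hθiN, one_mul], ?_,
      invstep ρ ⟨e0, he0⟩ hne⟩
    intro j hj hjm h
    rcases Nat.even_or_odd j with ⟨a, ha⟩ | ⟨a, ha⟩
    · have h2 : (sigmaMap k θ q n m)^[2 * a] ρ = ρ := by
        rw [show 2 * a = j by omega]; exact h
      rw [hiter a] at h2
      have h5 : n * (a + 1) ≤ n * m := Nat.mul_le_mul_left n (by omega)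
      have h6 : n * (a + 1) = n * a + n := by ring
      exact hθne (n * a) (Nat.mul_pos hn0 (by omega)) (by linarith) h2
    · have h2 : (sigmaMap k θ q n m)^[2 * a + 1] ρ = ρ := by
        rw [show 2 * a + 1 = j by omega]; exact h
      rw [hiterodd a] at h2
      have h5 : n * (a + 1) ≤ n * m := Nat.mul_le_mul_left n (by omega)
      have h6 : n * (a + 1) = n * a + n := by ring
      exact hθne (n * a + e + 1) (by omega) (by linarith) h2
end

section
/- Let A be the k-algebra generated by E, F, K with relations E^n = α, F^n = β (α, β ∈ k), K^N = κ, EF − FE = η(K^{−m} − K^m), KE = θEK, KF = θ^{−1}FK, where θ has order N = nm and q = θ^m has order n, η ≠ 0. Suppose {E^i F^j K^l : 0 ≤ i,j < n, 0 ≤ l < N} is a k-basis of A. Then the Casimir element C = EF − (η/(q−1))(K^m + qK^{−m}) satisfies the degree-n polynomial f(t) = ∏_{i=0}^{n−1}(t + η' D(θ^i ρ)) − αβ over k, where η' = η/(q−1), D(ζ) = ζ^{−m} + qζ^m, and ρ is any fixed N-th root of κ; moreover no polynomial of degree < n annihilates C. -/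
open Polynomial

private lemma skew_left {k A : Type*} [CommSemiring k] [Semiring A] [Algebra k A]
    {x y : A} {c : k} (h : x * y = c • (y * x)) :
    ∀ j : ℕ, x ^ j * y = c ^ j • (y * x ^ j) := by
  intro j
  induction j with
  | zero => simp
  | succ j ih =>
      rw [pow_succ, mul_assoc, h, Algebra.mul_smul_comm, ← mul_assoc, ih,
        Algebra.smul_mul_assoc, smul_smul, mul_assoc, ← pow_succ, ← pow_succ']

private lemma skew_right {k A : Type*} [CommSemiring k] [Semiring A] [Algebra k A]
    {x y : A} {c : k} (h : x * y = c • (y * x)) :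
    ∀ j : ℕ, x * y ^ j = c ^ j • (y ^ j * x) := by
  intro j
  induction j with
  | zero => simp
  | succ j ih =>
      rw [pow_succ, ← mul_assoc, ih, Algebra.smul_mul_assoc, mul_assoc, h,
        Algebra.mul_smul_comm, smul_smul, ← mul_assoc, ← pow_succ]

private lemma coeff_comp_C_mul_X {R : Type*} [CommSemiring R] (p : R[X]) (a : R) (d : ℕ) :
    (p.comp (Polynomial.C a * Polynomial.X)).coeff d = a ^ d * p.coeff d := by
  induction p using Polynomial.induction_on' with
  | add p q hp hq => simp [Polynomial.add_comp, hp, hq, mul_add]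
  | monomial e c =>
      rw [Polynomial.comp, Polynomial.eval₂_monomial, mul_pow, ← Polynomial.C_pow,
        ← mul_assoc, ← Polynomial.C_mul]
      rw [Polynomial.coeff_C_mul, Polynomial.coeff_X_pow, Polynomial.coeff_monomial]
      by_cases hde : e = d
      · subst hde; simp [mul_comm]
      · simp [hde, Ne.symm hde]

private lemma prod_range_shift_one {M : Type*} [CommMonoid M] (f : ℕ → M) (n : ℕ)
    (hn : 0 < n) (hper : f n = f 0) :
    ∏ j ∈ Finset.range n, f (j + 1) = ∏ j ∈ Finset.range n, f j := by
  have h1 : ∏ j ∈ Finset.range n, f (j + 1) = ∏ j ∈ Finset.Ico 1 (n + 1), f j := by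
    rw [Finset.prod_Ico_eq_prod_range]
    simp only [Nat.add_sub_cancel]
    exact Finset.prod_congr rfl fun i _ => by rw [add_comm]
  rw [h1, Finset.prod_Ico_succ_top (by omega : 1 ≤ n), hper, Finset.range_eq_Ico,
    Finset.prod_eq_prod_Ico_succ_bot hn, mul_comm]

private lemma prod_range_shift_of_periodic {M : Type*} [CommMonoid M] (f : ℕ → M) (n : ℕ)
    (hn : 0 < n) (hper : ∀ j, f (j + n) = f j) (c : ℕ) :
    ∏ j ∈ Finset.range n, f (j + c) = ∏ j ∈ Finset.range n, f j := by
  induction c with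
  | zero => simp
  | succ c ih =>
      have h2 : ∏ j ∈ Finset.range n, f (j + (c + 1))
          = ∏ j ∈ Finset.range n, (fun i => f (i + c)) (j + 1) := by
        refine Finset.prod_congr rfl fun j _ => ?_
        simp only []
        congr 1
        omega
      have h3 : (fun i => f (i + c)) n = (fun i => f (i + c)) 0 := by
        simp only []
        rw [add_comm n c, hper c, Nat.zero_add]
      rw [h2, prod_range_shift_one (fun i => f (i + c)) n hn h3, ih]
/-- Lemma 4.5: the Casimir element `C = EF − (η/(q−1))(K^m + qK^{−m})` of a class
subalgebra of a linked lifting satisfies the degree-`n` polynomial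
`f(t) = ∏_{i=0}^{n−1}(t + η'·D(θ^i ρ)) − E^n F^n`, where `η' = η/(q−1)` and
`D(ζ) = ζ^{−m} + qζ^m`, and no nonzero polynomial of degree `< n` annihilates `C`. -/
theorem casimir_minimal_polynomial (k : Type*) [Field k] [IsAlgClosed k] [CharZero k]
    (A : Type*) [Ring A] [Algebra k A]
    (n m : ℕ) (hn : 2 ≤ n) (hm : 0 < m)
    (θ κ : kˣ) (hθ : orderOf θ = n * m)
    (η α β : k) (hη : η ≠ 0)
    (E F : A) (u : Aˣ)
    (hE : E ^ n = α • (1 : A)) (hF : F ^ n = β • (1 : A))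
    (hK : ((u : A)) ^ (n * m) = ((κ : kˣ) : k) • (1 : A))
    (hEF : E * F - F * E = η • (((u⁻¹ ^ m : Aˣ) : A) - ((u ^ m : Aˣ) : A)))
    (hKE : (u : A) * E = ((θ : kˣ) : k) • (E * (u : A)))
    (hKF : (u : A) * F = ((θ⁻¹ : kˣ) : k) • (F * (u : A)))
    (hli : LinearIndependent k
      (fun t : Fin n × Fin n × Fin (n * m) =>
        E ^ (t.1 : ℕ) * F ^ (t.2.1 : ℕ) * ((u : A)) ^ (t.2.2 : ℕ)))
    (hspan : Submodule.span k
      (Set.range fun t : Fin n × Fin n × Fin (n * m) =>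
        E ^ (t.1 : ℕ) * F ^ (t.2.1 : ℕ) * ((u : A)) ^ (t.2.2 : ℕ)) = ⊤)
    (ρ : kˣ) (hρ : ρ ^ (n * m) = κ) :
    Polynomial.aeval
        (E * F - (η / (((θ ^ m : kˣ) : k) - 1)) •
          (((u ^ m : Aˣ) : A) + ((θ ^ m : kˣ) : k) • ((u⁻¹ ^ m : Aˣ) : A)))
        ((∏ i ∈ Finset.range n,
            (Polynomial.X + Polynomial.C ((η / (((θ ^ m : kˣ) : k) - 1)) *
              ((((( θ ^ i * ρ)⁻¹ : kˣ) : k)) ^ m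
                + ((θ ^ m : kˣ) : k) * (((θ ^ i * ρ : kˣ) : k)) ^ m))))
          - Polynomial.C (α * β)) = 0 ∧
    ∀ g : Polynomial k, g ≠ 0 → g.degree < n →
      Polynomial.aeval
        (E * F - (η / (((θ ^ m : kˣ) : k) - 1)) •
          (((u ^ m : Aˣ) : A) + ((θ ^ m : kˣ) : k) • ((u⁻¹ ^ m : Aˣ) : A))) g ≠ 0 := by
  classical
  have hn0 : 0 < n := by omega
  have hN : 0 < n * m := Nat.mul_pos hn0 hm
  set t : k := ((θ : kˣ) : k) with htdef
  set qk : k := ((θ ^ m : kˣ) : k) with hqkdef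
  set z : A := ((u ^ m : Aˣ) : A) with hzdef
  set w : A := ((u⁻¹ ^ m : Aˣ) : A) with hwdef
  set η' : k := η / (qk - 1) with hη'def
  set Cc : A := E * F - η' • (z + qk • w) with hCcdef
  set tiv : k := ((θ⁻¹ : kˣ) : k) with htivdef
  set qiv : k := tiv ^ m with hqivdef
  -- basic unit facts
  have huz : z = ((u : A)) ^ m := by rw [hzdef, Units.val_pow_eq_pow_val]
  have huw : w = ((↑u⁻¹ : A)) ^ m := by rw [hwdef, Units.val_pow_eq_pow_val]
  have hzw : z * w = 1 := by
    rw [hzdef, hwdef, ← Units.val_mul, inv_pow, mul_inv_cancel, Units.val_one]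
  have hwz : w * z = 1 := by
    rw [hzdef, hwdef, ← Units.val_mul, inv_pow, inv_mul_cancel, Units.val_one]
  have hqkt : qk = t ^ m := by rw [hqkdef, htdef, Units.val_pow_eq_pow_val]
  have htivt : tiv * t = 1 := by
    rw [htivdef, htdef, ← Units.val_mul, inv_mul_cancel, Units.val_one]
  have httiv : t * tiv = 1 := by
    rw [htivdef, htdef, ← Units.val_mul, mul_inv_cancel, Units.val_one]
  have hqkqiv : qk * qiv = 1 := by
    rw [hqkt, hqivdef, ← mul_pow, httiv, one_pow]
  have hqivqk : qiv * qk = 1 := by rw [mul_comm]; exact hqkqiv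
  -- order facts
  have hqpow1 : qk ^ n = 1 := by
    rw [hqkdef, ← Units.val_pow_eq_pow_val, ← pow_mul, mul_comm m n, ← hθ,
      pow_orderOf_eq_one, Units.val_one]
  have hqdvd : ∀ d : ℕ, qk ^ d = 1 → n ∣ d := by
    intro d hd
    have h1 : (θ : kˣ) ^ (m * d) = 1 := by
      rw [pow_mul]
      exact Units.ext (by rw [Units.val_pow_eq_pow_val, ← hqkdef, hd, Units.val_one])
    have h2 : n * m ∣ m * d := hθ ▸ orderOf_dvd_of_pow_eq_one h1
    have h3 : m * n ∣ m * d := by rwa [mul_comm n m] at h2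
    exact (Nat.mul_dvd_mul_iff_left hm).mp h3
  have hq1 : qk ≠ 1 := by
    intro h
    have h2 := Nat.le_of_dvd one_pos (hqdvd 1 (by rw [pow_one, h]))
    omega
  have hden : qk - 1 ≠ 0 := sub_ne_zero.mpr hq1
  have hηeq : η' * (qk - 1) = η := div_mul_cancel₀ η hden
  have hη'0 : η' ≠ 0 := div_ne_zero hη hden
  -- commutation relations
  have hKinvE : (↑u⁻¹ : A) * E = tiv • (E * ↑u⁻¹) := by
    have hEu : E * ↑u⁻¹ = t • ((↑u⁻¹ : A) * E) := by
      calc E * ↑u⁻¹ = ↑u⁻¹ * (↑u * E) * ↑u⁻¹ := by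
            rw [← mul_assoc, Units.inv_mul, one_mul]
        _ = t • (↑u⁻¹ * E) := by
            rw [hKE, Algebra.mul_smul_comm, Algebra.smul_mul_assoc]
            congr 1
            rw [mul_assoc, mul_assoc, Units.mul_inv, mul_one]
    rw [hEu, smul_smul, htivt, one_smul]
  have hKinvF : (↑u⁻¹ : A) * F = t • (F * ↑u⁻¹) := by
    have hFu : F * ↑u⁻¹ = tiv • ((↑u⁻¹ : A) * F) := by
      calc F * ↑u⁻¹ = ↑u⁻¹ * (↑u * F) * ↑u⁻¹ := by
            rw [← mul_assoc, Units.inv_mul, one_mul]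
        _ = tiv • (↑u⁻¹ * F) := by
            rw [hKF, Algebra.mul_smul_comm, Algebra.smul_mul_assoc]
            congr 1
            rw [mul_assoc, mul_assoc, Units.mul_inv, mul_one]
    rw [hFu, smul_smul, httiv, one_smul]
  have hzE : z * E = qk • (E * z) := by rw [huz, hqkt]; exact skew_left hKE m
  have hzF : z * F = qiv • (F * z) := by rw [huz, hqivdef]; exact skew_left hKF m
  have hwE : w * E = qiv • (E * w) := by rw [huw, hqivdef]; exact skew_left hKinvE m
  have hwF : w * F = qk • (F * w) := by rw [huw, hqkt]; exact skew_left hKinvF m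
  have hFE : F * E = E * F - η • w + η • z := by
    have h := hEF
    rw [smul_sub] at h
    linear_combination (norm := module) -h
  -- centrality of the Casimir element
  have hCE : Cc * E = E * Cc := by
    rw [hCcdef]
    simp only [sub_mul, mul_sub, add_mul, mul_add, Algebra.smul_mul_assoc,
      Algebra.mul_smul_comm, smul_add, smul_smul, mul_assoc, hzE, hwE, hFE]
    match_scalars
    · ring
    · linear_combination hηeq - η' * hqkqiv
    · linear_combination -hηeq
  have hCF : Cc * F = F * Cc := by
    rw [hCcdef]
    simp only [sub_mul, mul_sub, add_mul, mul_add, Algebra.smul_mul_assoc,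
      Algebra.mul_smul_comm, smul_add, smul_sub, smul_smul, ← mul_assoc, hzF, hwF, hFE]
    match_scalars
    · ring
    · linear_combination qiv * hηeq - η' * hqkqiv
    · linear_combination -qk * hηeq
  -- z, w commute with E*F and with Cc
  have hzEF : z * (E * F) = (E * F) * z := by
    calc z * (E * F) = (z * E) * F := by rw [mul_assoc]
      _ = qk • (E * (z * F)) := by rw [hzE, Algebra.smul_mul_assoc, mul_assoc]
      _ = (qk * qiv) • (E * (F * z)) := by rw [hzF, Algebra.mul_smul_comm, smul_smul]
      _ = (E * F) * z := by rw [hqkqiv, one_smul, mul_assoc]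
  have hwEF : w * (E * F) = (E * F) * w := by
    calc w * (E * F) = (w * E) * F := by rw [mul_assoc]
      _ = qiv • (E * (w * F)) := by rw [hwE, Algebra.smul_mul_assoc, mul_assoc]
      _ = (qiv * qk) • (E * (F * w)) := by rw [hwF, Algebra.mul_smul_comm, smul_smul]
      _ = (E * F) * w := by rw [hqivqk, one_smul, mul_assoc]
  have hCz : Cc * z = z * Cc := by
    rw [hCcdef]
    simp only [sub_mul, mul_sub, add_mul, mul_add, Algebra.smul_mul_assoc,
      Algebra.mul_smul_comm, smul_add, smul_smul, hzw, hwz, hzEF]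
  have hCw : Cc * w = w * Cc := by
    rw [hCcdef]
    simp only [sub_mul, mul_sub, add_mul, mul_add, Algebra.smul_mul_assoc,
      Algebra.mul_smul_comm, smul_add, smul_smul, hzw, hwz, hwEF]
  -- reduction of powers of u
  have κne : ((κ : kˣ) : k) ≠ 0 := Units.ne_zero κ
  have hKl : ∀ l : ℕ, ((u : A)) ^ l
      = (((κ : kˣ) : k)) ^ (l / (n * m)) • ((u : A)) ^ (l % (n * m)) := by
    intro l
    conv_lhs => rw [← Nat.div_add_mod l (n * m)]
    rw [pow_add, pow_mul, hK, _root_.smul_pow, one_pow, Algebra.smul_mul_assoc, one_mul]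
  set Mj : ℕ → Submodule k A := fun j =>
    Submodule.span k {a : A | ∃ i, i < j ∧ ∃ l, l < n * m ∧ a = E ^ i * F ^ i * ((u : A)) ^ l}
    with hMjdef
  have Mmono : ∀ {j j' : ℕ}, j ≤ j' → Mj j ≤ Mj j' := by
    intro j j' h
    apply Submodule.span_mono
    rintro a ⟨i, hi, l, hl, rfl⟩
    exact ⟨i, lt_of_lt_of_le hi h, l, hl, rfl⟩
  have memM : ∀ (i l j : ℕ), i < j → E ^ i * F ^ i * ((u : A)) ^ l ∈ Mj j := by
    intro i l j hij
    rw [hKl l, Algebra.mul_smul_comm]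
    exact Submodule.smul_mem _ _
      (Submodule.subset_span ⟨i, hij, l % (n * m), Nat.mod_lt _ hN, rfl⟩)
  have hw2 : w = (((κ : kˣ) : k))⁻¹ • ((u : A)) ^ (n * m - m) := by
    have hmN : m ≤ n * m := Nat.le_mul_of_pos_left m hn0
    have h1 : z * ((u : A)) ^ (n * m - m) = ((κ : kˣ) : k) • 1 := by
      rw [huz, ← pow_add, Nat.add_sub_cancel' hmN]; exact hK
    have h2 : w * (z * ((u : A)) ^ (n * m - m)) = ((κ : kˣ) : k) • w := by
      rw [h1, Algebra.mul_smul_comm, mul_one]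
    rw [← mul_assoc, hwz, one_mul] at h2
    rw [h2, smul_smul, inv_mul_cancel₀ κne, one_smul]
  have hzK : ∀ l : ℕ, z * ((u : A)) ^ l = ((u : A)) ^ (m + l) := by
    intro l; rw [huz, ← pow_add]
  have hKz : ∀ l : ℕ, ((u : A)) ^ l * z = ((u : A)) ^ (l + m) := by
    intro l; rw [huz, ← pow_add]
  have hwK : ∀ l : ℕ, w * ((u : A)) ^ l
      = (((κ : kˣ) : k))⁻¹ • ((u : A)) ^ (n * m - m + l) := by
    intro l; rw [hw2, Algebra.smul_mul_assoc, ← pow_add]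
  have hKw : ∀ l : ℕ, ((u : A)) ^ l * w
      = (((κ : kˣ) : k))⁻¹ • ((u : A)) ^ (l + (n * m - m)) := by
    intro l; rw [hw2, Algebra.mul_smul_comm, ← pow_add]
  -- commuting E past powers of F
  have FEex : ∀ i : ℕ, ∃ a b : k,
      F ^ (i + 1) * E = E * F ^ (i + 1) + a • (F ^ i * z) + b • (F ^ i * w) := by
    intro i
    induction i with
    | zero =>
        refine ⟨η, -η, ?_⟩
        simp only [zero_add, pow_one, pow_zero, one_mul, hFE, neg_smul]
        abel
    | succ i ih =>
        obtain ⟨a, b, hab⟩ := ih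
        refine ⟨a + η * qiv ^ (i + 1), b - η * qk ^ (i + 1), ?_⟩
        have h1 : F ^ (i + 2) * E = F * (F ^ (i + 1) * E) := by
          rw [← mul_assoc, ← pow_succ']
        have hz' : z * F ^ (i + 1) = qiv ^ (i + 1) • (F ^ (i + 1) * z) := skew_right hzF (i + 1)
        have hw' : w * F ^ (i + 1) = qk ^ (i + 1) • (F ^ (i + 1) * w) := skew_right hwF (i + 1)
        rw [h1, hab]
        simp only [mul_add, add_mul, sub_mul, Algebra.smul_mul_assoc, Algebra.mul_smul_comm,
          smul_smul, ← mul_assoc, hFE, ← pow_succ']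
        simp only [mul_assoc, hz', hw', smul_smul, Algebra.mul_smul_comm]
        simp only [← pow_succ']
        module
  -- u^l commutes with E*F
  have hKlEF : ∀ l : ℕ, ((u : A)) ^ l * (E * F) = (E * F) * ((u : A)) ^ l := by
    intro l
    have httivl : t ^ l * tiv ^ l = 1 := by rw [← mul_pow, httiv, one_pow]
    calc ((u : A)) ^ l * (E * F) = (((u : A)) ^ l * E) * F := by rw [mul_assoc]
      _ = t ^ l • (E * (((u : A)) ^ l * F)) := by
          rw [skew_left hKE l, Algebra.smul_mul_assoc, mul_assoc]
      _ = (t ^ l * tiv ^ l) • (E * (F * ((u : A)) ^ l)) := by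
          rw [skew_left hKF l, Algebra.mul_smul_comm, smul_smul]
      _ = (E * F) * ((u : A)) ^ l := by rw [httivl, one_smul, mul_assoc]
  -- key multiplication lemma
  have mulC : ∀ (i l : ℕ),
      (E ^ i * F ^ i * ((u : A)) ^ l) * Cc - E ^ (i + 1) * F ^ (i + 1) * ((u : A)) ^ l
        ∈ Mj (i + 1) := by
    intro i l
    have hexp : (E ^ i * F ^ i * ((u : A)) ^ l) * Cc
        = (E ^ i * F ^ i * ((u : A)) ^ l) * (E * F)
          - η' • ((E ^ i * F ^ i * ((u : A)) ^ l) * z)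
          - (η' * qk) • ((E ^ i * F ^ i * ((u : A)) ^ l) * w) := by
      rw [hCcdef]
      simp only [mul_sub, mul_add, Algebra.mul_smul_comm, smul_add, smul_smul]
      abel
    have hXz : (E ^ i * F ^ i * ((u : A)) ^ l) * z = E ^ i * F ^ i * ((u : A)) ^ (l + m) := by
      rw [mul_assoc, hKz]
    have hXw : (E ^ i * F ^ i * ((u : A)) ^ l) * w
        = (((κ : kˣ) : k))⁻¹ • (E ^ i * F ^ i * ((u : A)) ^ (l + (n * m - m))) := by
      rw [mul_assoc, hKw, Algebra.mul_smul_comm]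
    have hzmem : η' • ((E ^ i * F ^ i * ((u : A)) ^ l) * z) ∈ Mj (i + 1) := by
      rw [hXz]; exact Submodule.smul_mem _ _ (memM i (l + m) (i + 1) (Nat.lt_succ_self i))
    have hwmem : (η' * qk) • ((E ^ i * F ^ i * ((u : A)) ^ l) * w) ∈ Mj (i + 1) := by
      rw [hXw, smul_smul]
      exact Submodule.smul_mem _ _ (memM i (l + (n * m - m)) (i + 1) (Nat.lt_succ_self i))
    have hmain : (E ^ i * F ^ i * ((u : A)) ^ l) * (E * F)
        - E ^ (i + 1) * F ^ (i + 1) * ((u : A)) ^ l ∈ Mj (i + 1) := by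
      rcases i with _ | i
      · -- i = 0
        have : (E ^ 0 * F ^ 0 * ((u : A)) ^ l) * (E * F)
            = E ^ (0 + 1) * F ^ (0 + 1) * ((u : A)) ^ l := by
          simp only [pow_zero, one_mul, zero_add, pow_one]
          rw [hKlEF]
        rw [this, sub_self]
        exact Submodule.zero_mem _
      · obtain ⟨a, b, hab⟩ := FEex i
        have hab' : ∀ x : A, F ^ (i + 1) * (E * x)
            = E * (F ^ (i + 1) * x) + a • (F ^ i * (z * x)) + b • (F ^ i * (w * x)) := by
          intro x
          have h := congrArg (· * x) hab
          simpa only [add_mul, Algebra.smul_mul_assoc, mul_assoc] using h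
        have hz3 : z * (F * ((u : A)) ^ l) = qiv • (F * ((u : A)) ^ (m + l)) := by
          rw [← mul_assoc, hzF, Algebra.smul_mul_assoc, mul_assoc, hzK]
        have hw3 : w * (F * ((u : A)) ^ l)
            = (qk * (((κ : kˣ) : k))⁻¹) • (F * ((u : A)) ^ (n * m - m + l)) := by
          rw [← mul_assoc, hwF, Algebra.smul_mul_assoc, mul_assoc, hwK,
            Algebra.mul_smul_comm, smul_smul]
        have hcalc : (E ^ (i + 1) * F ^ (i + 1) * ((u : A)) ^ l) * (E * F)
            = E ^ (i + 2) * F ^ (i + 2) * ((u : A)) ^ l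
              + (a * qiv) • (E ^ (i + 1) * F ^ (i + 1) * ((u : A)) ^ (m + l))
              + (b * (qk * (((κ : kˣ) : k))⁻¹))
                  • (E ^ (i + 1) * F ^ (i + 1) * ((u : A)) ^ (n * m - m + l)) := by
          simp only [mul_assoc]
          rw [hKlEF]
          simp only [← mul_assoc]
          simp only [mul_assoc]
          rw [hab' (F * ((u : A)) ^ l), hz3, hw3]
          simp only [pow_succ, mul_add, add_mul, Algebra.mul_smul_comm,
            Algebra.smul_mul_assoc, smul_smul, mul_assoc]
        rw [hcalc]
        have h4 : E ^ (i + 2) * F ^ (i + 2) * ((u : A)) ^ l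
            + (a * qiv) • (E ^ (i + 1) * F ^ (i + 1) * ((u : A)) ^ (m + l))
            + (b * (qk * (((κ : kˣ) : k))⁻¹))
                • (E ^ (i + 1) * F ^ (i + 1) * ((u : A)) ^ (n * m - m + l))
            - E ^ (i + 1 + 1) * F ^ (i + 1 + 1) * ((u : A)) ^ l
            = (a * qiv) • (E ^ (i + 1) * F ^ (i + 1) * ((u : A)) ^ (m + l))
              + (b * (qk * (((κ : kˣ) : k))⁻¹))
                  • (E ^ (i + 1) * F ^ (i + 1) * ((u : A)) ^ (n * m - m + l)) := by
          abel
        rw [h4]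
        exact Submodule.add_mem _
          (Submodule.smul_mem _ _ (memM (i + 1) (m + l) (i + 2) (Nat.lt_succ_self _)))
          (Submodule.smul_mem _ _ (memM (i + 1) (n * m - m + l) (i + 2) (Nat.lt_succ_self _)))
    have hfinal : (E ^ i * F ^ i * ((u : A)) ^ l) * Cc - E ^ (i + 1) * F ^ (i + 1) * ((u : A)) ^ l
        = ((E ^ i * F ^ i * ((u : A)) ^ l) * (E * F) - E ^ (i + 1) * F ^ (i + 1) * ((u : A)) ^ l)
          - η' • ((E ^ i * F ^ i * ((u : A)) ^ l) * z)
          - (η' * qk) • ((E ^ i * F ^ i * ((u : A)) ^ l) * w) := by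
      rw [hexp]; abel
    rw [hfinal]
    exact Submodule.sub_mem _ (Submodule.sub_mem _ hmain hzmem) hwmem
  -- powers of the Casimir element
  have Cpow : ∀ j : ℕ, Cc ^ j - E ^ j * F ^ j ∈ Mj j := by
    intro j
    induction j with
    | zero => simpa using Submodule.zero_mem (Mj 0)
    | succ j ih =>
        have hMC : ∀ x ∈ Mj j, x * Cc ∈ Mj (j + 1) := by
          intro x hx
          induction hx using Submodule.span_induction with
          | mem a ha =>
              obtain ⟨i, hi, l, hl, rfl⟩ := ha
              have h1 := mulC i l
              have h2 := memM (i + 1) l (j + 1) (by omega)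
              have h3 := Submodule.add_mem _ (Mmono (by omega : i + 1 ≤ j + 1) h1) h2
              simpa using h3
          | zero => simpa using Submodule.zero_mem (Mj (j + 1))
          | add x y hx hy ihx ihy => rw [add_mul]; exact Submodule.add_mem _ ihx ihy
          | smul c x hx ihx => rw [Algebra.smul_mul_assoc]; exact Submodule.smul_mem _ _ ihx
        have h3 : Cc ^ (j + 1) - E ^ (j + 1) * F ^ (j + 1)
            = (Cc ^ j - E ^ j * F ^ j) * Cc
              + ((E ^ j * F ^ j * ((u : A)) ^ 0) * Cc - E ^ (j + 1) * F ^ (j + 1) * ((u : A)) ^ 0) := by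
          rw [pow_zero, mul_one, mul_one, pow_succ]
          noncomm_ring
        rw [h3]
        exact Submodule.add_mem _ (hMC _ ih) (mulC j 0)
  -- minimality
  have minimality : ∀ g : Polynomial k, g ≠ 0 → g.degree < (n : ℕ) →
      (Polynomial.aeval Cc) g ≠ 0 := by
    intro g hg hdeg hzero
    have hd : g.natDegree < n := (Polynomial.natDegree_lt_iff_degree_lt hg).mpr hdeg
    have hcd : g.coeff g.natDegree ≠ 0 := by
      rw [← Polynomial.leadingCoeff]
      exact Polynomial.leadingCoeff_ne_zero.mpr hg
    set d := g.natDegree with hddef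
    have hsum := Polynomial.aeval_eq_sum_range (R := k) (p := g) Cc
    rw [hzero] at hsum
    have hS1 : (∑ i ∈ Finset.range (d + 1), g.coeff i • (Cc ^ i - E ^ i * F ^ i)) ∈ Mj d := by
      apply Submodule.sum_mem
      intro i hi
      exact Submodule.smul_mem _ _
        (Mmono (by simpa using Nat.lt_succ_iff.mp (Finset.mem_range.mp hi)) (Cpow i))
    have hS2 : (∑ i ∈ Finset.range d, g.coeff i • (E ^ i * F ^ i)) ∈ Mj d := by
      apply Submodule.sum_mem
      intro i hi
      have h5 := memM i 0 d (Finset.mem_range.mp hi)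
      rw [pow_zero, mul_one] at h5
      exact Submodule.smul_mem _ _ h5
    have key : g.coeff d • (E ^ d * F ^ d)
        = (∑ i ∈ Finset.range (d + 1), g.coeff i • Cc ^ i)
          - (∑ i ∈ Finset.range (d + 1), g.coeff i • (Cc ^ i - E ^ i * F ^ i))
          - ∑ i ∈ Finset.range d, g.coeff i • (E ^ i * F ^ i) := by
      rw [← Finset.sum_sub_distrib]
      have : ∀ i ∈ Finset.range (d + 1),
          g.coeff i • Cc ^ i - g.coeff i • (Cc ^ i - E ^ i * F ^ i)
            = g.coeff i • (E ^ i * F ^ i) := by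
        intro i _
        rw [smul_sub, sub_sub_cancel]
      rw [Finset.sum_congr rfl this, Finset.sum_range_succ]
      abel
    have hmem : g.coeff d • (E ^ d * F ^ d) ∈ Mj d := by
      rw [key, ← hsum]
      exact Submodule.sub_mem _ (Submodule.sub_mem _ (Submodule.zero_mem _) hS1) hS2
    have hmem2 : E ^ d * F ^ d ∈ Mj d := by
      have h6 := Submodule.smul_mem (Mj d) (g.coeff d)⁻¹ hmem
      rwa [smul_smul, inv_mul_cancel₀ hcd, one_smul] at h6
    -- contradiction with linear independence
    have hsub : Mj d ≤ Submodule.span k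
        ((fun t : Fin n × Fin n × Fin (n * m) =>
          E ^ (t.1 : ℕ) * F ^ (t.2.1 : ℕ) * ((u : A)) ^ (t.2.2 : ℕ)) ''
            {p : Fin n × Fin n × Fin (n * m) | (p.1 : ℕ) < d}) := by
      rw [hMjdef]
      apply Submodule.span_le.mpr
      rintro a ⟨i, hi, l, hl, rfl⟩
      exact Submodule.subset_span
        ⟨(⟨i, lt_trans hi hd⟩, ⟨i, lt_trans hi hd⟩, ⟨l, hl⟩), hi, rfl⟩
    have hnot := hli.notMem_span_image
      (s := {p : Fin n × Fin n × Fin (n * m) | (p.1 : ℕ) < d})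
      (x := (⟨d, hd⟩, ⟨d, hd⟩, ⟨0, hN⟩)) (by simp)
    apply hnot
    show E ^ d * F ^ d * ((u : A)) ^ (0 : ℕ) ∈ _
    rw [pow_zero, mul_one]
    exact hsub hmem2
  -- ============ Part 1 ============
  have hqk0 : qk ≠ 0 := Units.ne_zero _
  have hqivn : qiv ^ n = 1 := by
    have h := congrArg (· ^ n) hqkqiv
    simp only [mul_pow, one_pow, hqpow1, one_mul] at h
    exact h
  have hqiv0 : qiv ≠ 0 := by
    intro h
    rw [h, mul_zero] at hqkqiv
    exact zero_ne_one hqkqiv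
  set κk : k := ((κ : kˣ) : k) with hκkdef
  set κiv : k := ((κ⁻¹ : kˣ) : k) with hκivdef
  have hκivκ : κiv * κk = 1 := by
    rw [hκivdef, hκkdef, ← Units.val_mul, inv_mul_cancel, Units.val_one]
  have e1 : n - 1 + 1 = n := by omega
  have hznA : z ^ n = κk • (1 : A) := by
    rw [huz, ← pow_mul, mul_comm m n]; exact hK
  have hzn1 : z ^ (n - 1) = κk • w := by
    calc z ^ (n - 1) = z ^ (n - 1) * (z * w) := by rw [hzw, mul_one]
      _ = z ^ n * w := by rw [← mul_assoc, ← pow_succ, e1]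
      _ = κk • w := by rw [hznA, Algebra.smul_mul_assoc, one_mul]
  -- evaluation of two-variable polynomials at the commuting pair (Cc, z)
  set φ : Polynomial k →+* A := (Polynomial.aeval Cc : Polynomial k →ₐ[k] A).toRingHom
    with hφdef
  have hφeq : ∀ q : Polynomial k, Polynomial.aeval Cc q = φ q := fun q => rfl
  have hφC : ∀ c : k, φ (Polynomial.C c) = c • (1 : A) := by
    intro c
    rw [← hφeq, Polynomial.aeval_C, Algebra.algebraMap_eq_smul_one]
  have hφX : φ Polynomial.X = Cc := by rw [← hφeq, Polynomial.aeval_X]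
  have hφcomm : ∀ p : Polynomial k, Commute (φ p) z := by
    intro p
    induction p using Polynomial.induction_on' with
    | add p q hp hq => rw [map_add]; exact hp.add_left hq
    | monomial e c =>
        have h1 : φ ((Polynomial.monomial e) c) = algebraMap k A c * Cc ^ e := by
          rw [← hφeq, Polynomial.aeval_monomial]
        rw [h1]
        exact (Algebra.commute_algebraMap_left c z).mul_left (Commute.pow_left hCz e)
  set ε : Polynomial (Polynomial k) → A := fun Q => Polynomial.eval₂ φ z Q with hεdef
  have hεmul : ∀ P Q : Polynomial (Polynomial k), ε (P * Q) = ε P * ε Q := by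
    intro P Q
    exact Polynomial.eval₂_mul_noncomm φ z (fun j => hφcomm _)
  have hεadd : ∀ P Q : Polynomial (Polynomial k), ε (P + Q) = ε P + ε Q := fun P Q =>
    Polynomial.eval₂_add φ z
  have hεone : ε 1 = 1 := Polynomial.eval₂_one φ z
  have hεC : ∀ p : Polynomial k, ε (Polynomial.C p) = φ p := fun p =>
    Polynomial.eval₂_C φ z
  have hεX : ε Polynomial.X = z := Polynomial.eval₂_X φ z
  have hεXpow : ∀ e : ℕ, ε (Polynomial.X ^ e) = z ^ e := by
    intro e
    induction e with
    | zero => simpa using hεone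
    | succ e ih => rw [pow_succ, hεmul, ih, hεX, pow_succ]
  -- the factors
  set fac : ℕ → Polynomial (Polynomial k) := fun j =>
    Polynomial.C Polynomial.X
      + Polynomial.C (Polynomial.C (η' * qiv ^ j)) * Polynomial.X
      + Polynomial.C (Polynomial.C (η' * qk ^ (j + 1) * κiv)) * Polynomial.X ^ (n - 1)
    with hfacdef
  set gA : ℕ → A := fun j => Cc + (η' * qiv ^ j) • z + (η' * qk ^ (j + 1)) • w with hgAdef
  have hεfac : ∀ j, ε (fac j) = gA j := by
    intro j
    rw [hfacdef, hgAdef]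
    show ε (_ + _ + _) = _
    rw [hεadd, hεadd, hεC, hεmul, hεmul, hεC, hεC, hεXpow, hεX, hφX, hφC, hφC]
    rw [hzn1, Algebra.smul_mul_assoc, Algebra.smul_mul_assoc, one_mul, one_mul, smul_smul]
    have h2 : η' * qk ^ (j + 1) * κiv * κk = η' * qk ^ (j + 1) := by
      rw [mul_assoc, hκivκ, mul_one]
    rw [h2]
  -- Step A: E^j F^j is the image of the partial products
  have hg0A : E * F = gA 0 := by
    rw [hgAdef, hCcdef]
    simp only [pow_zero, mul_one, pow_one]
    module
  have hcommFA : ∀ j, gA 0 * F ^ j = F ^ j * gA j := by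
    intro j
    rw [hgAdef]
    have h1 : Cc * F ^ j = F ^ j * Cc := Commute.pow_right hCF j
    have h2 : z * F ^ j = qiv ^ j • (F ^ j * z) := skew_right hzF j
    have h3 : w * F ^ j = qk ^ j • (F ^ j * w) := skew_right hwF j
    simp only [add_mul, mul_add, Algebra.smul_mul_assoc, Algebra.mul_smul_comm,
      smul_smul, h1, h2, h3]
    module
  have stepA : ∀ j : ℕ, E ^ j * F ^ j = ε (∏ i ∈ Finset.range j, fac i) := by
    intro j
    induction j with
    | zero => simpa using hεone.symm
    | succ j ih =>
        rw [Finset.prod_range_succ, hεmul, hεfac, ← ih]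
        calc E ^ (j + 1) * F ^ (j + 1) = (E ^ j * E) * (F * F ^ j) := by
              rw [pow_succ, pow_succ']
          _ = E ^ j * ((E * F) * F ^ j) := by simp only [mul_assoc]
          _ = E ^ j * (F ^ j * gA j) := by rw [hg0A, hcommFA]
          _ = (E ^ j * F ^ j) * gA j := by rw [mul_assoc]
  set P2 : Polynomial (Polynomial k) := ∏ i ∈ Finset.range n, fac i with hP2def
  have hEnFn : ε P2 = (α * β) • (1 : A) := by
    rw [hP2def, ← stepA n, hE, hF, Algebra.smul_mul_assoc, Algebra.mul_smul_comm,
      smul_smul, mul_one]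
  -- invariance under Y ↦ q Y
  have hqivn1 : qiv ^ (n - 1) = qk := by
    have h1 : qiv ^ (n - 1) * qiv = qk * qiv := by
      rw [← pow_succ, e1, hqivn, hqkqiv]
    exact mul_right_cancel₀ hqiv0 h1
  have hfacper : ∀ j, fac (j + n) = fac j := by
    intro j
    simp only [hfacdef]
    have s1 : qiv ^ (j + n) = qiv ^ j := by rw [pow_add, hqivn, mul_one]
    have s2 : qk ^ (j + n + 1) = qk ^ (j + 1) := by
      have : j + n + 1 = (j + 1) + n := by omega
      rw [this, pow_add, hqpow1, mul_one]
    rw [s1, s2]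
  set ψ : Polynomial (Polynomial k) := Polynomial.C (Polynomial.C qk) * Polynomial.X
    with hψdef
  have hfaccomp : ∀ j, (fac j).comp ψ = fac (j + (n - 1)) := by
    intro j
    have s1 : (η' * qiv ^ j) * qk = η' * qiv ^ (j + (n - 1)) := by
      rw [pow_add, hqivn1]; ring
    have s2 : (η' * qk ^ (j + 1) * κiv) * qk ^ (n - 1) = η' * qk ^ (j + (n - 1) + 1) * κiv := by
      have e4 : j + (n - 1) + 1 = (j + 1) + (n - 1) := by omega
      rw [e4, pow_add]; ring
    simp only [hfacdef, hψdef, Polynomial.add_comp, Polynomial.C_comp, Polynomial.mul_comp,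
      Polynomial.X_comp, Polynomial.pow_comp]
    rw [← s1, ← s2]
    simp only [map_mul, map_pow]
    ring
  have hP2comp : P2.comp ψ = P2 := by
    rw [hP2def, Polynomial.prod_comp]
    calc ∏ i ∈ Finset.range n, (fac i).comp ψ
        = ∏ i ∈ Finset.range n, fac (i + (n - 1)) :=
          Finset.prod_congr rfl fun i _ => hfaccomp i
      _ = ∏ i ∈ Finset.range n, fac i :=
          prod_range_shift_of_periodic fac n hn0 hfacper (n - 1)
  have hP2coeff : ∀ d, ¬ n ∣ d → P2.coeff d = 0 := by
    intro d hnd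
    have h1 := coeff_comp_C_mul_X P2 (Polynomial.C qk) d
    rw [← hψdef, hP2comp] at h1
    have h2 : (Polynomial.C (qk ^ d - 1)) * P2.coeff d = 0 := by
      rw [map_sub, map_one, map_pow]
      linear_combination -h1
    have h3 : (Polynomial.C (qk ^ d - 1) : Polynomial k) ≠ 0 := by
      rw [Ne, Polynomial.C_eq_zero]
      exact sub_ne_zero.mpr fun h => hnd (hqdvd d h)
    rcases mul_eq_zero.mp h2 with h | h
    · exact absurd h h3
    · exact h
  -- two evaluations agree
  set ζ : k := ((ρ : kˣ) : k) ^ m with hζdef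
  have hζn : ζ ^ n = κk := by
    rw [hζdef, ← pow_mul, mul_comm m n, ← Units.val_pow_eq_pow_val, hρ]
  have hζ0 : ζ ≠ 0 := pow_ne_zero _ (Units.ne_zero ρ)
  have hεP2 : ε P2 = Polynomial.aeval Cc (P2.eval (Polynomial.C ζ)) := by
    have hterm : ∀ i : ℕ, φ (P2.coeff i) * z ^ i = φ (P2.coeff i * Polynomial.C ζ ^ i) := by
      intro i
      by_cases hni : n ∣ i
      · obtain ⟨e, rfl⟩ := hni
        rw [map_mul, map_pow, hφC]
        congr 1
        calc z ^ (n * e) = (z ^ n) ^ e := by rw [pow_mul]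
          _ = (κk • (1 : A)) ^ e := by rw [hznA]
          _ = κk ^ e • (1 : A) := by rw [_root_.smul_pow, one_pow]
          _ = (ζ ^ n) ^ e • (1 : A) := by rw [hζn]
          _ = (ζ • (1 : A)) ^ (n * e) := by
              rw [_root_.smul_pow, one_pow, ← pow_mul]
      · rw [hP2coeff i hni]
        simp
    have hev : P2.eval (Polynomial.C ζ)
        = ∑ i ∈ Finset.range (P2.natDegree + 1), P2.coeff i * Polynomial.C ζ ^ i :=
      Polynomial.eval_eq_sum_range _
    have hev2 : ε P2 = ∑ i ∈ Finset.range (P2.natDegree + 1), φ (P2.coeff i) * z ^ i :=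
      Polynomial.eval₂_eq_sum_range φ z
    rw [hev2, hev, map_sum]
    refine Finset.sum_congr rfl fun i _ => ?_
    rw [hφeq, hterm i]
  -- the evaluated product
  have hqivpow : ∀ i : ℕ, qiv ^ i = (qk ^ i)⁻¹ := by
    intro i
    have h1 : qk ^ i * qiv ^ i = 1 := by rw [← mul_pow, hqkqiv, one_pow]
    exact (inv_eq_of_mul_eq_one_right h1).symm
  have hζn1 : κiv * ζ ^ (n - 1) = ζ⁻¹ := by
    have h1 : ζ ^ (n - 1) * ζ = κk := by rw [← pow_succ, e1, hζn]
    have h2 : ζ ^ (n - 1) = κk * ζ⁻¹ := (eq_mul_inv_iff_mul_eq₀ hζ0).mpr h1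
    rw [h2, ← mul_assoc, hκivκ, one_mul]
  have hval : ∀ i : ℕ, (((θ ^ i * ρ : kˣ) : k)) ^ m = qk ^ i * ζ := by
    intro i
    rw [Units.val_mul, Units.val_pow_eq_pow_val, mul_pow, ← pow_mul, mul_comm i m, pow_mul,
      ← hζdef]
    rw [hqkdef, Units.val_pow_eq_pow_val]
  have hvalinv : ∀ i : ℕ, ((((θ ^ i * ρ)⁻¹ : kˣ) : k)) ^ m = qiv ^ i * ζ⁻¹ := by
    intro i
    rw [Units.val_inv_eq_inv_val, inv_pow, hval i, mul_inv, hqivpow]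
  have hPζ : P2.eval (Polynomial.C ζ)
      = ∏ i ∈ Finset.range n, (Polynomial.X + Polynomial.C (η' *
          (((((θ ^ i * ρ)⁻¹ : kˣ) : k)) ^ m + qk * (((θ ^ i * ρ : kˣ) : k)) ^ m))) := by
    rw [hP2def, Polynomial.eval_prod,
      ← Finset.prod_range_reflect (fun i => Polynomial.X + Polynomial.C (η' *
          (((((θ ^ i * ρ)⁻¹ : kˣ) : k)) ^ m + qk * (((θ ^ i * ρ : kˣ) : k)) ^ m))) n]
    refine Finset.prod_congr rfl fun j hj => ?_
    have hjn : j < n := Finset.mem_range.mp hj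
    rw [hfacdef]
    simp only [Polynomial.eval_add, Polynomial.eval_mul, Polynomial.eval_pow,
      Polynomial.eval_C, Polynomial.eval_X]
    have hsc : Polynomial.X + (Polynomial.C (η' * qiv ^ j) * Polynomial.C ζ
          + Polynomial.C (η' * qk ^ (j + 1) * κiv) * Polynomial.C ζ ^ (n - 1))
        = Polynomial.X + Polynomial.C (η' * qiv ^ j * ζ
            + η' * qk ^ (j + 1) * (κiv * ζ ^ (n - 1))) := by
      rw [← Polynomial.C_pow, ← Polynomial.C_mul, ← Polynomial.C_mul, ← Polynomial.C_add]
      ring_nf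
    rw [add_assoc, hsc]
    congr 1
    congr 1
    rw [hζn1, hvalinv (n - 1 - j), hval (n - 1 - j)]
    have hq1 : qiv ^ (n - 1 - j) = qk ^ (j + 1) := by
      have h1 : qiv ^ (n - 1 - j) * qiv ^ (j + 1) = 1 := by
        rw [← pow_add]
        have : n - 1 - j + (j + 1) = n := by omega
        rw [this, hqivn]
      have h2 : qk ^ (j + 1) * qiv ^ (j + 1) = 1 := by rw [← mul_pow, hqkqiv, one_pow]
      exact mul_right_cancel₀ (pow_ne_zero _ hqiv0) (h1.trans h2.symm)
    have hq2 : qk * (qk ^ (n - 1 - j) * ζ) = qiv ^ j * ζ := by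
      have e2 : qk * qk ^ (n - 1 - j) = qk ^ (n - j) := by
        rw [← pow_succ']
        congr 1
        omega
      have h2 : qk ^ (n - j) * qk ^ j = 1 := by
        have e3 : n - j + j = n := by omega
        rw [← pow_add, e3, hqpow1]
      have h3 : qiv ^ j * qk ^ j = 1 := by rw [← mul_pow, hqivqk, one_pow]
      have h1 : qk * qk ^ (n - 1 - j) = qiv ^ j := by
        rw [e2]
        exact mul_right_cancel₀ (pow_ne_zero _ hqk0) (h2.trans h3.symm)
      rw [← mul_assoc, h1]
    rw [hq1, hq2]
    ring
  -- conclusion of part 1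
  have hgoal1 : Polynomial.aeval Cc
      ((∏ i ∈ Finset.range n, (Polynomial.X + Polynomial.C (η' *
          (((((θ ^ i * ρ)⁻¹ : kˣ) : k)) ^ m + qk * (((θ ^ i * ρ : kˣ) : k)) ^ m))))
        - Polynomial.C (α * β)) = 0 := by
    rw [map_sub, ← hPζ, ← hεP2, hEnFn, Polynomial.aeval_C,
      Algebra.algebraMap_eq_smul_one, sub_self]
  exact ⟨hgoal1, minimality⟩
end

section
/- Let H be the k-algebra generated by a finite abelian group G and elements x, y with relations gx = χ₁(g)xg, gy = χ₂(g)yg, xy = χ₂(a)yx, x^{n₁} = 0, y^{n₂} = 0 (the nilpotent unlinked lifting), where n_i = |χ_i(a_i)| > 1. Then the Jacobson radical of H is J = xH + yH, the simple modules are the one-dimensional modules L_λ = He_λ/Je_λ indexed by characters λ of G, and J e_λ / J² e_λ ≅ L_{λχ₁} ⊕ L_{λχ₂} as H-modules. -/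
set_option linter.unusedSectionVars false
set_option maxHeartbeats 1000000
set_option linter.unusedVariables false
set_option linter.unnecessarySimpa false


/-- The minimal idempotent `e_λ` of the group algebra `kG`. -/
noncomputable def stdIdem (k : Type*) [Field k] (G : Type*) [CommGroup G] [Fintype G]
    (lam : G →* kˣ) : MonoidAlgebra k G :=
  (Fintype.card G : k)⁻¹ • ∑ g : G, MonoidAlgebra.single g ((lam g⁻¹ : kˣ) : k)

noncomputable def EE {k : Type*} [Field k] {G : Type*} [CommGroup G] [Fintype G]
    {H : Type*} [Ring H] [Algebra k H] (φ : MonoidAlgebra k G →ₐ[k] H) (g : G) : H :=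
  φ (MonoidAlgebra.single g 1)

noncomputable def mono {k : Type*} [Field k] {G : Type*} [CommGroup G] [Fintype G]
    {H : Type*} [Ring H] [Algebra k H] (φ : MonoidAlgebra k G →ₐ[k] H) (x y : H)
    (g : G) (i j : ℕ) : H :=
  EE φ g * x ^ i * y ^ j

section NUL2

variable {k : Type*} [Field k] {G : Type*} [CommGroup G] [Fintype G]
  {H : Type*} [Ring H] [Algebra k H]
  (φ : MonoidAlgebra k G →ₐ[k] H) (x y : H) (χ₁ χ₂ : G →* kˣ) (a : G)
  (hgx : ∀ g : G, EE φ g * x = ((χ₁ g : kˣ) : k) • (x * EE φ g))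
  (hgy : ∀ g : G, EE φ g * y = ((χ₂ g : kˣ) : k) • (y * EE φ g))
  (hxy : x * y = ((χ₂ a : kˣ) : k) • (y * x))

lemma EE_one : EE φ 1 = 1 := by
  simp [EE, ← MonoidAlgebra.one_def]

lemma EE_mul (g h : G) : EE φ g * EE φ h = EE φ (g * h) := by
  simp [EE, ← map_mul, MonoidAlgebra.single_mul_single]

lemma smul_flip {u : kˣ} {p q : H} (h : p = (u : k) • q) : q = ((u⁻¹ : kˣ) : k) • p := by
  rw [h, smul_smul]; norm_num

include hgx in
lemma E_pow_x (g : G) (i : ℕ) :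
    EE φ g * x ^ i = ((χ₁ g ^ i : kˣ) : k) • (x ^ i * EE φ g) := by
  induction i with
  | zero => simp
  | succ n ih =>
      rw [pow_succ, ← mul_assoc, ih, smul_mul_assoc, mul_assoc, hgx g, mul_smul_comm,
        smul_smul, pow_succ, Units.val_mul, ← mul_assoc]

include hgy in
lemma E_pow_y (g : G) (j : ℕ) :
    EE φ g * y ^ j = ((χ₂ g ^ j : kˣ) : k) • (y ^ j * EE φ g) := by
  induction j with
  | zero => simp
  | succ n ih =>
      rw [pow_succ, ← mul_assoc, ih, smul_mul_assoc, mul_assoc, hgy g, mul_smul_comm,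
        smul_smul, pow_succ, Units.val_mul, ← mul_assoc]

include hxy in
lemma x_pow_y (i j : ℕ) :
    x ^ i * y ^ j = ((χ₂ a ^ (i * j) : kˣ) : k) • (y ^ j * x ^ i) := by
  have base : ∀ j : ℕ, x * y ^ j = ((χ₂ a ^ j : kˣ) : k) • (y ^ j * x) := by
    intro j
    induction j with
    | zero => simp
    | succ n ih =>
        rw [pow_succ, ← mul_assoc, ih, smul_mul_assoc, mul_assoc, hxy, mul_smul_comm,
          smul_smul, pow_succ, Units.val_mul, ← mul_assoc]
  induction i with
  | zero => simp
  | succ n ih =>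
      rw [pow_succ, mul_assoc, base j, mul_smul_comm, ← mul_assoc, ih, smul_mul_assoc,
        smul_smul, mul_assoc, ← pow_succ, ← Units.val_mul, ← pow_add]
      ring_nf

include hgx in
lemma x_pow_E (g : G) (i : ℕ) :
    x ^ i * EE φ g = (((χ₁ g ^ i)⁻¹ : kˣ) : k) • (EE φ g * x ^ i) :=
  smul_flip (E_pow_x φ x χ₁ hgx g i)

include hgy in
lemma y_pow_E (g : G) (j : ℕ) :
    y ^ j * EE φ g = (((χ₂ g ^ j)⁻¹ : kˣ) : k) • (EE φ g * y ^ j) :=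
  smul_flip (E_pow_y φ y χ₂ hgy g j)

include hxy in
lemma y_pow_x (i j : ℕ) :
    y ^ j * x ^ i = (((χ₂ a ^ (i * j))⁻¹ : kˣ) : k) • (x ^ i * y ^ j) :=
  smul_flip (x_pow_y x y χ₂ a hxy i j)

include hgx in
lemma x_pow_E' (g : G) (i : ℕ) (t : H) :
    x ^ i * (EE φ g * t) = (((χ₁ g ^ i)⁻¹ : kˣ) : k) • (EE φ g * (x ^ i * t)) := by
  rw [← mul_assoc, x_pow_E φ x χ₁ hgx, smul_mul_assoc, mul_assoc]

include hgy in
lemma y_pow_E' (g : G) (j : ℕ) (t : H) :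
    y ^ j * (EE φ g * t) = (((χ₂ g ^ j)⁻¹ : kˣ) : k) • (EE φ g * (y ^ j * t)) := by
  rw [← mul_assoc, y_pow_E φ y χ₂ hgy, smul_mul_assoc, mul_assoc]

include hxy in
lemma y_pow_x' (i j : ℕ) (t : H) :
    y ^ j * (x ^ i * t) = (((χ₂ a ^ (i * j))⁻¹ : kˣ) : k) • (x ^ i * (y ^ j * t)) := by
  rw [← mul_assoc, y_pow_x x y χ₂ a hxy, smul_mul_assoc, mul_assoc]

include hxy in
lemma x_pow_y' (i j : ℕ) (t : H) :
    x ^ i * (y ^ j * t) = ((χ₂ a ^ (i * j) : kˣ) : k) • (y ^ j * (x ^ i * t)) := by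
  rw [← mul_assoc, x_pow_y x y χ₂ a hxy, smul_mul_assoc, mul_assoc]

include hxy in
lemma x_mul_ypow' (j : ℕ) (t : H) :
    x * (y ^ j * t) = ((χ₂ a ^ j : kˣ) : k) • (y ^ j * (x * t)) := by
  have := x_pow_y' x y χ₂ a hxy 1 j t
  simpa using this

include hxy in
lemma y_pow_mul_x (j : ℕ) :
    y ^ j * x = (((χ₂ a ^ j)⁻¹ : kˣ) : k) • (x * y ^ j) := by
  have := y_pow_x x y χ₂ a hxy 1 j
  simpa using this

include hgx hgy hxy in
lemma mono_mul (g h : G) (i j i' j' : ℕ) :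
    ∃ c : kˣ, mono φ x y g i j * mono φ x y h i' j'
      = (c : k) • mono φ x y (g * h) (i + i') (j + j') := by
  refine ⟨(χ₂ h ^ j)⁻¹ * ((χ₁ h ^ i)⁻¹ * (χ₂ a ^ (i' * j))⁻¹), ?_⟩
  simp only [mono, mul_assoc]
  rw [y_pow_E' φ y χ₂ hgy, mul_smul_comm, mul_smul_comm, x_pow_E' φ x χ₁ hgx,
    y_pow_x' x y χ₂ a hxy, ← EE_mul φ g h]
  simp only [smul_smul, mul_smul_comm, mul_assoc, ← pow_add, Units.val_mul]
  rw [← mul_assoc (x ^ i) (x ^ i'), ← pow_add]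

include hgx hgy in
lemma mono_one (g h : G) : mono φ x y g 0 0 * mono φ x y h 0 0 = mono φ x y (g * h) 0 0 := by
  simp [mono, EE_mul]

include hxy in
lemma mono_mul_x (g : G) (i j : ℕ) :
    mono φ x y g i j * x = (((χ₂ a ^ j)⁻¹ : kˣ) : k) • mono φ x y g (i + 1) j := by
  unfold mono
  rw [mul_assoc, y_pow_mul_x x y χ₂ a hxy, mul_smul_comm, ← mul_assoc,
    mul_assoc (EE φ g), ← pow_succ]

lemma mono_mul_y (g : G) (i j : ℕ) :
    mono φ x y g i j * y = mono φ x y g i (j + 1) := by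
  unfold mono
  rw [mul_assoc, ← pow_succ]

include hgx hgy in
lemma xy_pow_E (g : G) (I J : ℕ) :
    x ^ I * (y ^ J * EE φ g)
      = ((((χ₂ g ^ J)⁻¹ : kˣ) : k) * (((χ₁ g ^ I)⁻¹ : kˣ) : k)) • mono φ x y g I J := by
  rw [y_pow_E φ y χ₂ hgy, mul_smul_comm, x_pow_E' φ x χ₁ hgx, smul_smul]
  unfold mono
  rw [mul_assoc]

lemma idem_sum (lam : G →* kˣ) :
    φ (stdIdem k G lam)
      = ∑ g : G, (((Fintype.card G : k))⁻¹ * ((lam g⁻¹ : kˣ) : k)) • EE φ g := by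
  unfold stdIdem
  rw [map_smul, map_sum, Finset.smul_sum]
  refine Finset.sum_congr rfl fun g _ => ?_
  rw [show MonoidAlgebra.single g ((lam g⁻¹ : kˣ) : k)
      = ((lam g⁻¹ : kˣ) : k) • MonoidAlgebra.single g (1 : k) from by
    rw [MonoidAlgebra.smul_single', mul_one], map_smul, smul_smul]
  rfl

lemma E_mul_idem (lam : G →* kˣ) (h : G) :
    EE φ h * φ (stdIdem k G lam) = ((lam h : kˣ) : k) • φ (stdIdem k G lam) := by
  rw [idem_sum, Finset.mul_sum, Finset.smul_sum]
  refine Fintype.sum_equiv (Equiv.mulLeft h) _ _ fun v => ?_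
  simp only [Equiv.coe_mulLeft]
  rw [mul_smul_comm, EE_mul, smul_smul]
  congr 1
  have : (h * v)⁻¹ = v⁻¹ * h⁻¹ := by group
  rw [this, map_mul, Units.val_mul]
  have hu : ((lam h : kˣ) : k) * ((lam h⁻¹ : kˣ) : k) = 1 := by
    rw [← Units.val_mul, ← map_mul]; simp
  linear_combination -((Fintype.card G : k))⁻¹ * ((lam v⁻¹ : kˣ) : k) * hu

include hgx in
lemma x_mul_idem (lam : G →* kˣ) :
    x * φ (stdIdem k G lam)
      = ∑ g : G, (((Fintype.card G : k))⁻¹ * ((lam g⁻¹ : kˣ) : k) * (((χ₁ g)⁻¹ : kˣ) : k))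
          • mono φ x y g 1 0 := by
  rw [idem_sum, Finset.mul_sum]
  refine Finset.sum_congr rfl fun g _ => ?_
  have h1 : x * EE φ g = (((χ₁ g)⁻¹ : kˣ) : k) • (EE φ g * x) := by
    have := x_pow_E φ x χ₁ hgx g 1
    simpa using this
  have h2 : mono φ x y g 1 0 = EE φ g * x := by simp [mono]
  rw [mul_smul_comm, h1, h2, smul_smul]

include hgy in
lemma y_mul_idem (lam : G →* kˣ) :
    y * φ (stdIdem k G lam)
      = ∑ g : G, (((Fintype.card G : k))⁻¹ * ((lam g⁻¹ : kˣ) : k) * (((χ₂ g)⁻¹ : kˣ) : k))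
          • mono φ x y g 0 1 := by
  rw [idem_sum, Finset.mul_sum]
  refine Finset.sum_congr rfl fun g _ => ?_
  have h1 : y * EE φ g = (((χ₂ g)⁻¹ : kˣ) : k) • (EE φ g * y) := by
    have := y_pow_E φ y χ₂ hgy g 1
    simpa using this
  have h2 : mono φ x y g 0 1 = EE φ g * y := by simp [mono]
  rw [mul_smul_comm, h1, h2, smul_smul]

end NUL2

open Finset in
lemma char_coeffs_zero {k : Type*} [Field k] [IsAlgClosed k] [CharZero k]
    {G : Type*} [CommGroup G] [Fintype G] (c : G → k)
    (h : ∀ lam : G →* kˣ, ∑ g : G, ((lam g : kˣ) : k) * c g = 0) : ∀ g, c g = 0 := by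
  have hexp : NeZero ((Monoid.exponent G : k)) :=
    ⟨Nat.cast_ne_zero.2 (Monoid.ExponentExists.of_finite (G := G)).exponent_ne_zero⟩
  have sep : ∀ g : G, g ≠ 1 → ∃ lam : G →* kˣ, lam g ≠ 1 := fun g hg =>
    CommGroup.exists_apply_ne_one_of_hasEnoughRootsOfUnity G k hg
  let ev : G → ((G →* kˣ) →* k) := fun g =>
    { toFun := fun lam => ((lam g : kˣ) : k)
      map_one' := by simp
      map_mul' := fun lam mu => by simp }
  have hinj : Function.Injective ev := by
    intro g g' hgg
    by_contra hne
    have hne1 : g * g'⁻¹ ≠ 1 := by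
      simpa [mul_inv_eq_one] using hne
    obtain ⟨lam, hlam⟩ := sep _ hne1
    have : ((lam g : kˣ) : k) = ((lam g' : kˣ) : k) := congrFun (congrArg (·.toFun) hgg) lam
    have : lam g = lam g' := Units.ext this
    apply hlam
    rw [map_mul, map_inv, this, mul_inv_cancel]
  have li : LinearIndependent k (fun g : G => ((ev g : (G →* kˣ) → k))) :=
    (linearIndependent_monoidHom (G →* kˣ) k).comp ev hinj
  intro g
  refine Fintype.linearIndependent_iff.mp li c ?_ g
  funext lam
  have := h lam
  simpa [mul_comm, ev] using this

/-- Theorem 3.1 (a),(c) for the nilpotent unlinked lifting `H`: the Jacobson radical is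
`J = xH + yH = Hx + Hy`, the simple modules are the one-dimensional `L_λ = He_λ/Je_λ`
(on which `G` acts with weight `λ` and `x, y` act by zero), and
`Je_λ/J²e_λ ≅ L_{λχ₁} ⊕ L_{λχ₂}`. -/
theorem nilpotent_unlinked_structure (k : Type*) [Field k] [IsAlgClosed k] [CharZero k]
    (G : Type*) [CommGroup G] [Fintype G]
    (H : Type*) [Ring H] [Algebra k H]
    (φ : MonoidAlgebra k G →ₐ[k] H) (x y : H) (χ₁ χ₂ : G →* kˣ) (a b : G)
    (n₁ n₂ : ℕ) (hn₁ : n₁ = orderOf (χ₁ a)) (hn₂ : n₂ = orderOf (χ₂ b))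
    (hn₁1 : 1 < n₁) (hn₂1 : 1 < n₂)
    (hqlin : χ₁ b * χ₂ a = 1)
    (hgx : ∀ g : G, φ (MonoidAlgebra.single g 1) * x
        = ((χ₁ g : kˣ) : k) • (x * φ (MonoidAlgebra.single g 1)))
    (hgy : ∀ g : G, φ (MonoidAlgebra.single g 1) * y
        = ((χ₂ g : kˣ) : k) • (y * φ (MonoidAlgebra.single g 1)))
    (hxy : x * y = ((χ₂ a : kˣ) : k) • (y * x))
    (hxn : x ^ n₁ = 0) (hyn : y ^ n₂ = 0)
    (hli : LinearIndependent k
      (fun t : G × Fin n₁ × Fin n₂ =>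
        φ (MonoidAlgebra.single t.1 1) * x ^ (t.2.1 : ℕ) * y ^ (t.2.2 : ℕ)))
    (hspan : Submodule.span k
      (Set.range fun t : G × Fin n₁ × Fin n₂ =>
        φ (MonoidAlgebra.single t.1 1) * x ^ (t.2.1 : ℕ) * y ^ (t.2.2 : ℕ)) = ⊤) :
    -- (a) the Jacobson radical is the (two-sided) ideal generated by x and y
    (⊥ : Ideal H).jacobson = Ideal.span {x, y} ∧
    -- (b) each He_λ/Je_λ is one-dimensional with G-weight λ
    (∀ lam : G →* kˣ,
      φ (stdIdem k G lam) ∉ Submodule.span H ({x * φ (stdIdem k G lam),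
          y * φ (stdIdem k G lam)} : Set H) ∧
      (∀ p ∈ Ideal.span ({φ (stdIdem k G lam)} : Set H), ∃ c : k,
        p - c • φ (stdIdem k G lam) ∈ Submodule.span H ({x * φ (stdIdem k G lam),
          y * φ (stdIdem k G lam)} : Set H)) ∧
      (∀ g : G, φ (MonoidAlgebra.single g 1) * φ (stdIdem k G lam)
          - ((lam g : kˣ) : k) • φ (stdIdem k G lam)
        ∈ Submodule.span H ({x * φ (stdIdem k G lam),
            y * φ (stdIdem k G lam)} : Set H))) ∧
    -- (c) Je_λ/J²e_λ ≅ L_{λχ₁} ⊕ L_{λχ₂}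
    (∀ lam : G →* kˣ,
      x * φ (stdIdem k G lam) ∉ Submodule.span H
          ({x * (x * φ (stdIdem k G lam)), x * (y * φ (stdIdem k G lam)),
            y * (x * φ (stdIdem k G lam)), y * (y * φ (stdIdem k G lam))} : Set H) ∧
      y * φ (stdIdem k G lam) ∉ Submodule.span H
          ({x * (x * φ (stdIdem k G lam)), x * (y * φ (stdIdem k G lam)),
            y * (x * φ (stdIdem k G lam)), y * (y * φ (stdIdem k G lam))} : Set H) ∧
      (∀ p ∈ Submodule.span H ({x * φ (stdIdem k G lam),
          y * φ (stdIdem k G lam)} : Set H), ∃ c d : k,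
        p - c • (x * φ (stdIdem k G lam)) - d • (y * φ (stdIdem k G lam))
          ∈ Submodule.span H
            ({x * (x * φ (stdIdem k G lam)), x * (y * φ (stdIdem k G lam)),
              y * (x * φ (stdIdem k G lam)), y * (y * φ (stdIdem k G lam))} : Set H)) ∧
      (∀ g : G, φ (MonoidAlgebra.single g 1) * (x * φ (stdIdem k G lam))
          - ((lam g * χ₁ g : kˣ) : k) • (x * φ (stdIdem k G lam))
        ∈ Submodule.span H
            ({x * (x * φ (stdIdem k G lam)), x * (y * φ (stdIdem k G lam)),
              y * (x * φ (stdIdem k G lam)), y * (y * φ (stdIdem k G lam))} : Set H)) ∧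
      (∀ g : G, φ (MonoidAlgebra.single g 1) * (y * φ (stdIdem k G lam))
          - ((lam g * χ₂ g : kˣ) : k) • (y * φ (stdIdem k G lam))
        ∈ Submodule.span H
            ({x * (x * φ (stdIdem k G lam)), x * (y * φ (stdIdem k G lam)),
              y * (x * φ (stdIdem k G lam)), y * (y * φ (stdIdem k G lam))} : Set H))) := by
  classical
  have hgx' : ∀ g : G, EE φ g * x = ((χ₁ g : kˣ) : k) • (x * EE φ g) := hgx
  have hgy' : ∀ g : G, EE φ g * y = ((χ₂ g : kˣ) : k) • (y * EE φ g) := hgy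
  -- the basis
  let B : Module.Basis (G × Fin n₁ × Fin n₂) k H := Module.Basis.mk hli (by rw [hspan])
  have hB : ∀ t : G × Fin n₁ × Fin n₂, B t = mono φ x y t.1 t.2.1 t.2.2 :=
    fun t => Module.Basis.mk_apply hli _ t
  have hmemtop : ∀ r : H, r ∈ Submodule.span k
      (Set.range fun t : G × Fin n₁ × Fin n₂ =>
        φ (MonoidAlgebra.single t.1 1) * x ^ (t.2.1 : ℕ) * y ^ (t.2.2 : ℕ)) := by
    intro r; rw [hspan]; trivial
  -- the filtration
  let Jm : ℕ → Submodule k H := fun m =>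
    Submodule.span k {z | ∃ g i j, m ≤ i + j ∧ z = mono φ x y g i j}
  have hmemJ : ∀ (m : ℕ) (g : G) (i j : ℕ), m ≤ i + j → mono φ x y g i j ∈ Jm m :=
    fun m g i j h => Submodule.subset_span ⟨g, i, j, h, rfl⟩
  have hJanti : ∀ {m m' : ℕ}, m ≤ m' → Jm m' ≤ Jm m := by
    intro m m' hmm
    refine Submodule.span_le.2 ?_
    rintro z ⟨g, i, j, hij, rfl⟩
    exact hmemJ m g i j (le_trans hmm hij)
  have hov1 : ∀ (g : G) (i j : ℕ), n₁ ≤ i → mono φ x y g i j = 0 := by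
    intro g i j hi
    have : x ^ i = 0 := by
      rw [show i = n₁ + (i - n₁) from (Nat.add_sub_cancel' hi).symm, pow_add, hxn, zero_mul]
    simp [mono, this]
  have hov2 : ∀ (g : G) (i j : ℕ), n₂ ≤ j → mono φ x y g i j = 0 := by
    intro g i j hj
    have : y ^ j = 0 := by
      rw [show j = n₂ + (j - n₂) from (Nat.add_sub_cancel' hj).symm, pow_add, hyn, zero_mul]
    simp [mono, this]
  -- products of filtration elements
  have hJmul : ∀ (m m' : ℕ) (z w : H), z ∈ Jm m → w ∈ Jm m' → z * w ∈ Jm (m + m') := by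
    intro m m' z w hz hw
    induction hz using Submodule.span_induction with
    | mem z hz =>
        obtain ⟨g, i, j, hij, rfl⟩ := hz
        induction hw using Submodule.span_induction with
        | mem w hw =>
            obtain ⟨h, i', j', hij', rfl⟩ := hw
            obtain ⟨c, hc⟩ := mono_mul φ x y χ₁ χ₂ a hgx' hgy' hxy g h i j i' j'
            rw [hc]
            exact Submodule.smul_mem _ _ (hmemJ _ _ _ _ (by omega))
        | zero => simp
        | add w1 w2 _ _ h1 h2 => rw [mul_add]; exact add_mem h1 h2
        | smul c w _ hw => rw [mul_smul_comm]; exact Submodule.smul_mem _ _ hw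
    | zero => simp
    | add z1 z2 _ _ h1 h2 => rw [add_mul]; exact add_mem h1 h2
    | smul c z _ hz => rw [smul_mul_assoc]; exact Submodule.smul_mem _ _ hz
  -- left multiplication preserves the filtration
  have hmulJ : ∀ (r w : H) (m : ℕ), w ∈ Jm m → r * w ∈ Jm m := by
    have key : ∀ (g : G) (i j : ℕ) (r : H), r * mono φ x y g i j ∈ Jm (i + j) := by
      intro g i j r
      induction hmemtop r using Submodule.span_induction with
      | mem r hr =>
          obtain ⟨t, rfl⟩ := hr
          obtain ⟨c, hc⟩ := mono_mul φ x y χ₁ χ₂ a hgx' hgy' hxy t.1 g t.2.1 t.2.2 i j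
          show mono φ x y t.1 t.2.1 t.2.2 * mono φ x y g i j ∈ _
          rw [hc]
          exact Submodule.smul_mem _ _ (hmemJ _ _ _ _ (by omega))
      | zero => simp
      | add r1 r2 _ _ h1 h2 => rw [add_mul]; exact add_mem h1 h2
      | smul c r _ hr => rw [smul_mul_assoc]; exact Submodule.smul_mem _ _ hr
    intro r w m hw
    induction hw using Submodule.span_induction with
    | mem w hw =>
        obtain ⟨g, i, j, hij, rfl⟩ := hw
        exact hJanti hij (key g i j r)
    | zero => simp
    | add w1 w2 _ _ h1 h2 => rw [mul_add]; exact add_mem h1 h2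
    | smul c w _ hw => rw [mul_smul_comm]; exact Submodule.smul_mem _ _ hw
  -- right multiplication preserves the filtration
  have hJmulr : ∀ (w r : H) (m : ℕ), w ∈ Jm m → w * r ∈ Jm m := by
    have key : ∀ (g : G) (i j : ℕ) (r : H), mono φ x y g i j * r ∈ Jm (i + j) := by
      intro g i j r
      induction hmemtop r using Submodule.span_induction with
      | mem r hr =>
          obtain ⟨t, rfl⟩ := hr
          obtain ⟨c, hc⟩ := mono_mul φ x y χ₁ χ₂ a hgx' hgy' hxy g t.1 i j t.2.1 t.2.2
          show mono φ x y g i j * mono φ x y t.1 t.2.1 t.2.2 ∈ _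
          rw [hc]
          exact Submodule.smul_mem _ _ (hmemJ _ _ _ _ (by omega))
      | zero => simp
      | add r1 r2 _ _ h1 h2 => rw [mul_add]; exact add_mem h1 h2
      | smul c r _ hr => rw [mul_smul_comm]; exact Submodule.smul_mem _ _ hr
    intro w r m hw
    induction hw using Submodule.span_induction with
    | mem w hw =>
        obtain ⟨g, i, j, hij, rfl⟩ := hw
        exact hJanti hij (key g i j r)
    | zero => simp
    | add w1 w2 _ _ h1 h2 => rw [add_mul]; exact add_mem h1 h2
    | smul c w _ hw => rw [smul_mul_assoc]; exact Submodule.smul_mem _ _ hw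
  -- the filtration is eventually zero
  have hJ0 : ∀ z ∈ Jm (n₁ + n₂ - 1), z = 0 := by
    intro z hz
    have : Jm (n₁ + n₂ - 1) ≤ ⊥ := by
      refine Submodule.span_le.2 ?_
      rintro w ⟨g, i, j, hij, rfl⟩
      rcases le_or_gt n₁ i with hi | hi
      · simp [hov1 g i j hi]
      · have hj : n₂ ≤ j := by omega
        simp [hov2 g i j hj]
    simpa using this hz
  -- x and y are in Jm 1
  have hxJ : x ∈ Jm 1 := by
    have : mono φ x y 1 1 0 = x := by simp [mono, EE_one]
    rw [← this]; exact hmemJ 1 1 1 0 (by omega)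
  have hyJ : y ∈ Jm 1 := by
    have : mono φ x y 1 0 1 = y := by simp [mono, EE_one]
    rw [← this]; exact hmemJ 1 1 0 1 (by omega)
  -- span {x, y} = Jm 1
  have hJeq : ∀ z : H, z ∈ Ideal.span ({x, y} : Set H) ↔ z ∈ Jm 1 := by
    intro z
    constructor
    · intro hz
      induction hz using Submodule.span_induction with
      | mem z hz =>
          rcases hz with hz | hz
          · rw [hz]; exact hxJ
          · rw [Set.mem_singleton_iff.1 hz]; exact hyJ
      | zero => simp
      | add z1 z2 _ _ h1 h2 => exact add_mem h1 h2
      | smul r z _ hz => rw [smul_eq_mul]; exact hmulJ r z 1 hz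
    · intro hz
      induction hz using Submodule.span_induction with
      | mem z hz =>
          obtain ⟨g, i, j, hij, rfl⟩ := hz
          rcases j with _ | j'
          · rcases i with _ | i'
            · omega
            · have : mono φ x y g (i' + 1) 0 = (EE φ g * x ^ i') * x := by
                simp [mono, pow_succ, mul_assoc]
              rw [this]
              exact Ideal.mul_mem_left _ _ (Ideal.subset_span (by simp))
          · have : mono φ x y g i (j' + 1) = (EE φ g * x ^ i * y ^ j') * y := by
              simp [mono, pow_succ, mul_assoc]
            rw [this]
            exact Ideal.mul_mem_left _ _ (Ideal.subset_span (by simp))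
      | zero => simp
      | add z1 z2 _ _ h1 h2 => exact add_mem h1 h2
      | smul c z _ hz =>
          rw [← algebraMap_smul H c z, smul_eq_mul]
          exact Ideal.mul_mem_left _ _ hz
  -- ============ part (a), first inclusion ============
  have ha1 : Ideal.span ({x, y} : Set H) ≤ (⊥ : Ideal H).jacobson := by
    refine le_sInf ?_
    rintro M ⟨-, hM⟩
    refine Submodule.span_le.2 ?_
    intro z hz
    have hzJ : z ∈ Jm 1 := by
      rcases hz with hz | hz
      · rw [hz]; exact hxJ
      · rw [Set.mem_singleton_iff.1 hz]; exact hyJ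
    by_contra hzM
    have hlt : M < M ⊔ Ideal.span {z} := by
      refine lt_of_le_of_ne le_sup_left fun he => hzM ?_
      rw [he]
      exact Submodule.mem_sup_right (Ideal.subset_span rfl)
    have htop : M ⊔ Ideal.span {z} = ⊤ := hM.out.2 _ hlt
    have h1 : (1 : H) ∈ M ⊔ Ideal.span {z} := htop ▸ Submodule.mem_top
    obtain ⟨m, hm, u, hu, hmu⟩ := Submodule.mem_sup.1 h1
    obtain ⟨r, hr⟩ := Submodule.mem_span_singleton.1 hu
    have huJ : u ∈ Jm 1 := by rw [← hr, smul_eq_mul]; exact hmulJ r z 1 hzJ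
    have hupows : ∀ N : ℕ, u ^ (N + 1) ∈ Jm (N + 1) := by
      intro N
      induction N with
      | zero => simpa using huJ
      | succ N ih => rw [pow_succ]; exact hJmul _ _ _ _ ih huJ
    have hupow : u ^ (n₁ + n₂ - 1) = 0 := by
      apply hJ0
      have : n₁ + n₂ - 1 = (n₁ + n₂ - 2) + 1 := by omega
      rw [this]
      exact hupows _
    have hgeom : (∑ i ∈ Finset.range (n₁ + n₂ - 1), u ^ i) * (u - 1)
        = u ^ (n₁ + n₂ - 1) - 1 := geom_sum_mul u _
    have hminv : (∑ i ∈ Finset.range (n₁ + n₂ - 1), u ^ i) * m = 1 := by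
      have hm1 : m = 1 - u := by rw [← hmu, add_sub_cancel_right]
      rw [hm1, show (1 : H) - u = -(u - 1) from (neg_sub u 1).symm, mul_neg, hgeom, hupow]
      simp
    have hone : (1 : H) ∈ M := by
      rw [← hminv]
      exact Ideal.mul_mem_left _ _ hm
    exact hM.ne_top ((Ideal.eq_top_iff_one M).2 hone)
  -- ============ coordinates and characters ============
  have h0n₁ : 0 < n₁ := by omega
  have h0n₂ : 0 < n₂ := by omega
  set z1 : Fin n₁ := ⟨0, h0n₁⟩ with hz1def
  set z2 : Fin n₂ := ⟨0, h0n₂⟩ with hz2def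
  set idx : G → G × Fin n₁ × Fin n₂ := fun g => (g, z1, z2) with hidxdef
  have hz1v : (z1 : ℕ) = 0 := rfl
  have hz2v : (z2 : ℕ) = 0 := rfl
  have hrepr_self : ∀ t s : G × Fin n₁ × Fin n₂, B.repr (B t) s = if t = s then 1 else 0 := by
    intro t s; rw [B.repr_self]; exact Finsupp.single_apply
  have hrepr_sum : ∀ (c : G → k) (p : Fin n₁ × Fin n₂) (g0 : G),
      B.repr (∑ g : G, c g • B (g, p)) (g0, p) = c g0 := by
    intro c p g0
    rw [map_sum, Finsupp.finset_sum_apply]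
    rw [Finset.sum_eq_single g0]
    · rw [map_smul, Finsupp.smul_apply, hrepr_self]; simp
    · intro g' _ hg'
      rw [map_smul, Finsupp.smul_apply, hrepr_self]
      have : ¬((g', p) = (g0, p)) := by simp [hg']
      simp [this]
    · intro hg0; exact absurd (Finset.mem_univ g0) hg0
  have hcoord0 : ∀ (t : G × Fin n₁ × Fin n₂) (m : ℕ), (t.2.1 : ℕ) + (t.2.2 : ℕ) < m →
      ∀ z ∈ Jm m, B.repr z t = 0 := by
    intro t m hm z hz
    have hle : Jm m ≤ LinearMap.ker (B.coord t) := by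
      refine Submodule.span_le.2 ?_
      rintro w ⟨g, i, j, hij, rfl⟩
      rcases le_or_gt n₁ i with hi | hi
      · simp [LinearMap.mem_ker, Module.Basis.coord_apply, hov1 g i j hi]
      rcases le_or_gt n₂ j with hj | hj
      · simp [LinearMap.mem_ker, Module.Basis.coord_apply, hov2 g i j hj]
      have hw : mono φ x y g i j = B (g, ⟨i, hi⟩, ⟨j, hj⟩) := (hB (g, ⟨i, hi⟩, ⟨j, hj⟩)).symm
      simp only [SetLike.mem_coe, LinearMap.mem_ker, Module.Basis.coord_apply]
      rw [hw, hrepr_self]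
      have hne : ¬(((g, ⟨i, hi⟩, ⟨j, hj⟩) : G × Fin n₁ × Fin n₂) = t) := by
        intro he
        rw [← he] at hm
        simp only [] at hm
        omega
      simp [hne]
    have := hle hz
    simpa [LinearMap.mem_ker, Module.Basis.coord_apply] using this
  set f : (G →* kˣ) → H → k :=
    fun lam z => ∑ g : G, ((lam g : kˣ) : k) * B.repr z (idx g) with hfdef
  have hf0 : ∀ lam, f lam 0 = 0 := by intro lam; simp [hfdef]
  have hfadd : ∀ lam (u v : H), f lam (u + v) = f lam u + f lam v := by
    intro lam u v
    simp [hfdef, mul_add, Finset.sum_add_distrib]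
  have hfsmul : ∀ lam (c : k) (u : H), f lam (c • u) = c * f lam u := by
    intro lam c u
    simp [hfdef, Finset.mul_sum, smul_eq_mul, mul_left_comm]
  have hfsub : ∀ lam (u v : H), f lam (u - v) = f lam u - f lam v := by
    intro lam u v
    rw [sub_eq_add_neg, ← neg_one_smul k v, hfadd, hfsmul]; ring
  have hfB : ∀ lam (g0 : G), f lam (B (idx g0)) = ((lam g0 : kˣ) : k) := by
    intro lam g0
    rw [hfdef]
    simp only []
    rw [Finset.sum_eq_single g0]
    · rw [hrepr_self]; simp
    · intro g' _ hg'
      rw [hrepr_self]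
      have : ¬(idx g0 = idx g') := by simp [hidxdef, hg'.symm]
      simp [this]
    · intro hg0; exact absurd (Finset.mem_univ g0) hg0
  have hfBne : ∀ lam (t : G × Fin n₁ × Fin n₂), ((t.2.1 : ℕ) ≠ 0 ∨ (t.2.2 : ℕ) ≠ 0) →
      f lam (B t) = 0 := by
    intro lam t ht
    rw [hfdef]
    simp only []
    refine Finset.sum_eq_zero fun g _ => ?_
    rw [hrepr_self]
    have : ¬(t = idx g) := by
      intro he
      rw [he] at ht
      simp [hidxdef, hz1v, hz2v] at ht
    simp [this]
  have hfJ : ∀ lam, ∀ z ∈ Jm 1, f lam z = 0 := by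
    intro lam z hz
    induction hz using Submodule.span_induction with
    | mem w hw =>
        obtain ⟨g, i, j, hij, rfl⟩ := hw
        rcases le_or_gt n₁ i with hi | hi
        · rw [hov1 g i j hi]; exact hf0 lam
        rcases le_or_gt n₂ j with hj | hj
        · rw [hov2 g i j hj]; exact hf0 lam
        rw [show mono φ x y g i j = B (g, ⟨i, hi⟩, ⟨j, hj⟩) from
          (hB (g, ⟨i, hi⟩, ⟨j, hj⟩)).symm]
        exact hfBne lam _ (by simp only []; omega)
    | zero => exact hf0 lam
    | add z1' z2' _ _ h1 h2 => rw [hfadd, h1, h2, add_zero]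
    | smul c z' _ hz' => rw [hfsmul, hz', mul_zero]
  have hone : (1 : H) = B (idx 1) := by
    rw [hB]
    simp [hidxdef, mono, hz1v, hz2v, EE_one]
  have hf1 : ∀ lam, f lam 1 = 1 := by
    intro lam
    rw [hone, hfB]; simp
  have hfmul : ∀ lam (u v : H), f lam (u * v) = f lam u * f lam v := by
    intro lam u v
    induction hmemtop u using Submodule.span_induction with
    | mem u hu =>
        obtain ⟨s, rfl⟩ := hu
        induction hmemtop v using Submodule.span_induction with
        | mem v hv =>
            obtain ⟨t, rfl⟩ := hv
            show f lam (mono φ x y s.1 s.2.1 s.2.2 * mono φ x y t.1 t.2.1 t.2.2)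
              = f lam (mono φ x y s.1 s.2.1 s.2.2) * f lam (mono φ x y t.1 t.2.1 t.2.2)
            by_cases hs : (s.2.1 : ℕ) = 0 ∧ (s.2.2 : ℕ) = 0
            · by_cases ht : (t.2.1 : ℕ) = 0 ∧ (t.2.2 : ℕ) = 0
              · rw [hs.1, hs.2, ht.1, ht.2, mono_one φ x y χ₁ χ₂ hgx' hgy']
                have h00 : ∀ g : G, mono φ x y g 0 0 = B (idx g) := by
                  intro g
                  rw [hB]
                rw [h00, h00, h00, hfB, hfB, hfB, ← Units.val_mul, ← map_mul]
              · have hzt : f lam (mono φ x y t.1 t.2.1 t.2.2) = 0 := by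
                  rw [← hB t]; exact hfBne lam t (not_and_or.1 ht)
                have hmem : mono φ x y s.1 s.2.1 s.2.2 * mono φ x y t.1 t.2.1 t.2.2 ∈ Jm 1 := by
                  refine hJanti ?_ (hJmul _ _ _ _
                    (hmemJ _ s.1 s.2.1 s.2.2 le_rfl) (hmemJ _ t.1 t.2.1 t.2.2 le_rfl))
                  rcases not_and_or.1 ht with h | h <;> omega
                rw [hzt, mul_zero]
                exact hfJ lam _ hmem
            · have hzs : f lam (mono φ x y s.1 s.2.1 s.2.2) = 0 := by
                rw [← hB s]; exact hfBne lam s (not_and_or.1 hs)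
              have hmem : mono φ x y s.1 s.2.1 s.2.2 * mono φ x y t.1 t.2.1 t.2.2 ∈ Jm 1 := by
                refine hJanti ?_ (hJmul _ _ _ _
                  (hmemJ _ s.1 s.2.1 s.2.2 le_rfl) (hmemJ _ t.1 t.2.1 t.2.2 le_rfl))
                rcases not_and_or.1 hs with h | h <;> omega
              rw [hzs, zero_mul]
              exact hfJ lam _ hmem
        | zero => rw [mul_zero, hf0, mul_zero]
        | add v1 v2 _ _ h1 h2 => rw [mul_add, hfadd, hfadd, h1, h2, mul_add]
        | smul c v' _ hv' => rw [mul_smul_comm, hfsmul, hfsmul, hv']; ring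
    | zero => rw [zero_mul, hf0, zero_mul]
    | add u1 u2 _ _ h1 h2 => rw [add_mul, hfadd, hfadd, h1, h2, add_mul]
    | smul c u' _ hu' => rw [smul_mul_assoc, hfsmul, hfsmul, hu']; ring
  -- maximal ideals
  let M : (G →* kˣ) → Ideal H := fun lam =>
    { carrier := {z | f lam z = 0}
      add_mem' := fun hp hq => by
        simp only [Set.mem_setOf_eq] at *
        rw [hfadd]
        rw [hp, hq, add_zero]
      zero_mem' := by simp only [Set.mem_setOf_eq]; exact hf0 _
      smul_mem' := fun r z hz => by
        simp only [Set.mem_setOf_eq, smul_eq_mul] at *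
        rw [hfmul, hz, mul_zero] }
  have hmemM : ∀ lam (z : H), z ∈ M lam ↔ f lam z = 0 := fun lam z => Iff.rfl
  have hMmax : ∀ lam, (M lam).IsMaximal := by
    intro lam
    rw [Ideal.isMaximal_iff]
    constructor
    · intro h1
      exact one_ne_zero (by rw [← hf1 lam]; exact (hmemM lam 1).1 h1)
    · intro J z hIJ hzI hzJ
      have hc : f lam z ≠ 0 := fun h => hzI ((hmemM _ _).2 h)
      have hfc : f lam (algebraMap k H (f lam z)) = f lam z := by
        rw [Algebra.algebraMap_eq_smul_one, hfsmul, hf1, mul_one]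
      have hsub : z - algebraMap k H (f lam z) ∈ M lam := by
        rw [hmemM, hfsub, hfc, sub_self]
      have hzJ' : algebraMap k H (f lam z) ∈ J := by
        have heq : algebraMap k H (f lam z) = z - (z - algebraMap k H (f lam z)) :=
          (sub_sub_cancel _ _).symm
        rw [heq]
        exact Submodule.sub_mem J hzJ (hIJ hsub)
      have h2 : algebraMap k H (f lam z)⁻¹ * algebraMap k H (f lam z) = 1 := by
        rw [← map_mul, inv_mul_cancel₀ hc, map_one]
      rw [← h2]
      exact Ideal.mul_mem_left _ _ hzJ'
  have ha2 : (⊥ : Ideal H).jacobson ≤ Ideal.span ({x, y} : Set H) := by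
    intro z hz
    have hz0 : ∀ lam, f lam z = 0 := by
      intro lam
      have hle : (⊥ : Ideal H).jacobson ≤ M lam := sInf_le ⟨bot_le, hMmax lam⟩
      exact (hmemM lam z).1 (hle hz)
    have hcoef : ∀ g : G, B.repr z (idx g) = 0 := by
      apply char_coeffs_zero (fun g => B.repr z (idx g))
      intro lam
      have := hz0 lam
      rw [hfdef] at this
      exact this
    have hzJ1 : z ∈ Jm 1 := by
      have hrepr := B.sum_repr z
      rw [← hrepr]
      refine Submodule.sum_mem _ ?_
      intro t _
      by_cases ht : (t.2.1 : ℕ) = 0 ∧ (t.2.2 : ℕ) = 0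
      · obtain ⟨g, i, j⟩ := t
        simp only [] at ht
        have hi : i = z1 := Fin.ext (by rw [hz1v]; exact ht.1)
        have hj : j = z2 := Fin.ext (by rw [hz2v]; exact ht.2)
        have hidxg : ((g, i, j) : G × Fin n₁ × Fin n₂) = idx g := by
          rw [hidxdef, hi, hj]
        rw [hidxg, hcoef g, zero_smul]
        exact Submodule.zero_mem _
      · have hmono : B t ∈ Jm 1 := by
          rw [hB]
          refine hJanti ?_ (hmemJ _ t.1 t.2.1 t.2.2 le_rfl)
          rcases not_and_or.1 ht with h | h <;> omega
        exact Submodule.smul_mem _ _ hmono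
    exact (hJeq z).2 hzJ1
  have hcard : (Fintype.card G : k) ≠ 0 := Nat.cast_ne_zero.2 Fintype.card_ne_zero
  refine ⟨le_antisymm ha2 ha1, ?_, ?_⟩
  · -- ============ part (b) ============
    intro lam
    set e := φ (stdIdem k G lam) with hedef
    set S : Submodule H H := Submodule.span H ({x * e, y * e} : Set H) with hSdef
    have hEe : ∀ g : G, EE φ g * e = ((lam g : kˣ) : k) • e := fun g => E_mul_idem φ lam g
    have hxyeJ : ∀ I J : ℕ, x ^ I * (y ^ J * e) ∈ Jm (I + J) := by
      intro I J
      rw [hedef, idem_sum φ lam, Finset.mul_sum, Finset.mul_sum]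
      refine Submodule.sum_mem _ ?_
      intro g _
      rw [mul_smul_comm, mul_smul_comm, xy_pow_E φ x y χ₁ χ₂ hgx' hgy' g I J, smul_smul]
      exact Submodule.smul_mem _ _ (hmemJ _ _ _ _ le_rfl)
    have hSJ : ∀ p ∈ S, p ∈ Jm 1 := by
      intro p hp
      induction hp using Submodule.span_induction with
      | mem p hp =>
          simp only [Set.mem_insert_iff, Set.mem_singleton_iff] at hp
          rcases hp with rfl | rfl
          · have : x * e = x ^ 1 * (y ^ 0 * e) := by rw [pow_zero, one_mul, pow_one]
            rw [this]; exact hxyeJ 1 0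
          · have : y * e = x ^ 0 * (y ^ 1 * e) := by rw [pow_zero, one_mul, pow_one]
            rw [this]; exact hxyeJ 0 1
      | zero => simp
      | add p1 p2 _ _ h1 h2 => exact add_mem h1 h2
      | smul r p _ hp => rw [smul_eq_mul]; exact hmulJ r p 1 hp
    refine ⟨?_, ?_, ?_⟩
    · -- e ∉ S
      intro heS
      have h0 : B.repr e (idx 1) = 0 :=
        hcoord0 (idx 1) 1 (by simp [hidxdef, hz1v, hz2v]) e (hSJ e heS)
      have h2 : B.repr e (idx 1) = (Fintype.card G : k)⁻¹ * ((lam 1⁻¹ : kˣ) : k) := by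
        have hesum : e = ∑ g : G,
            ((Fintype.card G : k)⁻¹ * ((lam g⁻¹ : kˣ) : k)) • B (g, (z1, z2)) := by
          rw [hedef, idem_sum φ lam]
          refine Finset.sum_congr rfl fun g _ => ?_
          congr 1
          rw [hB]
          simp [mono, hz1v, hz2v]
        simp only [hidxdef]
        rw [hesum, hrepr_sum]
      rw [h2] at h0
      refine hcard (inv_eq_zero.1 ?_)
      simpa using h0
    · -- generation by e
      intro p hp
      have Tmem : ∀ r : H,
          r * e ∈ (Submodule.restrictScalars k S ⊔ Submodule.span k {e}) := by
        intro r
        induction hmemtop r using Submodule.span_induction with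
        | mem r hr =>
            obtain ⟨t, rfl⟩ := hr
            show mono φ x y t.1 t.2.1 t.2.2 * e ∈ _
            obtain ⟨g, i, j⟩ := t
            simp only []
            by_cases hj : (j : ℕ) = 0
            · by_cases hi : (i : ℕ) = 0
              · rw [hi, hj]
                have hm00 : mono φ x y g 0 0 * e = ((lam g : kˣ) : k) • e := by
                  have : mono φ x y g 0 0 = EE φ g := by simp [mono]
                  rw [this]; exact hEe g
                rw [hm00]
                exact Submodule.mem_sup_right
                  (Submodule.smul_mem _ _ (Submodule.mem_span_singleton_self e))
              · obtain ⟨i', hi'⟩ : ∃ i', (i : ℕ) = i' + 1 := ⟨(i : ℕ) - 1, by omega⟩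
                rw [hj, hi']
                have hsplit : mono φ x y g (i' + 1) 0 * e
                    = (EE φ g * x ^ i') * (x * e) := by
                  simp [mono, pow_succ, mul_assoc]
                rw [hsplit]
                exact Submodule.mem_sup_left
                  (Submodule.smul_mem S _ (Submodule.subset_span (by simp)))
            · obtain ⟨j', hj'⟩ : ∃ j', (j : ℕ) = j' + 1 := ⟨(j : ℕ) - 1, by omega⟩
              rw [hj']
              have hsplit : mono φ x y g i (j' + 1) * e
                  = (EE φ g * x ^ (i : ℕ) * y ^ j') * (y * e) := by
                simp [mono, pow_succ, mul_assoc]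
              rw [hsplit]
              exact Submodule.mem_sup_left
                (Submodule.smul_mem S _ (Submodule.subset_span (by simp)))
        | zero => rw [zero_mul]; exact zero_mem _
        | add r1 r2 _ _ h1 h2 => rw [add_mul]; exact add_mem h1 h2
        | smul c r' _ hr' => rw [smul_mul_assoc]; exact Submodule.smul_mem _ _ hr'
      obtain ⟨r, hr⟩ := Submodule.mem_span_singleton.1 hp
      obtain ⟨s, hs, q, hq, hsq⟩ := Submodule.mem_sup.1 (Tmem r)
      obtain ⟨c, hc⟩ := Submodule.mem_span_singleton.1 hq
      refine ⟨c, ?_⟩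
      rw [← hr, smul_eq_mul, ← hsq, ← hc, add_sub_cancel_right]
      exact hs
    · intro g
      rw [show φ (MonoidAlgebra.single g 1) * e = EE φ g * e from rfl, hEe g, sub_self]
      exact Submodule.zero_mem _
  · -- ============ part (c) ============
    intro lam
    set e := φ (stdIdem k G lam) with hedef
    set S2 : Submodule H H :=
      Submodule.span H ({x * (x * e), x * (y * e), y * (x * e), y * (y * e)} : Set H) with hS2def
    have hEe : ∀ g : G, EE φ g * e = ((lam g : kˣ) : k) • e := fun g => E_mul_idem φ lam g
    have hExe : ∀ g : G, EE φ g * (x * e) = ((lam g * χ₁ g : kˣ) : k) • (x * e) := by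
      intro g
      calc EE φ g * (x * e) = (EE φ g * x) * e := (mul_assoc _ _ _).symm
        _ = (((χ₁ g : kˣ) : k) • (x * EE φ g)) * e := by rw [hgx' g]
        _ = ((χ₁ g : kˣ) : k) • (x * (EE φ g * e)) := by rw [smul_mul_assoc, mul_assoc]
        _ = ((χ₁ g : kˣ) : k) • (x * (((lam g : kˣ) : k) • e)) := by rw [hEe g]
        _ = ((lam g * χ₁ g : kˣ) : k) • (x * e) := by
            rw [mul_smul_comm, smul_smul]
            congr 1
            rw [Units.val_mul]
            ring
    have hEye : ∀ g : G, EE φ g * (y * e) = ((lam g * χ₂ g : kˣ) : k) • (y * e) := by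
      intro g
      calc EE φ g * (y * e) = (EE φ g * y) * e := (mul_assoc _ _ _).symm
        _ = (((χ₂ g : kˣ) : k) • (y * EE φ g)) * e := by rw [hgy' g]
        _ = ((χ₂ g : kˣ) : k) • (y * (EE φ g * e)) := by rw [smul_mul_assoc, mul_assoc]
        _ = ((χ₂ g : kˣ) : k) • (y * (((lam g : kˣ) : k) • e)) := by rw [hEe g]
        _ = ((lam g * χ₂ g : kˣ) : k) • (y * e) := by
            rw [mul_smul_comm, smul_smul]
            congr 1
            rw [Units.val_mul]
            ring
    have hxye : x * (y * e) = ((χ₂ a : kˣ) : k) • (y * (x * e)) := by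
      rw [← mul_assoc, hxy, smul_mul_assoc, mul_assoc]
    have hq2 : ∀ (g : G) (I J : ℕ), 2 ≤ I + J → mono φ x y g I J * e ∈ S2 := by
      intro g I J h2
      by_cases hJ : J = 0
      · subst hJ
        obtain ⟨I', rfl⟩ : ∃ I', I = I' + 2 := ⟨I - 2, by omega⟩
        have hsplit : mono φ x y g (I' + 2) 0 * e = (EE φ g * x ^ I') * (x * (x * e)) := by
          simp [mono, pow_succ, mul_assoc]
        rw [hsplit]
        exact Submodule.smul_mem S2 _ (Submodule.subset_span (by simp))
      · by_cases hI : I = 0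
        · subst hI
          obtain ⟨J', rfl⟩ : ∃ J', J = J' + 2 := ⟨J - 2, by omega⟩
          have hsplit : mono φ x y g 0 (J' + 2) * e = (EE φ g * y ^ J') * (y * (y * e)) := by
            simp [mono, pow_succ, mul_assoc]
          rw [hsplit]
          exact Submodule.smul_mem S2 _ (Submodule.subset_span (by simp))
        · obtain ⟨I', rfl⟩ : ∃ I', I = I' + 1 := ⟨I - 1, by omega⟩
          obtain ⟨J', rfl⟩ : ∃ J', J = J' + 1 := ⟨J - 1, by omega⟩
          have hsplit : mono φ x y g (I' + 1) (J' + 1) * e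
              = ((χ₂ a ^ (J' + 1) : kˣ) : k)
                  • ((EE φ g * x ^ I' * y ^ J') * (y * (x * e))) := by
            simp only [mono, pow_succ, mul_assoc]
            rw [x_mul_ypow' x y χ₂ a hxy J' (y * e), hxye]
            simp only [mul_smul_comm, smul_smul]
            rw [← Units.val_mul, ← pow_succ]
          have hgen : y * (x * e) ∈ S2 := Submodule.subset_span (by simp)
          rw [hsplit, ← algebraMap_smul H ((χ₂ a ^ (J' + 1) : kˣ) : k)
            (EE φ g * x ^ I' * y ^ J' * (y * (x * e)))]
          exact Submodule.smul_mem _ _ (Submodule.smul_mem S2 _ hgen)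
    have hxyeJ : ∀ I J : ℕ, x ^ I * (y ^ J * e) ∈ Jm (I + J) := by
      intro I J
      rw [hedef, idem_sum φ lam, Finset.mul_sum, Finset.mul_sum]
      refine Submodule.sum_mem _ ?_
      intro g _
      rw [mul_smul_comm, mul_smul_comm, xy_pow_E φ x y χ₁ χ₂ hgx' hgy' g I J, smul_smul]
      exact Submodule.smul_mem _ _ (hmemJ _ _ _ _ le_rfl)
    have hS2J : ∀ p ∈ S2, p ∈ Jm 2 := by
      intro p hp
      induction hp using Submodule.span_induction with
      | mem p hp =>
          simp only [Set.mem_insert_iff, Set.mem_singleton_iff] at hp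
          rcases hp with rfl | rfl | rfl | rfl
          · have : x * (x * e) = x ^ 2 * (y ^ 0 * e) := by
              rw [pow_zero, one_mul, pow_two, mul_assoc]
            rw [this]; exact hxyeJ 2 0
          · have : x * (y * e) = x ^ 1 * (y ^ 1 * e) := by rw [pow_one, pow_one]
            rw [this]; exact hxyeJ 1 1
          · have h1 : y * (x * e) = (((χ₂ a)⁻¹ : kˣ) : k) • (x * (y * e)) := by
              have := y_pow_x' x y χ₂ a hxy 1 1 e
              simpa using this
            rw [h1]
            refine Submodule.smul_mem _ _ ?_
            have : x * (y * e) = x ^ 1 * (y ^ 1 * e) := by rw [pow_one, pow_one]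
            rw [this]; exact hxyeJ 1 1
          · have : y * (y * e) = x ^ 0 * (y ^ 2 * e) := by
              rw [pow_zero, one_mul, pow_two, mul_assoc]
            rw [this]; exact hxyeJ 0 2
      | zero => simp
      | add p1 p2 _ _ h1 h2 => exact add_mem h1 h2
      | smul r p _ hp => rw [smul_eq_mul]; exact hmulJ r p 2 hp
    refine ⟨?_, ?_, ?_, ?_, ?_⟩
    · -- x*e ∉ S2
      intro hmem
      have h0 : B.repr (x * e) ((1 : G), ((⟨1, hn₁1⟩ : Fin n₁), z2)) = 0 :=
        hcoord0 _ 2 (by simp [hz2v]) _ (hS2J _ hmem)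
      have h2 : B.repr (x * e) ((1 : G), ((⟨1, hn₁1⟩ : Fin n₁), z2))
          = (Fintype.card G : k)⁻¹ * ((lam 1⁻¹ : kˣ) : k) * (((χ₁ 1)⁻¹ : kˣ) : k) := by
        have hsum : x * e = ∑ g : G,
            ((Fintype.card G : k)⁻¹ * ((lam g⁻¹ : kˣ) : k) * (((χ₁ g)⁻¹ : kˣ) : k))
              • B (g, ((⟨1, hn₁1⟩ : Fin n₁), z2)) := by
          rw [hedef, x_mul_idem φ x y χ₁ hgx' lam]
          refine Finset.sum_congr rfl fun g _ => ?_
          congr 1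
          rw [hB]
        rw [hsum, hrepr_sum]
      rw [h2] at h0
      refine hcard (inv_eq_zero.1 ?_)
      simpa using h0
    · -- y*e ∉ S2
      intro hmem
      have h0 : B.repr (y * e) ((1 : G), (z1, (⟨1, hn₂1⟩ : Fin n₂))) = 0 :=
        hcoord0 _ 2 (by simp [hz1v]) _ (hS2J _ hmem)
      have h2 : B.repr (y * e) ((1 : G), (z1, (⟨1, hn₂1⟩ : Fin n₂)))
          = (Fintype.card G : k)⁻¹ * ((lam 1⁻¹ : kˣ) : k) * (((χ₂ 1)⁻¹ : kˣ) : k) := by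
        have hsum : y * e = ∑ g : G,
            ((Fintype.card G : k)⁻¹ * ((lam g⁻¹ : kˣ) : k) * (((χ₂ g)⁻¹ : kˣ) : k))
              • B (g, (z1, (⟨1, hn₂1⟩ : Fin n₂))) := by
          rw [hedef, y_mul_idem φ x y χ₂ hgy' lam]
          refine Finset.sum_congr rfl fun g _ => ?_
          congr 1
          rw [hB]
        rw [hsum, hrepr_sum]
      rw [h2] at h0
      refine hcard (inv_eq_zero.1 ?_)
      simpa using h0
    · -- generation
      intro p hp
      have keyx : ∀ r : H, r * (x * e) ∈
          (Submodule.restrictScalars k S2 ⊔ Submodule.span k {x * e}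
            ⊔ Submodule.span k {y * e}) := by
        intro r
        induction hmemtop r using Submodule.span_induction with
        | mem r hr =>
            obtain ⟨t, rfl⟩ := hr
            show mono φ x y t.1 t.2.1 t.2.2 * (x * e) ∈ _
            obtain ⟨g, i, j⟩ := t
            simp only []
            have hstep : mono φ x y g (i : ℕ) (j : ℕ) * (x * e)
                = (((χ₂ a ^ (j : ℕ))⁻¹ : kˣ) : k) • (mono φ x y g ((i : ℕ) + 1) (j : ℕ) * e) := by
              rw [← mul_assoc, mono_mul_x φ x y χ₂ a hxy, smul_mul_assoc]
            rw [hstep]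
            by_cases hij : (i : ℕ) = 0 ∧ (j : ℕ) = 0
            · rw [hij.1, hij.2]
              have hval : mono φ x y g (0 + 1) 0 * e = ((lam g * χ₁ g : kˣ) : k) • (x * e) := by
                have h1 : mono φ x y g (0 + 1) 0 = EE φ g * x := by simp [mono]
                rw [h1, mul_assoc]
                exact hExe g
              rw [hval, smul_smul]
              exact Submodule.mem_sup_left (Submodule.mem_sup_right
                (Submodule.smul_mem _ _ (Submodule.mem_span_singleton_self _)))
            · refine Submodule.smul_mem _ _ (Submodule.mem_sup_left (Submodule.mem_sup_left ?_))
              refine hq2 g _ _ ?_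
              rcases not_and_or.1 hij with h | h <;> omega
        | zero => rw [zero_mul]; exact zero_mem _
        | add r1 r2 _ _ h1 h2 => rw [add_mul]; exact add_mem h1 h2
        | smul c r' _ hr' => rw [smul_mul_assoc]; exact Submodule.smul_mem _ _ hr'
      have keyy : ∀ r : H, r * (y * e) ∈
          (Submodule.restrictScalars k S2 ⊔ Submodule.span k {x * e}
            ⊔ Submodule.span k {y * e}) := by
        intro r
        induction hmemtop r using Submodule.span_induction with
        | mem r hr =>
            obtain ⟨t, rfl⟩ := hr
            show mono φ x y t.1 t.2.1 t.2.2 * (y * e) ∈ _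
            obtain ⟨g, i, j⟩ := t
            simp only []
            have hstep : mono φ x y g (i : ℕ) (j : ℕ) * (y * e)
                = mono φ x y g (i : ℕ) ((j : ℕ) + 1) * e := by
              rw [← mul_assoc, mono_mul_y]
            rw [hstep]
            by_cases hij : (i : ℕ) = 0 ∧ (j : ℕ) = 0
            · rw [hij.1, hij.2]
              have hval : mono φ x y g 0 (0 + 1) * e = ((lam g * χ₂ g : kˣ) : k) • (y * e) := by
                have h1 : mono φ x y g 0 (0 + 1) = EE φ g * y := by simp [mono]
                rw [h1, mul_assoc]
                exact hEye g
              rw [hval]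
              exact Submodule.mem_sup_right
                (Submodule.smul_mem _ _ (Submodule.mem_span_singleton_self _))
            · refine Submodule.mem_sup_left (Submodule.mem_sup_left ?_)
              refine hq2 g _ _ ?_
              rcases not_and_or.1 hij with h | h <;> omega
        | zero => rw [zero_mul]; exact zero_mem _
        | add r1 r2 _ _ h1 h2 => rw [add_mul]; exact add_mem h1 h2
        | smul c r' _ hr' => rw [smul_mul_assoc]; exact Submodule.smul_mem _ _ hr'
      have hT : ∀ p' : H, p' ∈ (Submodule.restrictScalars k S2 ⊔ Submodule.span k {x * e}
          ⊔ Submodule.span k {y * e}) → ∃ c d : k,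
          p' - c • (x * e) - d • (y * e) ∈ S2 := by
        intro p' hp'
        obtain ⟨u, hu, v, hv, huv⟩ := Submodule.mem_sup.1 hp'
        obtain ⟨w, hw, v1, hv1, hwv⟩ := Submodule.mem_sup.1 hu
        obtain ⟨c, hc⟩ := Submodule.mem_span_singleton.1 hv1
        obtain ⟨d, hd⟩ := Submodule.mem_span_singleton.1 hv
        refine ⟨c, d, ?_⟩
        rw [← huv, ← hwv, ← hc, ← hd]
        have : w + c • (x * e) + d • (y * e) - c • (x * e) - d • (y * e) = w := by abel
        rw [this]
        exact hw
      obtain ⟨r, s, hrs⟩ := Submodule.mem_span_pair.1 hp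
      obtain ⟨c1, d1, h1⟩ := hT _ (keyx r)
      obtain ⟨c2, d2, h2⟩ := hT _ (keyy s)
      refine ⟨c1 + c2, d1 + d2, ?_⟩
      rw [← hrs]
      have heq : r • (x * e) + s • (y * e) - (c1 + c2) • (x * e) - (d1 + d2) • (y * e)
          = (r * (x * e) - c1 • (x * e) - d1 • (y * e))
            + (s * (y * e) - c2 • (x * e) - d2 • (y * e)) := by
        rw [smul_eq_mul, smul_eq_mul, add_smul, add_smul]
        abel
      rw [heq]
      exact Submodule.add_mem _ h1 h2
    · intro g
      rw [show φ (MonoidAlgebra.single g 1) * (x * e) = EE φ g * (x * e) from rfl,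
        hExe g, sub_self]
      exact Submodule.zero_mem _
    · intro g
      rw [show φ (MonoidAlgebra.single g 1) * (y * e) = EE φ g * (y * e) from rfl,
        hEye g, sub_self]
      exact Submodule.zero_mem _
end

section
/- Let A be a k-algebra with invertible elements E, F, K and central element C satisfying the relations of a class subalgebra of a linked unipotent lifting: E^n, F^n nonzero scalars, K^N = κ, EF − FE = η(K^{−m} − K^m), KE = θEK, KF = θ^{−1}FK, with N = n (i.e. m = 1), and suppose {E^iF^jK^l : 0 ≤ i,j,l < n} is a basis. Then A ≅ M_n(k[C]), the n×n matrix algebra over the commutative subalgebra generated by the Casimir element C = EF − (η/(q−1))(K + qK^{−1}). -/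
set_option linter.unusedSectionVars false
open Finset
open scoped Fin.CommRing

section Units46

variable {k : Type*} [Field k] [CharZero k] {A : Type*} [Ring A] [Algebra k A]
variable {n : ℕ} [NeZero n]

def χf (ζ : k) {n : ℕ} (a : Fin n) : k := ζ ^ (a : ℕ)

def Pf (v : A) {n : ℕ} (a : Fin n) : A := v ^ (a : ℕ)

def ef (ζ : k) (v : A) {n : ℕ} (i : Fin n) : A :=
  (n : k)⁻¹ • ∑ l : Fin n, χf ζ (-(i * l)) • Pf v l

theorem pow_mod_n {M : Type*} [Monoid M] {x : M} {n : ℕ} (hx : x ^ n = 1) (m : ℕ) :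
    x ^ (m % n) = x ^ m := by
  conv_rhs => rw [← Nat.div_add_mod m n]
  rw [pow_add, pow_mul, hx, one_pow, one_mul]

theorem χf_add {ζ : k} (hζ1 : ζ ^ n = 1) (a b : Fin n) : χf ζ (a + b) = χf ζ a * χf ζ b := by
  unfold χf
  rw [Fin.val_add, pow_mod_n hζ1, pow_add]

theorem χf_zero (ζ : k) : χf ζ (0 : Fin n) = 1 := by simp [χf]

theorem χf_pow_n {ζ : k} (hζ1 : ζ ^ n = 1) (a : Fin n) : χf ζ a ^ n = 1 := by
  unfold χf; rw [← pow_mul, mul_comm, pow_mul, hζ1, one_pow]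

theorem χf_ne_one {ζ : k} (hζp : ∀ m : ℕ, ζ ^ m = 1 → n ∣ m) {a : Fin n} (ha : a ≠ 0) :
    χf ζ a ≠ 1 := by
  intro h
  exact ha (Fin.ext (Nat.eq_zero_of_dvd_of_lt (hζp _ h) a.isLt))

theorem sum_χf {ζ : k} (hζ1 : ζ ^ n = 1) (hζp : ∀ m : ℕ, ζ ^ m = 1 → n ∣ m) (a : Fin n) :
    ∑ l : Fin n, χf ζ (a * l) = if a = 0 then (n : k) else 0 := by
  by_cases ha : a = 0
  · simp [ha, χf_zero]
  · rw [if_neg ha]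
    have hterm : ∀ l : Fin n, χf ζ (a * l) = (χf ζ a) ^ (l : ℕ) := by
      intro l
      unfold χf
      rw [Fin.val_mul, pow_mod_n hζ1, pow_mul]
    simp only [hterm]
    rw [Fin.sum_univ_eq_sum_range (fun i => (χf ζ a) ^ i) n,
      geom_sum_eq (χf_ne_one hζp ha), χf_pow_n hζ1, sub_self, zero_div]

theorem Pf_add {v : A} (hv : v ^ n = 1) (a b : Fin n) : Pf v (a + b) = Pf v a * Pf v b := by
  unfold Pf
  rw [Fin.val_add, ← pow_add, pow_mod_n hv]

theorem Pf_zero (v : A) : Pf v (0 : Fin n) = 1 := by simp [Pf]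

variable {ζ : k} {v w : A}

theorem ef_mul (hζ1 : ζ ^ n = 1) (hζp : ∀ m : ℕ, ζ ^ m = 1 → n ∣ m) (hv : v ^ n = 1)
    (i j : Fin n) : ef ζ v i * ef ζ v j = if i = j then ef ζ v i else 0 := by
  have hne : (n : k) ≠ 0 := Nat.cast_ne_zero.2 (NeZero.ne n)
  have key : (∑ l : Fin n, χf ζ (-(i * l)) • Pf v l) * (∑ m : Fin n, χf ζ (-(j * m)) • Pf v m)
      = ∑ s : Fin n, ((if i = j then (n:k) else 0) * χf ζ (-(j * s))) • Pf v s := by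
    rw [Finset.sum_mul_sum]
    have step1 : ∀ l : Fin n, ∑ m : Fin n, (χf ζ (-(i * l)) • Pf v l) * (χf ζ (-(j * m)) • Pf v m)
        = ∑ s : Fin n, (χf ζ (-(i * l)) * χf ζ (-(j * (s - l)))) • Pf v s := by
      intro l
      apply Fintype.sum_equiv (Equiv.addLeft l)
      intro m
      simp only [Equiv.coe_addLeft]
      rw [smul_mul_smul_comm, ← Pf_add hv, add_sub_cancel_left]
    simp only [step1]
    rw [Finset.sum_comm]
    refine Finset.sum_congr rfl fun s _ => ?_
    rw [← Finset.sum_smul]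
    congr 1
    have hcoef : ∀ l : Fin n, χf ζ (-(i * l)) * χf ζ (-(j * (s - l)))
        = χf ζ (-(j * s)) * χf ζ ((j - i) * l) := by
      intro l
      rw [← χf_add hζ1, ← χf_add hζ1]
      congr 1
      ring
    simp only [hcoef]
    rw [← Finset.mul_sum, sum_χf hζ1 hζp]
    rw [mul_comm]
    congr 1
    by_cases h : i = j <;> simp [h, sub_eq_zero, eq_comm]
  unfold ef
  rw [smul_mul_smul_comm, key]
  by_cases h : i = j
  · simp only [h, if_pos rfl, ↓reduceIte]
    rw [Finset.smul_sum, Finset.smul_sum]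
    refine Finset.sum_congr rfl fun s _ => ?_
    rw [mul_smul, smul_smul, smul_smul, smul_smul]
    congr 1
    field_simp
  · simp [h]

theorem sum_ef (hζ1 : ζ ^ n = 1) (hζp : ∀ m : ℕ, ζ ^ m = 1 → n ∣ m) :
    ∑ i : Fin n, ef ζ v i = 1 := by
  have hne : (n : k) ≠ 0 := Nat.cast_ne_zero.2 (NeZero.ne n)
  unfold ef
  rw [← Finset.smul_sum, Finset.sum_comm]
  have h1 : ∀ l : Fin n, ∑ i : Fin n, χf ζ (-(i * l)) • Pf v l
      = (if (-l : Fin n) = 0 then (n:k) else 0) • Pf v l := by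
    intro l
    rw [← Finset.sum_smul]
    congr 1
    rw [← sum_χf hζ1 hζp (-l)]
    refine Finset.sum_congr rfl fun x _ => ?_
    congr 1
    ring
  simp only [h1, neg_eq_zero, ite_smul, zero_smul]
  rw [Finset.sum_ite_eq' Finset.univ (0 : Fin n) (fun l => (n:k) • Pf v l)]
  simp [Pf_zero, smul_smul, inv_mul_cancel₀ hne]


theorem w_pow (hvw : w * v = ζ • (v * w)) (m : ℕ) :
    w * v ^ m = ζ ^ m • (v ^ m * w) := by
  induction m with
  | zero => simp
  | succ m ih =>
    rw [pow_succ v, ← mul_assoc, ih, smul_mul_assoc, mul_assoc, hvw, mul_smul_comm,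
      smul_smul, ← pow_succ, ← mul_assoc, ← pow_succ]

theorem w_Pf (hvw : w * v = ζ • (v * w)) (l : Fin n) :
    w * Pf v l = χf ζ l • (Pf v l * w) := w_pow hvw (l : ℕ)

theorem ef_w (hζ1 : ζ ^ n = 1) (hvw : w * v = ζ • (v * w)) (i : Fin n) :
    ef ζ v i * w = w * ef ζ v (i + 1) := by
  unfold ef
  rw [smul_mul_assoc, mul_smul_comm, Finset.sum_mul, Finset.mul_sum]
  congr 1
  refine Finset.sum_congr rfl fun l _ => ?_
  rw [smul_mul_assoc, mul_smul_comm, w_Pf hvw, smul_smul, ← χf_add hζ1]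
  congr 2
  ring

theorem v_ef (hn : 2 ≤ n) (hζ1 : ζ ^ n = 1) (hv : v ^ n = 1) (i : Fin n) :
    v * ef ζ v i = χf ζ i • ef ζ v i := by
  have h1 : ∀ l : Fin n, v * (χf ζ (-(i*l)) • Pf v l) = χf ζ (-(i*l)) • Pf v (1 + l) := by
    intro l
    rw [mul_smul_comm, Pf_add hv]
    congr 1
    simp [Pf, Fin.val_one', Nat.mod_eq_of_lt (by omega : 1 < n)]
  calc v * ef ζ v i = (n:k)⁻¹ • ∑ l : Fin n, χf ζ (-(i * l)) • Pf v (1 + l) := by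
        unfold ef
        rw [mul_smul_comm, Finset.mul_sum]
        exact congrArg _ (Finset.sum_congr rfl fun l _ => h1 l)
    _ = (n:k)⁻¹ • ∑ l : Fin n, (χf ζ i * χf ζ (-(i * l))) • Pf v l := by
        congr 1
        apply Fintype.sum_equiv (Equiv.addLeft (1 : Fin n))
        intro l
        simp only [Equiv.coe_addLeft]
        rw [← χf_add hζ1]
        congr 2
        ring
    _ = χf ζ i • ef ζ v i := by
        unfold ef
        rw [smul_comm]
        congr 1
        rw [Finset.smul_sum]
        exact Finset.sum_congr rfl fun l _ => (smul_smul _ _ _).symm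

theorem v_eq_sum (hn : 2 ≤ n) (hζ1 : ζ ^ n = 1) (hζp : ∀ m : ℕ, ζ ^ m = 1 → n ∣ m)
    (hv : v ^ n = 1) : v = ∑ i : Fin n, χf ζ i • ef ζ v i := by
  have h1 : ∀ i : Fin n, χf ζ i • ef ζ v i = v * ef ζ v i :=
    fun i => (v_ef hn hζ1 hv i).symm
  simp only [h1]
  rw [← Finset.mul_sum, sum_ef hζ1 hζp, mul_one]

theorem ef_pow_w (hζ1 : ζ ^ n = 1) (hvw : w * v = ζ • (v * w)) (i : Fin n) (m : ℕ) :
    ef ζ v i * w ^ m = w ^ m * ef ζ v (i + (m : Fin n)) := by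
  induction m with
  | zero => simp
  | succ m ih =>
    rw [pow_succ, ← mul_assoc, ih, mul_assoc, ef_w hζ1 hvw, ← mul_assoc, ← pow_succ]
    congr 2
    push_cast
    ring

theorem ef_Qf (hζ1 : ζ ^ n = 1) (hvw : w * v = ζ • (v * w)) (i : Fin n) (a : Fin n) :
    ef ζ v i * Pf w a = Pf w a * ef ζ v (i + a) := by
  have := ef_pow_w (w := w) hζ1 hvw i (a : ℕ)
  rwa [Fin.cast_val_eq_self] at this

def eMf (ζ : k) (v w : A) {n : ℕ} (i j : Fin n) : A := ef ζ v i * Pf w (j - i)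

theorem eMf_diag (i : Fin n) : eMf ζ v w i i = ef ζ v i := by
  simp [eMf, Pf_zero]

theorem eMf_mul (hζ1 : ζ ^ n = 1) (hζp : ∀ m : ℕ, ζ ^ m = 1 → n ∣ m) (hv : v ^ n = 1)
    (hw : w ^ n = 1) (hvw : w * v = ζ • (v * w)) (i j s t : Fin n) :
    eMf ζ v w i j * eMf ζ v w s t = if j = s then eMf ζ v w i t else 0 := by
  unfold eMf
  have h1 : Pf w (j - i) * ef ζ v s = ef ζ v (s - (j - i)) * Pf w (j - i) := by
    rw [ef_Qf hζ1 hvw, sub_add_cancel]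
  rw [mul_assoc, ← mul_assoc (Pf w (j-i)), h1, ← mul_assoc, ← mul_assoc,
    ef_mul hζ1 hζp hv]
  by_cases h : j = s
  · have his : i = s - (j - i) := by rw [h]; ring
    rw [if_pos his, if_pos h]
    have hsum : (j - i) + (t - s) = t - i := by rw [h]; ring
    rw [mul_assoc, ← Pf_add hw, hsum]
  · have his : ¬ i = s - (j - i) := by
      intro hc
      apply h
      have h0 : s - j = 0 := by linear_combination -hc
      exact (sub_eq_zero.mp h0).symm
    rw [if_neg his, if_neg h, zero_mul, zero_mul]

end Units46
section Psi
variable {k : Type*} [Field k] {A : Type*} [Ring A] [Algebra k A]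
variable {n : ℕ} [NeZero n]
variable (R : Subalgebra k A) (e : Fin n → Fin n → A)

def ψfun (M : Matrix (Fin n) (Fin n) R) : A := ∑ i, ∑ j, (M i j : A) * e i j

variable (hmul : ∀ i j s t : Fin n, e i j * e s t = if j = s then e i t else 0)
  (hone : ∑ i, e i i = 1)
  (hR : ∀ (r : R) (a : A), (r : A) * a = a * (r : A))

include hmul hone hR in
theorem ψfun_mul (M N : Matrix (Fin n) (Fin n) R) :
    ψfun R e (M * N) = ψfun R e M * ψfun R e N := by
  unfold ψfun
  rw [Finset.sum_mul_sum]
  have hterm : ∀ i s : Fin n,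
      (∑ j, ((M i j : A)) * e i j) * (∑ t, ((N s t : A)) * e s t)
      = ∑ j, ∑ t, if j = s then ((M i j : A)) * ((N s t : A)) * e i t else 0 := by
    intro i s
    rw [Finset.sum_mul_sum]
    refine Finset.sum_congr rfl fun j _ => Finset.sum_congr rfl fun t _ => ?_
    calc ((M i j : A)) * e i j * (((N s t : A)) * e s t)
        = ((M i j : A)) * (((N s t : A)) * (e i j * e s t)) := by
          rw [mul_assoc, ← mul_assoc (e i j), ← hR (N s t) (e i j), mul_assoc]
      _ = if j = s then ((M i j : A)) * ((N s t : A)) * e i t else 0 := by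
          rw [hmul i j s t]
          by_cases h : j = s <;> simp [h, mul_assoc]
  simp only [hterm]
  refine Finset.sum_congr rfl fun i _ => ?_
  -- goal: ∑ t ↑((M*N) i t) * e i t = ∑ s ∑ j ∑ t (if j = s then ...)
  have hs : ∀ s : Fin n, (∑ j, ∑ t, if j = s then ((M i j : A)) * ((N s t : A)) * e i t else 0)
      = ∑ t, ((M i s : A)) * ((N s t : A)) * e i t := by
    intro s
    rw [Finset.sum_comm]
    refine Finset.sum_congr rfl fun t _ => ?_
    simp
  simp only [hs]
  conv_rhs => rw [Finset.sum_comm]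
  refine Finset.sum_congr rfl fun t _ => ?_
  rw [Matrix.mul_apply]
  push_cast
  simp [Finset.sum_mul, mul_assoc]

include hone in
theorem ψfun_one : ψfun R e 1 = 1 := by
  unfold ψfun
  have h1 : ∀ i j : Fin n, (((1 : Matrix (Fin n) (Fin n) R) i j : A)) * e i j
      = if i = j then e i j else 0 := by
    intro i j
    rw [Matrix.one_apply]
    by_cases h : i = j <;> simp [h]
  simp only [h1]
  simp only [Finset.sum_ite_eq, Finset.mem_univ, if_true]
  exact hone

theorem ψfun_add (M N : Matrix (Fin n) (Fin n) R) :
    ψfun R e (M + N) = ψfun R e M + ψfun R e N := by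
  unfold ψfun
  rw [← Finset.sum_add_distrib]
  refine Finset.sum_congr rfl fun i _ => ?_
  rw [← Finset.sum_add_distrib]
  refine Finset.sum_congr rfl fun j _ => ?_
  rw [Matrix.add_apply]
  push_cast
  rw [add_mul]

include hone in
theorem ψfun_algebraMap (c : k) : ψfun R e (algebraMap k _ c) = algebraMap k A c := by
  unfold ψfun
  have h1 : ∀ i j : Fin n, (((algebraMap k (Matrix (Fin n) (Fin n) R) c) i j : A)) * e i j
      = if i = j then algebraMap k A c * e i j else 0 := by
    intro i j
    rw [Matrix.algebraMap_matrix_apply]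
    by_cases h : i = j <;> simp [h]
  simp only [h1]
  simp only [Finset.sum_ite_eq, Finset.mem_univ, if_true]
  rw [← Finset.mul_sum, hone, mul_one]

def ψhom : Matrix (Fin n) (Fin n) R →ₐ[k] A where
  toFun := ψfun R e
  map_one' := ψfun_one R e hone
  map_mul' := ψfun_mul R e hmul hone hR
  map_zero' := by simp [ψfun]
  map_add' := ψfun_add R e
  commutes' := ψfun_algebraMap R e hone

include hmul hone hR in
theorem ψhom_inj : Function.Injective (ψhom R e hmul hone hR) := by
  rw [injective_iff_map_eq_zero]
  intro M hM
  have hM' : ∑ i, ∑ j, ((M i j : A)) * e i j = 0 := hM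
  have stepA : ∀ s t : Fin n, ((M s t : A)) * e s t = 0 := by
    intro s t
    have h0 : e s s * (∑ i, ∑ j, ((M i j : A)) * e i j) * e t t = 0 := by
      rw [hM', mul_zero, zero_mul]
    rw [Finset.mul_sum, Finset.sum_mul] at h0
    have hterm : ∀ i : Fin n, (e s s * ∑ j, ((M i j : A)) * e i j) * e t t
        = if s = i then ((M i t : A)) * e s t else 0 := by
      intro i
      rw [Finset.mul_sum, Finset.sum_mul]
      have h2 : ∀ j : Fin n, e s s * (((M i j : A)) * e i j) * e t t
          = if s = i then (if j = t then ((M i j : A)) * e s t else 0) else 0 := by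
        intro j
        rw [← mul_assoc, ← hR (M i j), mul_assoc ((M i j : A)), hmul s s i j]
        by_cases h : s = i
        · simp only [if_pos h]
          rw [mul_assoc, hmul s j t t]
          by_cases h' : j = t <;> simp [h', mul_assoc]
        · simp [h]
      simp only [h2]
      by_cases h : s = i
      · simp [h]
      · simp [h]
    simp only [hterm] at h0
    rw [Finset.sum_ite_eq Finset.univ s (fun i => ((M i t : A)) * e s t)] at h0
    simpa using h0
  have stepB : ∀ s t : Fin n, (M s t : A) = 0 := by
    intro s t
    have hx : ∀ i : Fin n, (M s t : A) * e i i = 0 := by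
      intro i
      have h1 : e i i = e i s * (e s t * e t i) := by
        rw [hmul s t t i, if_pos rfl, hmul i s s i, if_pos rfl]
      rw [h1, ← mul_assoc, hR (M s t) (e i s), mul_assoc (e i s), ← mul_assoc ((M s t : A)),
        stepA s t, zero_mul, mul_zero]
    have : (M s t : A) * (∑ i, e i i) = 0 := by
      rw [Finset.mul_sum]
      simp only [hx]
      simp
    rwa [hone, mul_one] at this
  ext s t
  exact (stepB s t)

include hmul hone hR in
theorem ψhom_std (i j : Fin n) (r : R) :
    ψhom R e hmul hone hR (Matrix.single i j r) = (r : A) * e i j := by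
  show ψfun R e _ = _
  unfold ψfun
  have h1 : ∀ a b : Fin n, (((Matrix.single i j r : Matrix (Fin n) (Fin n) R) a b : A)) * e a b
      = if i = a ∧ j = b then (r : A) * e a b else 0 := by
    intro a b
    rw [Matrix.single]
    by_cases h : i = a ∧ j = b <;> simp [Matrix.of_apply, h]
  simp only [h1]
  have h2 : ∀ a : Fin n, (∑ b, if i = a ∧ j = b then (r : A) * e a b else 0)
      = if i = a then (r : A) * e a j else 0 := by
    intro a
    by_cases h : i = a
    · simp [h]
    · simp [h]
  simp only [h2]
  simp

end Psi

/-- Theorem 4.6: a class subalgebra of a linked unipotent lifting (with `m = 1`, so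
`N = n`) is isomorphic to the `n×n` matrix algebra over the commutative subalgebra
generated by the Casimir element `C = EF − (η/(q−1))(K + qK⁻¹)`. -/
theorem unipotent_class_subalgebra_matrix (k : Type*) [Field k] [IsAlgClosed k] [CharZero k]
    (A : Type*) [Ring A] [Algebra k A]
    (n : ℕ) (hn : 2 ≤ n) (θ : kˣ) (hθ : orderOf θ = n)
    (η α β κ : k) (hη : η ≠ 0) (hα : α ≠ 0) (hβ : β ≠ 0) (hκ : κ ≠ 0)
    (E F : A) (u : Aˣ)
    (hEu : IsUnit E) (hFu : IsUnit F)
    (hE : E ^ n = α • (1 : A)) (hF : F ^ n = β • (1 : A))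
    (hK : ((u : A)) ^ n = κ • (1 : A))
    (hEF : E * F - F * E = η • (((u⁻¹ : Aˣ) : A) - ((u : Aˣ) : A)))
    (hKE : (u : A) * E = ((θ : kˣ) : k) • (E * (u : A)))
    (hKF : (u : A) * F = ((θ⁻¹ : kˣ) : k) • (F * (u : A)))
    (hli : LinearIndependent k
      (fun t : Fin n × Fin n × Fin n =>
        E ^ (t.1 : ℕ) * F ^ (t.2.1 : ℕ) * ((u : A)) ^ (t.2.2 : ℕ)))
    (hspan : Submodule.span k
      (Set.range fun t : Fin n × Fin n × Fin n =>
        E ^ (t.1 : ℕ) * F ^ (t.2.1 : ℕ) * ((u : A)) ^ (t.2.2 : ℕ)) = ⊤) :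
    Nonempty (A ≃ₐ[k] Matrix (Fin n) (Fin n)
      (Algebra.adjoin k
        ({E * F - (η / (((θ : kˣ) : k) - 1)) •
            (((u : Aˣ) : A) + ((θ : kˣ) : k) • ((u⁻¹ : Aˣ) : A))} : Set A))) := by
  haveI : NeZero n := ⟨by omega⟩
  obtain ⟨ζ, hζdef⟩ : ∃ z : k, z = ((θ : kˣ) : k) := ⟨_, rfl⟩
  rw [← hζdef]
  rw [← hζdef] at hKE
  obtain ⟨lam, hlamdef⟩ : ∃ z : k, z = η / (ζ - 1) := ⟨_, rfl⟩
  rw [← hlamdef]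
  obtain ⟨Cas, hCdef⟩ : ∃ x : A,
      x = E * F - lam • (((u : Aˣ) : A) + ζ • ((u⁻¹ : Aˣ) : A)) := ⟨_, rfl⟩
  rw [← hCdef]
  have hζ0 : ζ ≠ 0 := by rw [hζdef]; exact Units.ne_zero θ
  have hζ1 : ζ ^ n = 1 := by
    have h := pow_orderOf_eq_one θ
    rw [hθ] at h
    rw [hζdef]
    calc ((θ : kˣ) : k) ^ n = ((θ ^ n : kˣ) : k) := by push_cast; rfl
      _ = 1 := by rw [h]; rfl
  have hζp : ∀ m : ℕ, ζ ^ m = 1 → n ∣ m := by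
    intro m hm
    rw [hζdef] at hm
    have h : θ ^ m = 1 := Units.ext (by push_cast; exact hm)
    rw [← hθ]
    exact orderOf_dvd_of_pow_eq_one h
  have hζne1 : ζ ≠ 1 := by
    intro h
    rw [hζdef] at h
    have h1 : θ = 1 := Units.ext h
    rw [h1, orderOf_one] at hθ
    omega
  have hζsub : ζ - 1 ≠ 0 := sub_ne_zero.mpr hζne1
  have hθinv : ((θ⁻¹ : kˣ) : k) = ζ⁻¹ := by rw [hζdef]; exact Units.val_inv_eq_inv_val θ
  have hlam : lam * (ζ - 1) = η := by rw [hlamdef]; exact div_mul_cancel₀ η hζsub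
  -- roots
  obtain ⟨b, hb⟩ := IsAlgClosed.exists_pow_nat_eq β (by omega : 0 < n)
  obtain ⟨c, hc⟩ := IsAlgClosed.exists_pow_nat_eq κ (by omega : 0 < n)
  have hb0 : b ≠ 0 := by rintro rfl; exact hβ (by rw [← hb, zero_pow (by omega : n ≠ 0)])
  have hc0 : c ≠ 0 := by rintro rfl; exact hκ (by rw [← hc, zero_pow (by omega : n ≠ 0)])
  obtain ⟨v, hvdef⟩ : ∃ x : A, x = c⁻¹ • ((u : Aˣ) : A) := ⟨_, rfl⟩
  obtain ⟨w, hwdef⟩ : ∃ x : A, x = b⁻¹ • F := ⟨_, rfl⟩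
  have hv : v ^ n = 1 := by
    rw [hvdef, smul_pow, hK, smul_smul, inv_pow, hc, inv_mul_cancel₀ hκ, one_smul]
  have hw : w ^ n = 1 := by
    rw [hwdef, smul_pow, hF, smul_smul, inv_pow, hb, inv_mul_cancel₀ hβ, one_smul]
  have hKF' : (u : A) * F = ζ⁻¹ • (F * (u : A)) := by rw [hKF, hθinv]
  have hFu' : F * (u : A) = ζ • ((u : A) * F) := by
    rw [hKF', smul_smul, mul_inv_cancel₀ hζ0, one_smul]
  have hvw : w * v = ζ • (v * w) := by
    rw [hvdef, hwdef, smul_mul_smul_comm, smul_mul_smul_comm, hFu', smul_comm, smul_smul,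
      smul_smul, mul_comm b⁻¹ c⁻¹]
  -- commutation rules
  have hFE : F * E = E * F - η • (((u⁻¹ : Aˣ) : A) - ((u : Aˣ) : A)) := by
    rw [← hEF]; abel
  have huiE : ((u⁻¹ : Aˣ) : A) * E = ζ⁻¹ • (E * ((u⁻¹ : Aˣ) : A)) := by
    have h1 : E * ((u⁻¹ : Aˣ) : A) = ζ • (((u⁻¹ : Aˣ) : A) * E) := by
      calc E * ((u⁻¹ : Aˣ) : A)
          = ((u⁻¹ : Aˣ) : A) * ((u : A) * E) * ((u⁻¹ : Aˣ) : A) := by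
            rw [Units.inv_mul_cancel_left]
        _ = ζ • (((u⁻¹ : Aˣ) : A) * E * ((u : A) * ((u⁻¹ : Aˣ) : A))) := by
            rw [hKE, mul_smul_comm, smul_mul_assoc]
            congr 1
            rw [mul_assoc, mul_assoc, mul_assoc]
        _ = ζ • (((u⁻¹ : Aˣ) : A) * E) := by rw [Units.mul_inv]; rw [mul_one]
    rw [h1, smul_smul, inv_mul_cancel₀ hζ0, one_smul]
  have huiF : ((u⁻¹ : Aˣ) : A) * F = ζ • (F * ((u⁻¹ : Aˣ) : A)) := by
    have h1 : F * ((u⁻¹ : Aˣ) : A) = ζ⁻¹ • (((u⁻¹ : Aˣ) : A) * F) := by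
      calc F * ((u⁻¹ : Aˣ) : A)
          = ((u⁻¹ : Aˣ) : A) * ((u : A) * F) * ((u⁻¹ : Aˣ) : A) := by
            rw [Units.inv_mul_cancel_left]
        _ = ζ⁻¹ • (((u⁻¹ : Aˣ) : A) * F * ((u : A) * ((u⁻¹ : Aˣ) : A))) := by
            rw [hKF', mul_smul_comm, smul_mul_assoc]
            congr 1
            rw [mul_assoc, mul_assoc, mul_assoc]
        _ = ζ⁻¹ • (((u⁻¹ : Aˣ) : A) * F) := by rw [Units.mul_inv]; rw [mul_one]
    rw [h1, smul_smul, mul_inv_cancel₀ hζ0, one_smul]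
  have hne1' : (-1 : k) + ζ ≠ 0 := by
    intro hx; exact hζsub (by linear_combination hx)
  have hCE : Cas * E = E * Cas := by
    rw [hCdef, hlamdef]
    simp only [mul_sub, sub_mul, mul_add, add_mul, smul_mul_assoc, mul_smul_comm, mul_assoc,
      hFE, hKE, huiE, smul_sub, smul_add, smul_smul]
    match_scalars <;> (field_simp; try ring)
  have hq : -ζ + ζ^2 ≠ 0 := by
    intro hx
    apply hζ0
    rcases mul_eq_zero.mp (show ζ * (-1 + ζ) = 0 by linear_combination hx) with h | h
    · exact h
    · exact absurd h hne1'
  have hCF : Cas * F = F * Cas := by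
    have hFEx : ∀ x : A, F * (E * x)
        = E * (F * x) - η • (((u⁻¹ : Aˣ) : A) * x) + η • (((u : Aˣ) : A) * x) := by
      intro x
      rw [← mul_assoc, hFE]
      simp only [sub_mul, smul_mul_assoc, smul_sub, mul_assoc]
      abel
    rw [hCdef, hlamdef]
    simp only [mul_sub, sub_mul, mul_add, add_mul, smul_mul_assoc, mul_smul_comm, mul_assoc,
      hFEx, hKF', huiF, smul_sub, smul_add, smul_smul]
    match_scalars <;> (field_simp; try ring)
  have hCu : Cas * (u : A) = (u : A) * Cas := by
    have huE' : ∀ x : A, (u : A) * (E * x) = ζ • (E * ((u : A) * x)) := by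
      intro x
      rw [← mul_assoc, hKE, smul_mul_assoc, mul_assoc]
    have huF' : ∀ x : A, (u : A) * (F * x) = ζ⁻¹ • (F * ((u : A) * x)) := by
      intro x
      rw [← mul_assoc, hKF', smul_mul_assoc, mul_assoc]
    rw [hCdef, hlamdef]
    simp only [mul_sub, sub_mul, mul_add, add_mul, smul_mul_assoc, mul_smul_comm, mul_assoc,
      huE', huF', hKE, hKF', Units.mul_inv_cancel_left, Units.inv_mul_cancel_left,
      Units.mul_inv, Units.inv_mul, smul_sub, smul_add, smul_smul, mul_one]
    match_scalars <;> (field_simp; try ring)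
  -- C is central
  have hCc : ∀ a : A, a * Cas = Cas * a := by
    have cE : Commute Cas E := hCE
    have cF : Commute Cas F := hCF
    have cu : Commute Cas ((u : Aˣ) : A) := hCu
    intro a
    have ha : a ∈ Submodule.span k (Set.range fun t : Fin n × Fin n × Fin n =>
        E ^ (t.1 : ℕ) * F ^ (t.2.1 : ℕ) * ((u : A)) ^ (t.2.2 : ℕ)) := by
      rw [hspan]; trivial
    induction ha using Submodule.span_induction with
    | mem x hx =>
        obtain ⟨t, rfl⟩ := hx
        exact (((cE.pow_right (t.1 : ℕ)).mul_right (cF.pow_right (t.2.1 : ℕ))).mul_right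
          (cu.pow_right (t.2.2 : ℕ))).symm
    | zero => simp
    | add x y _ _ hx hy => rw [add_mul, mul_add, hx, hy]
    | smul r x _ hx => rw [smul_mul_assoc, mul_smul_comm, hx]
  -- the commutative subalgebra generated by the Casimir element
  have hRcent : ∀ (r : (Algebra.adjoin k ({Cas} : Set A))) (a : A),
      (r : A) * a = a * (r : A) := by
    intro r a
    have hle : Algebra.adjoin k ({Cas} : Set A) ≤ Subalgebra.center k A := by
      apply Algebra.adjoin_le
      intro x hx
      rw [Set.mem_singleton_iff] at hx
      subst hx
      exact Subalgebra.mem_center_iff.mpr hCc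
    exact (Subalgebra.mem_center_iff.mp (hle r.2) a).symm
  -- matrix units
  have hmulU : ∀ i j s t : Fin n, eMf ζ v w i j * eMf ζ v w s t
      = if j = s then eMf ζ v w i t else 0 := eMf_mul hζ1 hζp hv hw hvw
  have honeU : ∑ i : Fin n, eMf ζ v w i i = 1 := by
    have h1 : ∀ i : Fin n, eMf ζ v w i i = ef ζ v i := fun i => eMf_diag i
    simp only [h1]
    exact sum_ef hζ1 hζp
  set R := Algebra.adjoin k ({Cas} : Set A) with hRdef
  set ψ := ψhom R (eMf ζ v w) hmulU honeU hRcent with hψdef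
  have hinj : Function.Injective ψ := ψhom_inj R (eMf ζ v w) hmulU honeU hRcent
  have hstd : ∀ (i j : Fin n) (r : R),
      ψ (Matrix.single i j r) = (r : A) * eMf ζ v w i j :=
    ψhom_std R (eMf ζ v w) hmulU honeU hRcent
  -- surjectivity
  have heMm : ∀ i j : Fin n, eMf ζ v w i j ∈ ψ.range := by
    intro i j
    refine ⟨Matrix.single i j 1, ?_⟩
    show ψ (Matrix.single i j 1) = eMf ζ v w i j
    rw [hstd]
    simp
  have hRm : ∀ r : R, (r : A) ∈ ψ.range := by
    intro r
    refine ⟨∑ i : Fin n, Matrix.single i i r, ?_⟩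
    show ψ (∑ i : Fin n, Matrix.single i i r) = (r : A)
    rw [map_sum]
    simp only [hstd]
    rw [← Finset.mul_sum, honeU, mul_one]
  have hvm : v ∈ ψ.range := by
    rw [v_eq_sum hn hζ1 hζp hv]
    refine Subalgebra.sum_mem _ fun i _ => ?_
    have h1 : ef ζ v i = eMf ζ v w i i := (eMf_diag i).symm
    rw [h1]
    exact Subalgebra.smul_mem _ (heMm i i) _
  have hwm : w ∈ ψ.range := by
    have h2 : ∀ i : Fin n, eMf ζ v w i (i+1) = ef ζ v i * w := by
      intro i
      show ef ζ v i * Pf w (i + 1 - i) = _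
      have h3 : (i + 1 - i : Fin n) = 1 := by ring
      rw [h3]
      congr 1
      show w ^ ((1 : Fin n) : ℕ) = w
      rw [Fin.val_one', Nat.mod_eq_of_lt (by omega : 1 < n), pow_one]
    have h4 : w = ∑ i : Fin n, eMf ζ v w i (i+1) := by
      simp only [h2]
      rw [← Finset.sum_mul, sum_ef hζ1 hζp, one_mul]
    rw [h4]
    exact Subalgebra.sum_mem _ fun i _ => heMm i (i+1)
  have hum : ((u : Aˣ) : A) ∈ ψ.range := by
    have h5 : ((u : Aˣ) : A) = c • v := by
      rw [hvdef, smul_smul, mul_inv_cancel₀ hc0, one_smul]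
    rw [h5]
    exact Subalgebra.smul_mem _ hvm c
  have hFm : F ∈ ψ.range := by
    have h5 : F = b • w := by
      rw [hwdef, smul_smul, mul_inv_cancel₀ hb0, one_smul]
    rw [h5]
    exact Subalgebra.smul_mem _ hwm b
  have huim : ((u⁻¹ : Aˣ) : A) ∈ ψ.range := by
    have hpow : ((u : A)) * ((u : A)) ^ (n-1) = ((u : A)) ^ n := by
      rw [← pow_succ']
      congr 1
      omega
    have h5 : ((u : Aˣ) : A) * (κ⁻¹ • ((u : A)) ^ (n-1)) = 1 := by
      rw [mul_smul_comm, hpow, hK, smul_smul, inv_mul_cancel₀ hκ, one_smul]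
    have h6 : ((u⁻¹ : Aˣ) : A) = κ⁻¹ • ((u : A)) ^ (n-1) :=
      Units.inv_eq_of_mul_eq_one_right h5
    rw [h6]
    exact Subalgebra.smul_mem _ (Subalgebra.pow_mem _ hum _) _
  have hCasm : Cas ∈ ψ.range :=
    hRm ⟨Cas, Algebra.self_mem_adjoin_singleton k Cas⟩
  have hEm : E ∈ ψ.range := by
    have hpowF : F * F ^ (n-1) = F ^ n := by
      rw [← pow_succ']
      congr 1
      omega
    have hFinv : F * (β⁻¹ • F ^ (n-1)) = 1 := by
      rw [mul_smul_comm, hpowF, hF, smul_smul, inv_mul_cancel₀ hβ, one_smul]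
    have hEF2 : Cas + lam • (((u : Aˣ) : A) + ζ • ((u⁻¹ : Aˣ) : A)) = E * F := by
      rw [hCdef, sub_add_cancel]
    have hEeq : E = (Cas + lam • (((u : Aˣ) : A) + ζ • ((u⁻¹ : Aˣ) : A)))
        * (β⁻¹ • F ^ (n-1)) := by
      rw [hEF2, mul_assoc, hFinv, mul_one]
    rw [hEeq]
    exact mul_mem (add_mem hCasm (Subalgebra.smul_mem _
        (add_mem hum (Subalgebra.smul_mem _ huim ζ)) lam))
      (Subalgebra.smul_mem _ (pow_mem hFm _) _)
  have hrange : ∀ x : A, x ∈ ψ.range := by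
    intro x
    have hx : x ∈ Submodule.span k (Set.range fun t : Fin n × Fin n × Fin n =>
        E ^ (t.1 : ℕ) * F ^ (t.2.1 : ℕ) * ((u : A)) ^ (t.2.2 : ℕ)) := by
      rw [hspan]; trivial
    have hsub : (Set.range fun t : Fin n × Fin n × Fin n =>
        E ^ (t.1 : ℕ) * F ^ (t.2.1 : ℕ) * ((u : A)) ^ (t.2.2 : ℕ))
        ⊆ (Subalgebra.toSubmodule ψ.range : Set A) := by
      rintro y ⟨t, rfl⟩
      simp only [SetLike.mem_coe, Subalgebra.mem_toSubmodule]
      exact mul_mem (mul_mem (pow_mem hEm _) (pow_mem hFm _)) (pow_mem hum _)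
    exact Submodule.span_le.mpr hsub hx
  have hsurj : Function.Surjective ψ := fun x => (AlgHom.mem_range ψ).mp (hrange x)
  exact ⟨(AlgEquiv.ofBijective ψ ⟨hinj, hsurj⟩).symm⟩
end
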